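/- arXiv:1309.7458 — 6 statements merged into one kernel-verified Lean document; each statement's English description precedes it below -/
import Mathlib

section
/- If (g_1,…,g_n) and (h_1,…,h_n) are two generating n-tuples of a group G, then the 2n-tuples (g_1,…,g_n,1,…,1) (with n trailing identity entries) and (h_1,…,h_n,1,…,1) are Nielsen equivalent in G. -/
/-- An elementary Nielsen transformation on an `n`-tuple of elements of `G`:
inverting an entry, swapping two entries, or multiplying an entry on the right
by another entry or its inverse. -/
def ElemNielsen {G : Type*} [Group G] {n : ℕ} (g g' : Fin n → G) : Prop :=
  (∃ i, g' = Function.update g i (g i)⁻¹) ∨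
  (∃ i j, i ≠ j ∧ g' = g ∘ (Equiv.swap i j)) ∨
  (∃ i j, i ≠ j ∧ (g' = Function.update g i (g i * g j) ∨
                   g' = Function.update g i (g i * (g j)⁻¹)))

/-- Nielsen equivalence: a finite chain of elementary Nielsen transformations. -/
def NielsenEq {G : Type*} [Group G] {n : ℕ} (g g' : Fin n → G) : Prop :=
  Relation.ReflTransGen ElemNielsen g g'

lemma elemNielsen_symm {G : Type*} [Group G] {n : ℕ} {g g' : Fin n → G}
    (h : ElemNielsen g g') : ElemNielsen g' g := by
  rcases h with ⟨i, rfl⟩ | ⟨i, j, hij, rfl⟩ | ⟨i, j, hij, rfl | rfl⟩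
  · refine Or.inl ⟨i, ?_⟩
    funext x
    by_cases hx : x = i <;> simp [hx, Function.update]
  · refine Or.inr (Or.inl ⟨i, j, hij, ?_⟩)
    funext x; simp
  · refine Or.inr (Or.inr ⟨i, j, hij, Or.inr ?_⟩)
    funext x
    by_cases hx : x = i <;> simp [hx, Function.update, hij.symm]
  · refine Or.inr (Or.inr ⟨i, j, hij, Or.inl ?_⟩)
    funext x
    by_cases hx : x = i <;> simp [hx, Function.update, hij.symm]

lemma nielsenEq_symm {G : Type*} [Group G] {n : ℕ} {g g' : Fin n → G}
    (h : NielsenEq g g') : NielsenEq g' g :=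
  haveI : Std.Symm (ElemNielsen (G := G) (n := n)) := ⟨fun _ _ => elemNielsen_symm⟩
  (Relation.ReflTransGen.symmetric (r := ElemNielsen (G := G) (n := n))).symm _ _ h

lemma nielsen_update_mul {G : Type*} [Group G] {m : ℕ} (f : Fin m → G) (j : Fin m)
    (x : G) (hx : x ∈ Subgroup.closure (Set.range fun k : {k : Fin m // k ≠ j} => f k)) :
    NielsenEq f (Function.update f j (f j * x)) := by
  have key : ∀ c : G, NielsenEq (Function.update f j c) (Function.update f j (c * x)) := by
    induction hx using Subgroup.closure_induction with
    | mem s hs =>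
      intro c
      obtain ⟨k, rfl⟩ := hs
      apply Relation.ReflTransGen.single
      refine Or.inr (Or.inr ⟨j, k.1, Ne.symm k.2, Or.inl ?_⟩)
      rw [Function.update_self, Function.update_of_ne k.2,
        Function.update_idem]
    | one => intro c; rw [mul_one]; exact Relation.ReflTransGen.refl
    | mul x y _ _ px py =>
      intro c
      refine (px c).trans ?_
      rw [← mul_assoc]
      exact py (c * x)
    | inv x _ px =>
      intro c
      have := px (c * x⁻¹)
      rw [inv_mul_cancel_right] at this
      exact nielsenEq_symm this
  have := key (f j)
  rwa [Function.update_eq_self] at this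

lemma closure_top_of_subset {G : Type*} [Group G] {s t : Set G} (h : s ⊆ t)
    (hs : Subgroup.closure s = ⊤) : Subgroup.closure t = ⊤ :=
  eq_top_iff.mpr (hs ▸ Subgroup.closure_mono h)

lemma nielsen_of_agree {G : Type*} [Group G] {m : ℕ} (s : Finset (Fin m))
    (f f' : Fin m → G) (hagree : ∀ i ∉ s, f' i = f i)
    (hcl : Subgroup.closure (Set.range fun k : {k : Fin m // k ∉ s} => f k) = ⊤) :
    NielsenEq f f' := by
  induction s using Finset.induction_on generalizing f f' with
  | empty =>
    have : f' = f := funext fun i => hagree i (by simp)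
    rw [this]
    exact Relation.ReflTransGen.refl
  | @insert a s' ha IH =>
    set t := Function.update f' a (f a) with ht
    have hta : ∀ i, i ≠ a → t i = f' i := fun i hi => Function.update_of_ne hi _ _
    have h1 : NielsenEq f t := by
      apply IH
      · intro i hi
        by_cases hia : i = a
        · subst hia; simp [ht]
        · rw [hta i hia]
          exact hagree i (by simp [hia, hi])
      · refine closure_top_of_subset ?_ hcl
        rintro _ ⟨k, rfl⟩
        exact ⟨⟨k.1, fun hk => k.2 (Finset.mem_insert_of_mem hk)⟩, rfl⟩
    have h2 : NielsenEq t f' := by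
      have hx : (f a)⁻¹ * f' a ∈
          Subgroup.closure (Set.range fun k : {k : Fin m // k ≠ a} => t k) := by
        have : Subgroup.closure (Set.range fun k : {k : Fin m // k ≠ a} => t k) = ⊤ := by
          refine closure_top_of_subset ?_ hcl
          rintro _ ⟨k, rfl⟩
          have hka : k.1 ≠ a := fun hk => k.2 (by rw [hk]; exact Finset.mem_insert_self a s')
          refine ⟨⟨k.1, hka⟩, ?_⟩
          show t k.1 = f k.1
          rw [hta k.1 hka, hagree k.1 k.2]
        rw [this]; trivial
      have := nielsen_update_mul t a ((f a)⁻¹ * f' a) hx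
      have heq : Function.update t a (t a * ((f a)⁻¹ * f' a)) = f' := by
        rw [ht, Function.update_self, Function.update_idem]
        rw [mul_inv_cancel_left, Function.update_eq_self]
      rwa [heq] at this
    exact h1.trans h2

/-- any two generating `n`-tuples of `G` become Nielsen equivalent
after `n` stabilization moves (appending `n` trivial entries). -/
theorem nielsenEq_append_ones {G : Type*} [Group G] {n : ℕ} (g h : Fin n → G)
    (hg : Subgroup.closure (Set.range g) = ⊤)
    (hh : Subgroup.closure (Set.range h) = ⊤) :
    NielsenEq (Fin.append g (fun (_ : Fin n) => (1 : G))) (Fin.append h (fun (_ : Fin n) => (1 : G))) := by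
  classical
  set s₂ : Finset (Fin (n + n)) := Finset.univ.filter fun i => n ≤ (i : ℕ) with hs₂
  set s₁ : Finset (Fin (n + n)) := Finset.univ.filter fun i => (i : ℕ) < n with hs₁
  have mem_s₂ : ∀ i : Fin (n + n), i ∉ s₂ ↔ (i : ℕ) < n := by
    intro i; simp [hs₂, not_le]
  have mem_s₁ : ∀ i : Fin (n + n), i ∉ s₁ ↔ n ≤ (i : ℕ) := by
    intro i; simp [hs₁, not_lt]
  have cast_lt : ∀ (i : Fin (n + n)) (hi : (i : ℕ) < n),
      i = Fin.castAdd n ⟨(i : ℕ), hi⟩ := fun i hi => Fin.ext rfl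
  have nat_le : ∀ (i : Fin (n + n)) (hi : n ≤ (i : ℕ)),
      i = Fin.natAdd n ⟨(i : ℕ) - n, by omega⟩ := by
    intro i hi
    apply Fin.ext
    simp [Fin.natAdd]
    omega
  -- step 1: (g,1) ~ (g,h)
  have step1 : NielsenEq (Fin.append g (fun _ => (1 : G))) (Fin.append g h) := by
    apply nielsen_of_agree s₂
    · intro i hi
      have hi' := (mem_s₂ i).mp hi
      rw [cast_lt i hi', Fin.append_left, Fin.append_left]
    · refine closure_top_of_subset ?_ hg
      rintro _ ⟨j, rfl⟩
      refine ⟨⟨Fin.castAdd n j, by rw [mem_s₂]; exact j.2⟩, ?_⟩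
      exact Fin.append_left _ _ j
  -- step 2: (g,h) ~ (h,h)
  have step2 : NielsenEq (Fin.append g h) (Fin.append h h) := by
    apply nielsen_of_agree s₁
    · intro i hi
      have hi' := (mem_s₁ i).mp hi
      rw [nat_le i hi', Fin.append_right, Fin.append_right]
    · refine closure_top_of_subset ?_ hh
      rintro _ ⟨j, rfl⟩
      refine ⟨⟨Fin.natAdd n j, by rw [mem_s₁]; exact Nat.le_add_right n j⟩, ?_⟩
      exact Fin.append_right _ _ j
  -- step 3: (h,h) ~ (h,1)
  have step3 : NielsenEq (Fin.append h h) (Fin.append h (fun _ => (1 : G))) := by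
    apply nielsen_of_agree s₂
    · intro i hi
      have hi' := (mem_s₂ i).mp hi
      rw [cast_lt i hi', Fin.append_left, Fin.append_left]
    · refine closure_top_of_subset ?_ hh
      rintro _ ⟨j, rfl⟩
      refine ⟨⟨Fin.castAdd n j, by rw [mem_s₂]; exact j.2⟩, ?_⟩
      exact Fin.append_left _ _ j
  exact (step1.trans step2).trans step3
end

section
/- Let n ≥ 2, let R_n be the rose with n petals, and let p : Γ → R_n be a path-surjective morphism from a finite connected core graph Γ such that (1) there is no morphism f : R_n → Γ with p ∘ f = id (i.e., R_n does not lift to Γ), and (2) the first Betti number of Γ satisfies b(Γ) ≤ 2n − 1. Then p is a 2-sheeted covering map. -/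
structure MGraph where
  V : Type
  E : Type
  bar : E → E
  bar_bar : ∀ e, bar (bar e) = e
  bar_ne : ∀ e, bar e ≠ e
  ini : E → V

namespace MGraph

variable (G : MGraph)

/-- Terminal vertex of an oriented edge. -/
def ter (e : G.E) : G.V := G.ini (G.bar e)

/-- Two vertices are adjacent if some oriented edge joins them. -/
def Adj (u v : G.V) : Prop := ∃ e : G.E, G.ini e = u ∧ G.ter e = v

/-- The setoid of connectedness on vertices. -/
def compSetoid : Setoid G.V := ⟨Relation.EqvGen G.Adj, Relation.EqvGen.is_equivalence _⟩

/-- The number of connected components. -/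
noncomputable def ncomp : ℕ := Nat.card (Quotient G.compSetoid)

/-- The first Betti number `b = E - V + C` (topological edges). -/
noncomputable def betti : ℤ := ((Nat.card G.E / 2 : ℕ) : ℤ) - (Nat.card G.V : ℤ) + (G.ncomp : ℤ)

def Connected : Prop := Nonempty G.V ∧ ∀ u v : G.V, Relation.EqvGen G.Adj u v

/-- Degree of a vertex: number of oriented edges starting at it. -/
noncomputable def degree (v : G.V) : ℕ := Nat.card {e : G.E // G.ini e = v}

/-- An edge-path: consecutive edges match up. -/
def IsChain (γ : List G.E) : Prop := List.Chain' (fun e e' => G.ter e = G.ini e') γ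

/-- A reduced edge-path: no backtracking. -/
def IsReducedPath (γ : List G.E) : Prop :=
  List.Chain' (fun e e' => G.ter e = G.ini e' ∧ e' ≠ G.bar e) γ

end MGraph

/-- A morphism of graphs. -/
structure MGraphHom (G H : MGraph) where
  toV : G.V → H.V
  toE : G.E → H.E
  map_bar : ∀ e, toE (G.bar e) = H.bar (toE e)
  map_ini : ∀ e, H.ini (toE e) = toV (G.ini e)

/-- A covering map: surjective on vertices and locally bijective on stars. -/
def MGraphHom.IsCovering {G H : MGraph} (f : MGraphHom G H) : Prop :=
  Function.Surjective f.toV ∧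
    ∀ v : G.V, Set.BijOn f.toE {e | G.ini e = v} {e | H.ini e = f.toV v}

/-- The rose with `n` petals: one vertex, `n` loop edge-pairs.
The positive orientation of petal `i` is `(i, true)`. -/
def Rose (n : ℕ) : MGraph where
  V := Unit
  E := Fin n × Bool
  bar e := (e.1, !e.2)
  bar_bar e := by simp
  bar_ne e h := by simpa using congrArg Prod.snd h
  ini _ := ()

/-- A morphism is path-surjective if every reduced path downstairs lifts. -/
def MGraphHom.PathSurjective {G H : MGraph} (p : MGraphHom G H) : Prop :=
  ∀ γ : List H.E, H.IsReducedPath γ → ∃ β : List G.E, G.IsChain β ∧ β.map p.toE = γ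

set_option maxHeartbeats 1000000
set_option linter.unusedSectionVars false
set_option linter.unusedVariables false

section TwoSheetedDev
open Finset
open scoped Classical

-- even card from fixed-point-free involution, Finset version
lemma even_card_of_involution {α : Type*} [DecidableEq α] (s : Finset α) (f : α → α)
    (hmem : ∀ a ∈ s, f a ∈ s) (hff : ∀ a ∈ s, f (f a) = a) (hne : ∀ a ∈ s, f a ≠ a) :
    Even s.card := by
  suffices H : ∀ k (s : Finset α), (∀ a ∈ s, f a ∈ s) → (∀ a ∈ s, f (f a) = a) →
      (∀ a ∈ s, f a ≠ a) → s.card = k → Even s.card by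
    exact H s.card s hmem hff hne rfl
  intro k
  induction k using Nat.strong_induction_on with
  | _ k ih =>
    intro s hmem hff hne hs
    rcases s.eq_empty_or_nonempty with rfl | ⟨a, ha⟩
    · simp at hs; simp [← hs]
    · have hfa : f a ∈ s := hmem a ha
      have hane : f a ≠ a := hne a ha
      set t := (s.erase a).erase (f a) with ht
      have htcard : t.card + 2 = k := by
        rw [ht, Finset.card_erase_of_mem, Finset.card_erase_of_mem ha, ← hs]
        · have : 1 ≤ s.card := Finset.card_pos.2 ⟨a, ha⟩
          have h2 : 2 ≤ s.card := Finset.one_lt_card.2 ⟨a, ha, f a, hfa, fun h => hane h.symm⟩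
          omega
        · exact Finset.mem_erase.2 ⟨hane, hfa⟩
      have hts : t ⊆ s := (Finset.erase_subset _ _).trans (Finset.erase_subset _ _)
      have hmem' : ∀ b ∈ t, f b ∈ t := by
        intro b hb
        have hbs : b ∈ s := hts hb
        have hb1 : b ≠ f a := (Finset.mem_erase.1 hb).1
        have hb2 : b ≠ a := (Finset.mem_erase.1 (Finset.mem_erase.1 hb).2).1
        refine Finset.mem_erase.2 ⟨?_, Finset.mem_erase.2 ⟨?_, hmem b hbs⟩⟩
        · intro h
          have : b = a := by
            have := congrArg f h
            rwa [hff b hbs, hff a ha] at this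
          exact hb2 this
        · intro h
          have : f a = b := by rw [← h, hff b hbs]
          exact hb1 this.symm
      have ihk : Even t.card := by
        refine ih t.card (by omega) t hmem' ?_ ?_ rfl
        · exact fun b hb => hff b (hts hb)
        · exact fun b hb => hne b (hts hb)
      rcases ihk with ⟨c, hc⟩
      exact ⟨c + 1, by omega⟩


namespace TwoSheeted

variable {n : ℕ} {G : MGraph} [Finite G.V] [Finite G.E] (p : MGraphHom G (Rose n))

noncomputable instance : Fintype G.V := Fintype.ofFinite _
noncomputable instance : Fintype G.E := Fintype.ofFinite _
/-- letters -/
abbrev L (n : ℕ) := (Rose n).E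

instance : Fintype (Rose n).E := inferInstanceAs (Fintype (Fin n × Bool))

lemma card_L (n : ℕ) : Fintype.card (L n) = 2 * n := by
  rw [show Fintype.card (L n) = Fintype.card (Fin n × Bool) from rfl]
  simp [mul_comm]

noncomputable def star (v : G.V) : Finset G.E := univ.filter (fun ε => G.ini ε = v)

noncomputable def degF (G : MGraph) [Finite G.E] (v : G.V) : ℕ :=
  (univ.filter (fun ε => G.ini ε = v)).card

noncomputable def mlt (v : G.V) (a : L n) : ℕ :=
  (univ.filter (fun ε => G.ini ε = v ∧ p.toE ε = a)).card

lemma degF_eq_degree (v : G.V) : degF G v = G.degree v := by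
  rw [MGraph.degree, Nat.card_eq_fintype_card, Fintype.card_subtype, degF]

lemma sum_mlt (v : G.V) : ∑ a : L n, mlt p v a = degF G v := by
  rw [degF, Finset.card_eq_sum_card_fiberwise (f := fun ε => p.toE ε) (t := univ)
    (fun x _ => mem_univ _)]
  refine Finset.sum_congr rfl fun a _ => ?_
  rw [mlt, Finset.filter_filter]


/-- bar on letters -/
abbrev rbar {n : ℕ} (a : L n) : L n := (Rose n).bar a

lemma rbar_rbar {n : ℕ} (a : L n) : rbar (rbar a) = a := (Rose n).bar_bar a

/-- The set of possible final edges of lifts, computed by right-recursion on the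
reversed word. -/
noncomputable def QL : List (L n) → Finset G.E
  | [] => ∅
  | [a] => univ.filter (fun ε => p.toE ε = a)
  | a :: b :: rest => univ.filter
      (fun ε => p.toE ε = a ∧ ∃ δ ∈ QL (b :: rest), G.ter δ = G.ini ε)

noncomputable def QF (γ : List (L n)) : Finset G.E := QL p γ.reverse

lemma QL_cons₂ (a : L n) (l : List (L n)) (hl : l ≠ []) :
    QL p (a :: l) = univ.filter
      (fun ε => p.toE ε = a ∧ ∃ δ ∈ QL p l, G.ter δ = G.ini ε) := by
  cases l with
  | nil => exact absurd rfl hl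
  | cons b rest => rfl

lemma QF_single (a : L n) : QF p [a] = univ.filter (fun ε => p.toE ε = a) := rfl

lemma QF_append (γ : List (L n)) (hγ : γ ≠ []) (b : L n) :
    QF p (γ ++ [b]) = univ.filter
      (fun ε => p.toE ε = b ∧ ∃ δ ∈ QF p γ, G.ter δ = G.ini ε) := by
  rw [QF, List.reverse_append, List.reverse_singleton, List.singleton_append,
    QL_cons₂ p b γ.reverse (by simpa using hγ)]
  rfl

lemma QF_label {γ : List (L n)} {ε : G.E} (hε : ε ∈ QF p γ) (ℓ : L n)
    (hℓ : γ.getLast? = some ℓ) : p.toE ε = ℓ := by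
  rcases List.eq_nil_or_concat γ with rfl | ⟨γ', b, rfl⟩
  · simp at hℓ
  · rw [List.concat_eq_append] at hε hℓ
    rw [List.getLast?_append, List.getLast?_singleton] at hℓ
    cases hℓ
    rcases List.eq_nil_or_concat γ' with rfl | ⟨γ'', c, rfl⟩
    · rw [List.nil_append, QF_single] at hε; exact (mem_filter.1 hε).2
    · rw [List.concat_eq_append] at hε
      rw [QF_append p _ (by simp) _] at hε
      exact (mem_filter.1 hε).2.1

/-- membership in QF from an actual lift -/
lemma mem_QF_of_lift (β : List G.E) (ε : G.E) (h1 : G.IsChain (β ++ [ε])) :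
    ε ∈ QF p ((β ++ [ε]).map p.toE) := by
  induction β using List.reverseRecOn generalizing ε with
  | nil => simp [QF_single]
  | append_singleton β' δ ih =>
    have h1' := h1
    rw [MGraph.IsChain] at h1'; unfold List.Chain' at h1'; rw [List.isChain_append] at h1'
    obtain ⟨hc1, -, hc3⟩ := h1'
    have hterini : G.ter δ = G.ini ε := by
      refine hc3 δ ?_ ε rfl
      rw [List.getLast?_append, List.getLast?_singleton]
      simp
    have hδ : δ ∈ QF p ((β' ++ [δ]).map p.toE) := ih δ hc1
    have key := QF_append p ((β' ++ [δ]).map p.toE) (by simp) (p.toE ε)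
    have : ((β' ++ [δ]) ++ [ε]).map p.toE
        = (β' ++ [δ]).map p.toE ++ [p.toE ε] := by simp
    rw [this, key]
    exact mem_filter.2 ⟨mem_univ _, rfl, δ, hδ, hterini⟩


abbrev Red {n : ℕ} (γ : List (L n)) : Prop := (Rose n).IsReducedPath γ

lemma red_append {γ : List (L n)} (hγ : Red γ) {ℓ b : L n} (hl : γ.getLast? = some ℓ)
    (hb : b ≠ rbar ℓ) : Red (γ ++ [b]) := by
  rw [Red, MGraph.IsReducedPath]; unfold List.Chain'; rw [List.isChain_append]
  refine ⟨hγ, List.isChain_singleton _, ?_⟩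
  intro x hx y hy
  rw [hl, Option.mem_some_iff] at hx
  rw [List.head?_singleton, Option.mem_some_iff] at hy
  subst hx; subst hy
  exact ⟨rfl, hb⟩

lemma red_single (a : L n) : Red [a] := List.isChain_singleton _

lemma QF_nonempty (hps : p.PathSurjective) {γ : List (L n)} (hγ : Red γ) (hne : γ ≠ []) :
    (QF p γ).Nonempty := by
  obtain ⟨β, hchain, hmap⟩ := hps γ hγ
  rcases List.eq_nil_or_concat β with rfl | ⟨β', ε, rfl⟩
  · exact absurd hmap.symm (by simpa using hne)
  · rw [List.concat_eq_append] at hchain hmap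
    exact ⟨ε, hmap ▸ mem_QF_of_lift p β' ε hchain⟩

lemma mem_QF_append {γ : List (L n)} (hne : γ ≠ []) {b : L n} {ε' : G.E}
    (h : ε' ∈ QF p (γ ++ [b])) :
    p.toE ε' = b ∧ ∃ δ ∈ QF p γ, G.ter δ = G.ini ε' := by
  rw [QF_append p γ hne b] at h
  exact (mem_filter.1 h).2

/-- the legal continuations of a letter -/
noncomputable def legal (ℓ : L n) : Finset (L n) := univ.filter (fun b => b ≠ rbar ℓ)

lemma card_legal (ℓ : L n) : (legal ℓ).card = 2 * n - 1 := by
  rw [legal, Finset.filter_ne', Finset.card_erase_of_mem (mem_univ _), Finset.card_univ,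
    card_L]

/-- Key Counting Lemma -/
lemma KCL {γ : List (L n)} (_hγ : Red γ) {ℓ : L n} (hl : γ.getLast? = some ℓ) :
    (∑ b ∈ legal ℓ, (QF p (γ ++ [b])).card) + (QF p γ).card
      ≤ ∑ v ∈ (QF p γ).image G.ter, degF G v := by
  classical
  have hne : γ ≠ [] := by rintro rfl; simp at hl
  set T := (QF p γ).image G.ter with hT
  set U : Finset G.E := univ.filter (fun ε => G.ini ε ∈ T) with hU
  -- RHS = card U
  have hRHS : ∑ v ∈ T, degF G v = U.card := by
    rw [hU, Finset.card_eq_sum_card_fiberwise (f := fun ε => G.ini ε) (t := T)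
      (s := univ.filter (fun ε => G.ini ε ∈ T)) (fun x hx => (mem_filter.1 hx).2)]
    refine Finset.sum_congr rfl fun v hv => ?_
    rw [degF]
    congr 1
    ext ε
    simp only [mem_filter, mem_univ, true_and]
    exact ⟨fun h => ⟨h ▸ hv, h⟩, fun h => h.2⟩
  set A : Finset G.E := (legal ℓ).biUnion (fun b => QF p (γ ++ [b])) with hA
  set B : Finset G.E := (QF p γ).image G.bar with hB
  have hAcard : A.card = ∑ b ∈ legal ℓ, (QF p (γ ++ [b])).card := by
    rw [hA, Finset.card_biUnion]
    intro b hb c hc hbc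
    refine Finset.disjoint_left.2 fun ε hεb hεc => ?_
    have h1 := (mem_QF_append p hne hεb).1
    have h2 := (mem_QF_append p hne hεc).1
    exact hbc (h1 ▸ h2 ▸ rfl)
  have hBcard : B.card = (QF p γ).card := by
    rw [hB]
    refine Finset.card_image_of_injOn fun x _ y _ hxy => ?_
    have := congrArg G.bar hxy
    rwa [G.bar_bar, G.bar_bar] at this
  have hAU : A ⊆ U := by
    intro ε hε
    rw [hA, Finset.mem_biUnion] at hε
    obtain ⟨b, _, hεb⟩ := hε
    obtain ⟨-, δ, hδ, hterini⟩ := mem_QF_append p hne hεb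
    exact mem_filter.2 ⟨mem_univ _, hT ▸ Finset.mem_image.2 ⟨δ, hδ, hterini⟩⟩
  have hBU : B ⊆ U := by
    intro ε hε
    rw [hB, Finset.mem_image] at hε
    obtain ⟨δ, hδ, rfl⟩ := hε
    refine mem_filter.2 ⟨mem_univ _, hT ▸ Finset.mem_image.2 ⟨δ, hδ, rfl⟩⟩
  have hAB : Disjoint A B := by
    refine Finset.disjoint_left.2 fun ε hεA hεB => ?_
    rw [hA, Finset.mem_biUnion] at hεA
    obtain ⟨b, hb, hεb⟩ := hεA
    have h1 := (mem_QF_append p hne hεb).1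
    rw [hB, Finset.mem_image] at hεB
    obtain ⟨δ, hδ, rfl⟩ := hεB
    have h2 : p.toE (G.bar δ) = rbar ℓ := by
      rw [p.map_bar δ, QF_label p hδ ℓ hl]
    rw [legal, mem_filter] at hb
    exact hb.2 (h1 ▸ h2 ▸ rfl)
  calc (∑ b ∈ legal ℓ, (QF p (γ ++ [b])).card) + (QF p γ).card
      = A.card + B.card := by rw [hAcard, hBcard]
    _ = (A ∪ B).card := (Finset.card_union_of_disjoint hAB).symm
    _ ≤ U.card := Finset.card_le_card (Finset.union_subset hAU hBU)
    _ = ∑ v ∈ T, degF G v := hRHS.symm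


----------------------------------------------------------------
-- budget
----------------------------------------------------------------

lemma handshake : ∑ v : G.V, degF G v = Fintype.card G.E := by
  rw [← Finset.card_univ,
    Finset.card_eq_sum_card_fiberwise (f := fun ε => G.ini ε) (t := univ)
      (fun x _ => mem_univ _)]
  rfl

lemma even_cardE : 2 * (Nat.card G.E / 2) = Nat.card G.E := by
  have : Even (Fintype.card G.E) := by
    rw [← Finset.card_univ]
    exact even_card_of_involution univ G.bar (fun a _ => mem_univ _)
      (fun a _ => G.bar_bar a) (fun a _ => G.bar_ne a)
  obtain ⟨k, hk⟩ := this
  rw [Nat.card_eq_fintype_card]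
  omega

lemma ncomp_one (hconn : G.Connected) : G.ncomp = 1 := by
  rw [MGraph.ncomp, Nat.card_eq_one_iff_unique]
  obtain ⟨⟨v₀⟩, hcon⟩ := hconn
  constructor
  · constructor
    intro x y
    induction x using Quotient.inductionOn with | _ a =>
    induction y using Quotient.inductionOn with | _ b =>
    exact Quotient.sound (hcon a b)
  · exact ⟨Quotient.mk _ v₀⟩

/-- total degree excess -/
noncomputable def Xexc (G : MGraph) [Finite G.E] [Finite G.V] : ℕ :=
  ∑ v : G.V, (degF G v - 2)

lemma budget (hn : 2 ≤ n) (hconn : G.Connected) (hcore : ∀ v : G.V, 2 ≤ G.degree v)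
    (hb : G.betti ≤ 2 * (n : ℤ) - 1) : Xexc G ≤ 4 * n - 4 := by
  have hdeg : ∀ v : G.V, 2 ≤ degF G v := fun v => by
    rw [degF_eq_degree]; exact hcore v
  have hsum : Xexc G + 2 * Fintype.card G.V = Fintype.card G.E := by
    calc Xexc G + 2 * Fintype.card G.V
        = ∑ v : G.V, ((degF G v - 2) + 2) := by
          rw [Finset.sum_add_distrib, Finset.sum_const, Finset.card_univ, smul_eq_mul, Xexc]
          ring
      _ = ∑ v : G.V, degF G v :=
          Finset.sum_congr rfl (fun v _ => by have := hdeg v; omega)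
      _ = Fintype.card G.E := handshake
  have hbetti := hb
  rw [MGraph.betti, ncomp_one hconn] at hbetti
  have hE2 := even_cardE (G := G)
  have hcV : Nat.card G.V = Fintype.card G.V := Nat.card_eq_fintype_card
  have hcE : Nat.card G.E = Fintype.card G.E := Nat.card_eq_fintype_card
  -- from hbetti : (E/2 : ℤ) - V + 1 ≤ 2n - 1
  have h1 : (Nat.card G.E / 2 : ℕ) + 2 ≤ Nat.card G.V + 2 * n := by
    have := hbetti
    push_cast at this
    omega
  omega

----------------------------------------------------------------
-- the minimum lift-multiplicity
----------------------------------------------------------------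

def mSet (p : MGraphHom G (Rose n)) : Set ℕ :=
  {k | ∃ γ : List (L n), Red γ ∧ γ ≠ [] ∧ (QF p γ).card = k}

noncomputable def mm (p : MGraphHom G (Rose n)) : ℕ := sInf (mSet p)

lemma mSet_nonempty (hn : 2 ≤ n) : (mSet p).Nonempty := by
  refine ⟨_, [(⟨0, by omega⟩, true)], red_single _, by simp, rfl⟩

lemma mm_mem (hn : 2 ≤ n) : mm p ∈ mSet p := Nat.sInf_mem (mSet_nonempty p hn)

lemma mm_le {γ : List (L n)} (hγ : Red γ) (hne : γ ≠ []) : mm p ≤ (QF p γ).card :=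
  Nat.sInf_le ⟨γ, hγ, hne, rfl⟩

lemma mm_pos (hps : p.PathSurjective) (hn : 2 ≤ n) : 1 ≤ mm p := by
  obtain ⟨γ, hγ, hne, hcard⟩ := mm_mem p hn
  rw [← hcard]
  exact Finset.card_pos.2 (QF_nonempty p hps hγ hne)

/-- main chain of inequalities, applicable to any nonempty reduced word -/
lemma main_chain (hps : p.PathSurjective) (hn : 2 ≤ n)
    {γ : List (L n)} (hγ : Red γ) {ℓ : L n} (hl : γ.getLast? = some ℓ) :
    (2 * n - 1) * mm p + (QF p γ).card ≤ ∑ v ∈ (QF p γ).image G.ter, degF G v := by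
  have hlow : (2 * n - 1) * mm p ≤ ∑ b ∈ legal ℓ, (QF p (γ ++ [b])).card := by
    calc (2 * n - 1) * mm p = ∑ _b ∈ legal ℓ, mm p := by
          rw [Finset.sum_const, card_legal, smul_eq_mul]
      _ ≤ _ := by
          refine Finset.sum_le_sum fun b hb => ?_
          refine mm_le p (red_append hγ hl (mem_filter.1 hb).2) (by simp)
  calc (2 * n - 1) * mm p + (QF p γ).card
      ≤ (∑ b ∈ legal ℓ, (QF p (γ ++ [b])).card) + (QF p γ).card := by omega
    _ ≤ _ := KCL p hγ hl

lemma sum_deg_le (hcore : ∀ v : G.V, 2 ≤ G.degree v) (T : Finset G.V) :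
    ∑ v ∈ T, degF G v ≤ 2 * T.card + Xexc G := by
  have hdeg : ∀ v : G.V, 2 ≤ degF G v := fun v => by
    rw [degF_eq_degree]; exact hcore v
  calc ∑ v ∈ T, degF G v = ∑ v ∈ T, (2 + (degF G v - 2)) := by
        refine Finset.sum_congr rfl fun v _ => ?_
        have := hdeg v; omega
    _ = 2 * T.card + ∑ v ∈ T, (degF G v - 2) := by
        rw [Finset.sum_add_distrib, Finset.sum_const, smul_eq_mul, mul_comm]
    _ ≤ 2 * T.card + Xexc G := by
        have : ∑ v ∈ T, (degF G v - 2) ≤ Xexc G :=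
          Finset.sum_le_sum_of_subset (Finset.subset_univ T)
        omega

lemma mm_le_two (hps : p.PathSurjective) (hn : 2 ≤ n)
    (hconn : G.Connected) (hcore : ∀ v : G.V, 2 ≤ G.degree v)
    (hb : G.betti ≤ 2 * (n : ℤ) - 1) : mm p ≤ 2 := by
  obtain ⟨γ, hγ, hne, hcard⟩ := mm_mem p hn
  obtain ⟨ℓ, hl⟩ := List.getLast?_isSome.2 hne |> Option.isSome_iff_exists.1
  have h1 := main_chain p hps hn hγ hl
  have h2 := sum_deg_le hcore ((QF p γ).image G.ter)
  have h3 : ((QF p γ).image G.ter).card ≤ (QF p γ).card := Finset.card_image_le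
  have h4 := budget (G := G) hn hconn hcore hb
  rw [hcard] at h1 h3
  by_contra hcon
  push_neg at hcon
  have hm3 : 3 ≤ mm p := hcon
  obtain ⟨n', rfl⟩ : ∃ n', n = n' + 2 := ⟨n - 2, by omega⟩
  have hk : 2 * (n' + 2) - 1 = 2 * n' + 3 := by omega
  rw [hk] at h1
  have hprod : (2 * n' + 3) * mm p = 2 * n' * mm p + 3 * mm p := by ring
  have hmul : 2 * n' * 3 ≤ 2 * n' * mm p := Nat.mul_le_mul_left _ hm3
  omega


----------------------------------------------------------------
-- big vertices, death lemma
----------------------------------------------------------------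

noncomputable def Bigv (G : MGraph) [Finite G.E] [Finite G.V] (n : ℕ) : Finset G.V :=
  univ.filter (fun v => 2 * n ≤ degF G v)

lemma Bigv_card_le_two (hn : 2 ≤ n) (hX : Xexc G ≤ 4 * n - 4) :
    (Bigv G n).card ≤ 2 := by
  by_contra h
  push_neg at h
  have hsub : ∑ v ∈ Bigv G n, (degF G v - 2) ≤ Xexc G :=
    Finset.sum_le_sum_of_subset (Finset.subset_univ _)
  have hlow : ∀ v ∈ Bigv G n, 2 * n - 2 ≤ degF G v - 2 := by
    intro v hv
    have := (mem_filter.1 hv).2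
    omega
  have : (Bigv G n).card * (2 * n - 2) ≤ ∑ v ∈ Bigv G n, (degF G v - 2) := by
    calc (Bigv G n).card * (2 * n - 2) = ∑ _v ∈ Bigv G n, (2 * n - 2) := by
          rw [Finset.sum_const, smul_eq_mul]
      _ ≤ _ := Finset.sum_le_sum hlow
  have h3 : 3 * (2 * n - 2) ≤ (Bigv G n).card * (2 * n - 2) :=
    Nat.mul_le_mul_right _ (by omega)
  omega

/-- the terminal vertex of the unique lift-end of a uniquely-liftable word is big -/
lemma end_big (hps : p.PathSurjective) (hn : 2 ≤ n)
    {γ : List (L n)} (hγ : Red γ) {ℓ : L n} (hl : γ.getLast? = some ℓ)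
    {ε : G.E} (hQ : QF p γ = {ε}) : 2 * n ≤ degF G (G.ter ε) := by
  have h1 := main_chain p hps hn hγ hl
  rw [hQ] at h1
  simp only [Finset.image_singleton, Finset.sum_singleton, Finset.card_singleton] at h1
  have hm := mm_pos p hps hn
  have : 2 * n - 1 ≤ (2 * n - 1) * mm p := Nat.le_mul_of_pos_right _ hm
  omega

lemma QF_append_singleton {γ : List (L n)} (hne : γ ≠ []) {ε : G.E}
    (hQ : QF p γ = {ε}) (b : L n) :
    QF p (γ ++ [b]) = univ.filter (fun ε' => G.ini ε' = G.ter ε ∧ p.toE ε' = b) := by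
  rw [QF_append p γ hne b, hQ]
  ext ε'
  simp only [mem_filter, mem_univ, true_and, Finset.mem_singleton]
  constructor
  · rintro ⟨h1, δ, rfl, h3⟩; exact ⟨h3.symm, h1⟩
  · rintro ⟨h1, h2⟩; exact ⟨h2, ε, rfl, h1.symm⟩

lemma card_QF_append_singleton {γ : List (L n)} (hne : γ ≠ []) {ε : G.E}
    (hQ : QF p γ = {ε}) (b : L n) :
    (QF p (γ ++ [b])).card = mlt p (G.ter ε) b := by
  rw [QF_append_singleton p hne hQ b]
  rfl

/-- the end vertex of a uniquely-liftable word supports every letter -/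
lemma full_of_singleton (hps : p.PathSurjective)
    {γ : List (L n)} (hγ : Red γ) {ℓ : L n} (hl : γ.getLast? = some ℓ)
    {ε : G.E} (hQ : QF p γ = {ε}) (b : L n) : 1 ≤ mlt p (G.ter ε) b := by
  have hne : γ ≠ [] := by rintro rfl; simp at hl
  by_cases hb : b = rbar ℓ
  · subst hb
    have hmem : G.bar ε ∈ univ.filter (fun e => G.ini e = G.ter ε ∧ p.toE e = rbar ℓ) := by
      refine mem_filter.2 ⟨mem_univ _, rfl, ?_⟩
      rw [p.map_bar]
      congr 1
      exact QF_label p (hQ ▸ Finset.mem_singleton_self ε) ℓ hl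
    exact Finset.card_pos.2 ⟨_, hmem⟩
  · rw [← card_QF_append_singleton p hne hQ b]
    exact Finset.card_pos.2 (QF_nonempty p hps (red_append hγ hl hb) (by simp))

----------------------------------------------------------------
-- connectivity closure
----------------------------------------------------------------

lemma ter_bar (ε : G.E) : G.ter (G.bar ε) = G.ini ε := by
  rw [MGraph.ter, G.bar_bar]

lemma ini_bar (ε : G.E) : G.ini (G.bar ε) = G.ter ε := rfl

lemma closure (hconn : G.Connected) (S : Set G.V) (v₀ : G.V) (hv₀ : v₀ ∈ S)
    (hcl : ∀ v ∈ S, ∀ ε : G.E, G.ini ε = v → G.ter ε ∈ S) : ∀ x, x ∈ S := by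
  intro x
  have hrel := hconn.2 v₀ x
  have key : ∀ a b : G.V, Relation.EqvGen G.Adj a b → (a ∈ S → b ∈ S) ∧ (b ∈ S → a ∈ S) := by
    intro a b hab
    induction hab with
    | rel a b h =>
      obtain ⟨ε, hini, hter⟩ := h
      constructor
      · intro ha; exact hter ▸ hcl a ha ε hini
      · intro hb
        have : G.ter (G.bar ε) ∈ S := hcl b hb (G.bar ε) (by rw [ini_bar, hter])
        rwa [ter_bar, hini] at this
    | refl a => exact ⟨id, id⟩
    | symm a b _ ih => exact ⟨ih.2, ih.1⟩
    | trans a b c _ _ ih1 ih2 => exact ⟨fun h => ih2.1 (ih1.1 h), fun h => ih1.2 (ih2.2 h)⟩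
  exact (key v₀ x hrel).1 hv₀

----------------------------------------------------------------
-- endgame constructors
----------------------------------------------------------------

instance : Subsingleton (Rose n).V := inferInstanceAs (Subsingleton Unit)

lemma coveringOfTwoFull (u₁ u₂ : G.V) (hne : u₁ ≠ u₂) (hV : ∀ v : G.V, v = u₁ ∨ v = u₂)
    (hmlt : ∀ v : G.V, ∀ a : L n, mlt p v a = 1) :
    p.IsCovering ∧ ∀ v : (Rose n).V, Nat.card {u : G.V // p.toV u = v} = 2 := by
  constructor
  · constructor
    · intro x; exact ⟨u₁, Subsingleton.elim _ _⟩
    · intro v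
      refine ⟨fun ε _ => Subsingleton.elim _ _, ?_, ?_⟩
      · intro ε hε ε' hε' heq
        have h1 : ε ∈ univ.filter (fun e => G.ini e = v ∧ p.toE e = p.toE ε) :=
          mem_filter.2 ⟨mem_univ _, hε, rfl⟩
        have h2 : ε' ∈ univ.filter (fun e => G.ini e = v ∧ p.toE e = p.toE ε) :=
          mem_filter.2 ⟨mem_univ _, hε', heq.symm⟩
        have hcard : (univ.filter (fun e => G.ini e = v ∧ p.toE e = p.toE ε)).card ≤ 1 :=
          le_of_eq (hmlt v (p.toE ε))
        exact Finset.card_le_one.1 hcard _ h2 _ h1 |>.symm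
      · intro a _
        have : 0 < mlt p v a := by rw [hmlt v a]; omega
        obtain ⟨ε, hε⟩ := Finset.card_pos.1 this
        obtain ⟨-, h1, h2⟩ := mem_filter.1 hε
        exact ⟨ε, h1, h2⟩
  · intro v
    have hv2 : Nat.card G.V = 2 := by
      rw [Nat.card_eq_two_iff]
      refine ⟨u₁, u₂, hne, ?_⟩
      ext x
      simp only [Set.mem_insert_iff, Set.mem_singleton_iff, Set.mem_univ, iff_true]
      exact hV x
    rw [← hv2]
    exact Nat.card_congr (Equiv.subtypeUnivEquiv (fun u => Subsingleton.elim _ _))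

lemma sectionOfLoops (hnolift : ¬ ∃ f : MGraphHom (Rose n) G,
      (∀ x, p.toV (f.toV x) = x) ∧ (∀ e, p.toE (f.toE e) = e))
    (u : G.V) (h : ∀ i : Fin n, ∃ ε : G.E, G.ini ε = u ∧ G.ter ε = u ∧ p.toE ε = (i, true)) :
    False := by
  choose γ hini hter hlab using h
  classical
  set F : (Rose n).E → G.E :=
    fun e => if ((e : Fin n × Bool)).2 = true then γ ((e : Fin n × Bool)).1
      else G.bar (γ ((e : Fin n × Bool)).1) with hF
  have hFt : ∀ i : Fin n, F ((i, true) : Fin n × Bool) = γ i := fun i => by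
    rw [hF]; simp
  have hFf : ∀ i : Fin n, F ((i, false) : Fin n × Bool) = G.bar (γ i) := fun i => by
    rw [hF]; simp
  have hbar : ∀ e : (Rose n).E, (Rose n).bar e = (((e : Fin n × Bool).1,
      !(e : Fin n × Bool).2) : Fin n × Bool) := fun e => rfl
  refine hnolift ⟨⟨fun _ => u, F, ?_, ?_⟩, ?_, ?_⟩
  · intro e
    rw [hbar e]
    obtain ⟨i, s⟩ := (e : Fin n × Bool)
    cases s
    · show F ((i, true) : Fin n × Bool) = G.bar (F ((i, false) : Fin n × Bool))
      rw [hFt, hFf, G.bar_bar]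
    · show F ((i, false) : Fin n × Bool) = G.bar (F ((i, true) : Fin n × Bool))
      rw [hFt, hFf]
  · intro e
    obtain ⟨i, s⟩ := (e : Fin n × Bool)
    cases s
    · show G.ini (F ((i, false) : Fin n × Bool)) = u
      rw [hFf, ini_bar, hter]
    · show G.ini (F ((i, true) : Fin n × Bool)) = u
      rw [hFt, hini]
  · intro x; exact Subsingleton.elim _ _
  · intro e
    obtain ⟨i, s⟩ := (e : Fin n × Bool)
    cases s
    · show p.toE (F ((i, false) : Fin n × Bool)) = ((i, false) : Fin n × Bool)
      rw [hFf, p.map_bar, hlab]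
      rfl
    · show p.toE (F ((i, true) : Fin n × Bool)) = ((i, true) : Fin n × Bool)
      rw [hFt, hlab]


----------------------------------------------------------------
-- singleton-state machinery
----------------------------------------------------------------

lemma getLast?_app (γ : List (L n)) (b : L n) : (γ ++ [b]).getLast? = some b := by
  rw [List.getLast?_append, List.getLast?_singleton]
  rfl

lemma mlt_one_unique {v : G.V} {c : L n} (h1 : mlt p v c = 1) {α α' : G.E}
    (hα : G.ini α = v ∧ p.toE α = c) (hα' : G.ini α' = v ∧ p.toE α' = c) : α = α' := by
  have hmemα : α ∈ univ.filter (fun e => G.ini e = v ∧ p.toE e = c) :=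
    mem_filter.2 ⟨mem_univ _, hα⟩
  have hmemα' : α' ∈ univ.filter (fun e => G.ini e = v ∧ p.toE e = c) :=
    mem_filter.2 ⟨mem_univ _, hα'⟩
  exact Finset.card_le_one.1 (le_of_eq h1) _ hmemα _ hmemα'

lemma sstate_step {γ : List (L n)} {ℓ : L n} {ε : G.E}
    (hred : Red γ) (hlast : γ.getLast? = some ℓ) (hQ : QF p γ = {ε})
    {b : L n} (hb : b ≠ rbar ℓ) (hmlt : mlt p (G.ter ε) b = 1) :
    ∃ α, QF p (γ ++ [b]) = {α} ∧ G.ini α = G.ter ε ∧ p.toE α = b ∧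
      Red (γ ++ [b]) ∧ (γ ++ [b]).getLast? = some b := by
  have hne : γ ≠ [] := by rintro rfl; simp at hlast
  have hcard : (QF p (γ ++ [b])).card = 1 := by
    rw [card_QF_append_singleton p hne hQ b]; exact hmlt
  obtain ⟨α, hα⟩ := Finset.card_eq_one.1 hcard
  have hmem : α ∈ QF p (γ ++ [b]) := hα ▸ Finset.mem_singleton_self α
  rw [QF_append_singleton p hne hQ b, mem_filter] at hmem
  exact ⟨α, hα, hmem.2.1, hmem.2.2, red_append hred hlast hb, getLast?_app γ b⟩

lemma mlt_all_one {v : G.V} (hfull : ∀ a : L n, 1 ≤ mlt p v a)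
    (hdeg : degF G v = 2 * n) : ∀ a : L n, mlt p v a = 1 := by
  intro a
  by_contra hcon
  have h2 : 2 ≤ mlt p v a := by have := hfull a; omega
  have hsum := sum_mlt p v
  have hsplit : ∑ c ∈ univ.erase a, mlt p v c + mlt p v a = ∑ c : L n, mlt p v c :=
    Finset.sum_erase_add univ _ (mem_univ a)
  have hlow : (univ.erase a).card ≤ ∑ c ∈ univ.erase a, mlt p v c := by
    calc (univ.erase a).card = ∑ _c ∈ univ.erase a, 1 := by
          rw [Finset.sum_const, smul_eq_mul, mul_one]
      _ ≤ _ := Finset.sum_le_sum fun c _ => hfull c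
  have hcarderase : (univ.erase a).card = 2 * n - 1 := by
    rw [Finset.card_erase_of_mem (mem_univ _), Finset.card_univ, card_L]
  have hn1 : 0 < n := (a.1 : Fin n).pos
  omega

lemma rbar_inj {a b : L n} (h : rbar a = rbar b) : a = b := by
  have := congrArg rbar h
  rwa [rbar_rbar, rbar_rbar] at this

lemma ne_rbar_symm {a b : L n} (h : a ≠ rbar b) : b ≠ rbar a := by
  intro hc
  exact h (by rw [hc, rbar_rbar])


----------------------------------------------------------------
-- mm = 1, one big vertex: contradiction (via section)
----------------------------------------------------------------

lemma case_mm_one_bigone (hps : p.PathSurjective) (hn : 2 ≤ n) (hconn : G.Connected)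
    (hcore : ∀ v : G.V, 2 ≤ G.degree v) (hb : G.betti ≤ 2 * (n : ℤ) - 1)
    (hnolift : ¬ ∃ f : MGraphHom (Rose n) G,
      (∀ x, p.toV (f.toV x) = x) ∧ (∀ e, p.toE (f.toE e) = e))
    (hm : mm p = 1) (u : G.V) (hBig : Bigv G n = {u}) : False := by
  have hX : Xexc G ≤ 4 * n - 4 := budget hn hconn hcore hb
  -- the minimal word
  obtain ⟨γ₀, hred₀, hne₀, hcard₀⟩ := mm_mem p hn
  rw [hm] at hcard₀
  obtain ⟨ε₀, hQ₀⟩ := Finset.card_eq_one.1 hcard₀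
  obtain ⟨ℓ₀, hlast₀⟩ := Option.isSome_iff_exists.1 (List.getLast?_isSome.2 hne₀)
  have hterBig : ∀ {γ : List (L n)} {ℓ : L n} {ε : G.E}, Red γ → γ.getLast? = some ℓ →
      QF p γ = {ε} → G.ter ε = u := by
    intro γ ℓ ε h1 h2 h3
    have : G.ter ε ∈ Bigv G n := mem_filter.2 ⟨mem_univ _, end_big p hps hn h1 h2 h3⟩
    rwa [hBig, Finset.mem_singleton] at this
  have hv₀ : G.ter ε₀ = u := hterBig hred₀ hlast₀ hQ₀
  -- degree bookkeeping at u
  have hbigu : 2 * n ≤ degF G u := by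
    have : u ∈ Bigv G n := hBig ▸ Finset.mem_singleton_self u
    exact (mem_filter.1 this).2
  have hXU : degF G u - 2 ≤ Xexc G := by
    have : ∑ v ∈ ({u} : Finset G.V), (degF G v - 2) ≤ Xexc G :=
      Finset.sum_le_sum_of_subset (Finset.subset_univ _)
    simpa using this
  obtain ⟨s, hs⟩ : ∃ s, degF G u = 2 * n + s := ⟨degF G u - 2 * n, by omega⟩
  have hsle : s ≤ 2 * n - 2 := by omega
  -- fullness at u
  have hfull : ∀ a : L n, 1 ≤ mlt p u a := by
    intro a
    have := full_of_singleton p hps hred₀ hlast₀ hQ₀ a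
    rwa [hv₀] at this
  -- letters with a unique edge
  set A : Finset (L n) := univ.filter (fun c => mlt p u c = 1) with hA
  have hAcard : 2 * n - s ≤ A.card := by
    set C : Finset (L n) := univ.filter (fun c => ¬ mlt p u c = 1) with hC
    have hpart : A.card + C.card = 2 * n := by
      rw [hA, hC, Finset.card_filter_add_card_filter_not, Finset.card_univ, card_L]
    have hsums : ∑ c : L n, (mlt p u c - 1) + 2 * n = degF G u := by
      calc ∑ c : L n, (mlt p u c - 1) + 2 * n
          = ∑ c : L n, ((mlt p u c - 1) + 1) := by
            rw [Finset.sum_add_distrib, Finset.sum_const, Finset.card_univ, card_L,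
              smul_eq_mul, mul_one]
        _ = ∑ c : L n, mlt p u c :=
            Finset.sum_congr rfl fun c _ => by have := hfull c; omega
        _ = degF G u := sum_mlt p u
    have hCsum : C.card ≤ ∑ c : L n, (mlt p u c - 1) := by
      calc C.card = ∑ _c ∈ C, 1 := by rw [Finset.sum_const, smul_eq_mul, mul_one]
        _ ≤ ∑ c ∈ C, (mlt p u c - 1) := by
            refine Finset.sum_le_sum fun c hc => ?_
            have h1 := (mem_filter.1 hc).2
            have h2 := hfull c
            omega
        _ ≤ ∑ c : L n, (mlt p u c - 1) :=
            Finset.sum_le_sum_of_subset (Finset.subset_univ _)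
    omega
  -- first extension: a loop at u
  have hA2 : 2 ≤ A.card := by omega
  obtain ⟨c₁, hc₁A, hc₁⟩ : ∃ c₁, c₁ ∈ A ∧ c₁ ≠ rbar ℓ₀ := by
    obtain ⟨c₁, hc₁⟩ := Finset.card_pos.1 (show 0 < (A.erase (rbar ℓ₀)).card from by
      have := Finset.pred_card_le_card_erase (s := A) (a := rbar ℓ₀)
      omega)
    exact ⟨c₁, Finset.mem_of_mem_erase hc₁, Finset.ne_of_mem_erase hc₁⟩
  have hc₁mlt : mlt p u c₁ = 1 := (mem_filter.1 hc₁A).2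
  obtain ⟨α₁, hQ₁, hini₁, hlab₁, hred₁, hlast₁⟩ :=
    sstate_step p hred₀ hlast₀ hQ₀ hc₁ (by rwa [hv₀])
  have hterα₁ : G.ter α₁ = u := hterBig hred₁ hlast₁ hQ₁
  have hiniα₁ : G.ini α₁ = u := by rwa [hv₀] at hini₁
  -- every letter in A has a loop at u
  have loopA : ∀ c ∈ A, ∃ α : G.E, G.ini α = u ∧ G.ter α = u ∧ p.toE α = c := by
    intro c hc
    have hcmlt : mlt p u c = 1 := (mem_filter.1 hc).2
    by_cases hcc : c = rbar c₁
    · refine ⟨G.bar α₁, ?_, ?_, ?_⟩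
      · rw [ini_bar, hterα₁]
      · rw [ter_bar, hiniα₁]
      · rw [p.map_bar, hlab₁, hcc]
    · obtain ⟨α, hQα, hiniα, hlabα, hredα, hlastα⟩ :=
        sstate_step p hred₁ hlast₁ hQ₁ hcc (by rwa [hterα₁])
      exact ⟨α, by rwa [hterα₁] at hiniα, hterBig hredα hlastα hQα, hlabα⟩
  -- dichotomy on loops of all petals
  by_cases hloops : ∀ i : Fin n, ∃ ε : G.E, G.ini ε = u ∧ G.ter ε = u ∧ p.toE ε = (i, true)
  · exact sectionOfLoops p hnolift u hloops
  obtain ⟨i₀, hi₀'⟩ := not_forall.mp hloops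
  have hi₀ : ∀ ε : G.E, G.ini ε = u → G.ter ε = u → ¬ p.toE ε = ((i₀, true) : L n) :=
    fun ε h1 h2 h3 => hi₀' ⟨ε, h1, h2, h3⟩
  -- no loop at u in either orientation of petal i₀
  have hnoloop : ∀ ε : G.E, G.ini ε = u → G.ter ε = u →
      p.toE ε ≠ ((i₀, true) : L n) ∧ p.toE ε ≠ ((i₀, false) : L n) := by
    intro ε h1 h2
    constructor
    · intro hlab; exact hi₀ ε h1 h2 hlab
    · intro hlab
      refine hi₀ (G.bar ε) (by rw [ini_bar, h2]) (by rw [ter_bar, h1]) ?_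
      rw [p.map_bar, hlab]
      rfl
  set b : L n := ((i₀, true) : L n) with hbdef
  have hrbarb : rbar b = ((i₀, false) : L n) := rfl
  -- b and rbar b are not in A
  have hbA : b ∉ A := by
    intro hmem
    obtain ⟨α, h1, h2, h3⟩ := loopA b hmem
    exact (hnoloop α h1 h2).1 h3
  have hrbA : rbar b ∉ A := by
    intro hmem
    obtain ⟨α, h1, h2, h3⟩ := loopA _ hmem
    exact (hnoloop α h1 h2).2 (by rw [h3, hrbarb])
  have hbmlt : 2 ≤ mlt p u b := by
    have h1 := hfull b
    have : ¬ mlt p u b = 1 := fun h => hbA (mem_filter.2 ⟨mem_univ _, h⟩)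
    omega
  have hrbmlt : 2 ≤ mlt p u (rbar b) := by
    have h1 := hfull (rbar b)
    have : ¬ mlt p u (rbar b) = 1 := fun h => hrbA (mem_filter.2 ⟨mem_univ _, h⟩)
    omega
  -- t ≤ s
  set t : ℕ := mlt p u b with htdef
  have hts : t ≤ s := by
    have hsum := sum_mlt p u
    have hrb_ne_b : rbar b ≠ b := (Rose n).bar_ne b
    have hsplit1 : ∑ c ∈ univ.erase b, mlt p u c + mlt p u b = ∑ c : L n, mlt p u c :=
      Finset.sum_erase_add univ _ (mem_univ b)
    have hsplit2 : ∑ c ∈ (univ.erase b).erase (rbar b), mlt p u c + mlt p u (rbar b)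
        = ∑ c ∈ univ.erase b, mlt p u c :=
      Finset.sum_erase_add _ _ (Finset.mem_erase.2 ⟨hrb_ne_b, mem_univ _⟩)
    have hlow : ((univ.erase b).erase (rbar b)).card
        ≤ ∑ c ∈ (univ.erase b).erase (rbar b), mlt p u c := by
      calc ((univ.erase b).erase (rbar b)).card
          = ∑ _c ∈ (univ.erase b).erase (rbar b), 1 := by
            rw [Finset.sum_const, smul_eq_mul, mul_one]
        _ ≤ _ := Finset.sum_le_sum fun c _ => hfull c
    have hcard2 : ((univ.erase b).erase (rbar b)).card = 2 * n - 2 := by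
      rw [Finset.card_erase_of_mem (Finset.mem_erase.2 ⟨hrb_ne_b, mem_univ _⟩),
        Finset.card_erase_of_mem (mem_univ _), Finset.card_univ, card_L]
      omega
    omega
  -- navigate: b ≠ rbar c₁ automatically
  have hbc₁ : b ≠ rbar c₁ := by
    intro h
    exact hrbA (by rw [h, rbar_rbar]; exact hc₁A)
  -- the word reading b from u
  have hred2 : Red (γ₀ ++ [c₁] ++ [b]) :=
    red_append hred₁ hlast₁ hbc₁
  have hQ2 : QF p (γ₀ ++ [c₁] ++ [b])
      = univ.filter (fun ε' => G.ini ε' = u ∧ p.toE ε' = b) := by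
    rw [QF_append_singleton p (by simp) hQ₁ b, hterα₁]
  have hcard2 : (QF p (γ₀ ++ [c₁] ++ [b])).card = t := by rw [hQ2]; rfl
  -- all ends are away from u
  have hends : ∀ ε' ∈ QF p (γ₀ ++ [c₁] ++ [b]), G.ter ε' ≠ u := by
    intro ε' hmem hter
    rw [hQ2, mem_filter] at hmem
    exact (hnoloop ε' hmem.2.1 hter).1 hmem.2.2
  -- main chain at this word
  have hchain := main_chain p hps hn hred2 (getLast?_app _ b)
  rw [hm, mul_one, hcard2] at hchain
  -- bound the sum over terminal vertices
  set T' := (QF p (γ₀ ++ [c₁] ++ [b])).image G.ter with hT'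
  have hT'card : T'.card ≤ t := by rw [hT', ← hcard2]; exact Finset.card_image_le
  have hT'u : u ∉ T' := by
    intro hmem
    rw [hT', Finset.mem_image] at hmem
    obtain ⟨ε', h1, h2⟩ := hmem
    exact hends ε' h1 h2
  have hsumT' : ∑ v ∈ T', degF G v ≤ 2 * T'.card + (Xexc G - (degF G u - 2)) := by
    have hdegs : ∀ v : G.V, 2 ≤ degF G v := fun v => by
      rw [degF_eq_degree]; exact hcore v
    have hstep1 : ∑ v ∈ T', degF G v = 2 * T'.card + ∑ v ∈ T', (degF G v - 2) := by
      calc ∑ v ∈ T', degF G v = ∑ v ∈ T', (2 + (degF G v - 2)) :=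
            Finset.sum_congr rfl fun v _ => by have := hdegs v; omega
        _ = 2 * T'.card + ∑ v ∈ T', (degF G v - 2) := by
            rw [Finset.sum_add_distrib, Finset.sum_const, smul_eq_mul, mul_comm]
    have hstep2 : ∑ v ∈ T', (degF G v - 2) + (degF G u - 2) ≤ Xexc G := by
      have hsub : T' ⊆ univ.erase u := fun v hv =>
        Finset.mem_erase.2 ⟨fun h => hT'u (h ▸ hv), mem_univ _⟩
      have h1 : ∑ v ∈ T', (degF G v - 2) ≤ ∑ v ∈ univ.erase u, (degF G v - 2) :=
        Finset.sum_le_sum_of_subset hsub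
      have h2 : ∑ v ∈ univ.erase u, (degF G v - 2) + (degF G u - 2) = Xexc G :=
        Finset.sum_erase_add univ _ (mem_univ u)
      omega
    omega
  omega


----------------------------------------------------------------
-- mm = 1, two big vertices: covering
----------------------------------------------------------------

lemma case_mm_one_bigtwo (hps : p.PathSurjective) (hn : 2 ≤ n) (hconn : G.Connected)
    (hcore : ∀ v : G.V, 2 ≤ G.degree v) (hb : G.betti ≤ 2 * (n : ℤ) - 1)
    (hm : mm p = 1) (u₁ u₂ : G.V) (hneu : u₁ ≠ u₂) (hBig : Bigv G n = {u₁, u₂}) :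
    p.IsCovering ∧ ∀ v : (Rose n).V, Nat.card {u : G.V // p.toV u = v} = 2 := by
  have hX : Xexc G ≤ 4 * n - 4 := budget hn hconn hcore hb
  -- both big vertices have degree exactly 2n
  have hdeg2n : ∀ v ∈ Bigv G n, degF G v = 2 * n := by
    have hu₁ : 2 * n ≤ degF G u₁ := by
      have h : u₁ ∈ Bigv G n := by rw [hBig]; exact Finset.mem_insert_self _ _
      exact (mem_filter.1 h).2
    have hu₂ : 2 * n ≤ degF G u₂ := by
      have h : u₂ ∈ Bigv G n := by
        rw [hBig]; exact Finset.mem_insert_of_mem (Finset.mem_singleton_self u₂)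
      exact (mem_filter.1 h).2
    have hsum : ∑ v ∈ Bigv G n, (degF G v - 2) ≤ Xexc G :=
      Finset.sum_le_sum_of_subset (Finset.subset_univ _)
    rw [hBig, Finset.sum_pair hneu] at hsum
    intro v hv
    rw [hBig] at hv
    rcases Finset.mem_insert.1 hv with rfl | hv
    · omega
    · rw [Finset.mem_singleton] at hv
      subst hv
      omega
  -- unique-lift states have fully unitary multiplicities at their end
  have mlt1 : ∀ {γ : List (L n)} {ℓ : L n} {ε : G.E}, Red γ → γ.getLast? = some ℓ →
      QF p γ = {ε} → ∀ a : L n, mlt p (G.ter ε) a = 1 := by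
    intro γ ℓ ε h1 h2 h3
    have hterB : G.ter ε ∈ Bigv G n :=
      mem_filter.2 ⟨mem_univ _, end_big p hps hn h1 h2 h3⟩
    exact mlt_all_one p (full_of_singleton p hps h1 h2 h3) (hdeg2n _ hterB)
  -- all arcs leaving the end of a unique-lift state (whose own start is big) land big
  have arcBig : ∀ {γ : List (L n)} {ℓ : L n} {ε : G.E}, Red γ → γ.getLast? = some ℓ →
      QF p γ = {ε} → G.ini ε ∈ Bigv G n →
      ∀ α : G.E, G.ini α = G.ter ε → G.ter α ∈ Bigv G n := by
    intro γ ℓ ε h1 h2 h3 h4 α hα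
    have hlabε : p.toE ε = ℓ := QF_label p (h3 ▸ Finset.mem_singleton_self ε) ℓ h2
    by_cases hc : p.toE α = rbar ℓ
    · have : α = G.bar ε := by
        refine mlt_one_unique p (mlt1 h1 h2 h3 (rbar ℓ)) ⟨hα, hc⟩ ⟨ini_bar ε, ?_⟩
        rw [p.map_bar, hlabε]
      rw [this, ter_bar]
      exact h4
    · obtain ⟨α', hQ', hini', hlab', hred', hlast'⟩ :=
        sstate_step p h1 h2 h3 hc (mlt1 h1 h2 h3 _)
      have hne : γ ≠ [] := by rintro rfl; simp at h2
      have hmem : α ∈ QF p (γ ++ [p.toE α]) := by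
        rw [QF_append_singleton p hne h3 _]
        exact mem_filter.2 ⟨mem_univ _, hα, rfl⟩
      rw [hQ', Finset.mem_singleton] at hmem
      subst hmem
      exact mem_filter.2 ⟨mem_univ _, end_big p hps hn hred' hlast' hQ'⟩
  -- the base minimal word and two extensions
  obtain ⟨γ₀, hred₀, hne₀, hcard₀⟩ := mm_mem p hn
  rw [hm] at hcard₀
  obtain ⟨ε₀, hQ₀⟩ := Finset.card_eq_one.1 hcard₀
  obtain ⟨ℓ₀, hlast₀⟩ := Option.isSome_iff_exists.1 (List.getLast?_isSome.2 hne₀)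
  have hv₀B : G.ini ε₀ ∈ Bigv G n ∨ True := Or.inr trivial
  have hterε₀B : G.ter ε₀ ∈ Bigv G n :=
    mem_filter.2 ⟨mem_univ _, end_big p hps hn hred₀ hlast₀ hQ₀⟩
  obtain ⟨c₁, hc₁⟩ : ∃ c₁ : L n, c₁ ≠ rbar ℓ₀ := by
    obtain ⟨c₁, hc₁⟩ := Finset.card_pos.1 (show 0 < (legal (n := n) ℓ₀).card from by
      rw [card_legal]; omega)
    exact ⟨c₁, (mem_filter.1 hc₁).2⟩
  obtain ⟨α₁, hQ₁, hini₁, hlab₁, hred₁, hlast₁⟩ :=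
    sstate_step p hred₀ hlast₀ hQ₀ hc₁ (mlt1 hred₀ hlast₀ hQ₀ _)
  set x₁ := G.ter α₁ with hx₁
  have hx₁B : x₁ ∈ Bigv G n :=
    mem_filter.2 ⟨mem_univ _, end_big p hps hn hred₁ hlast₁ hQ₁⟩
  have hiniα₁B : G.ini α₁ ∈ Bigv G n := hini₁ ▸ hterε₀B
  obtain ⟨c₂, hc₂⟩ : ∃ c₂ : L n, c₂ ≠ rbar c₁ := by
    obtain ⟨c₂, hc₂⟩ := Finset.card_pos.1 (show 0 < (legal (n := n) c₁).card from by
      rw [card_legal]; omega)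
    exact ⟨c₂, (mem_filter.1 hc₂).2⟩
  obtain ⟨α₂, hQ₂, hini₂, hlab₂, hred₂, hlast₂⟩ :=
    sstate_step p hred₁ hlast₁ hQ₁ hc₂ (mlt1 hred₁ hlast₁ hQ₁ _)
  set x₂ := G.ter α₂ with hx₂
  have hx₂B : x₂ ∈ Bigv G n :=
    mem_filter.2 ⟨mem_univ _, end_big p hps hn hred₂ hlast₂ hQ₂⟩
  have hiniα₂ : G.ini α₂ = x₁ := hini₂
  have harcx₂ : ∀ α : G.E, G.ini α = x₂ → G.ter α ∈ Bigv G n :=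
    arcBig hred₂ hlast₂ hQ₂ (hiniα₂ ▸ hx₁B)
  have hmltx₂ : ∀ a : L n, mlt p x₂ a = 1 := mlt1 hred₂ hlast₂ hQ₂
  by_cases hxall : ∀ α : G.E, G.ini α = x₂ → G.ter α = x₂
  · -- x₂ is an isolated component, contradicting connectivity
    have hallx₂ : ∀ x : G.V, x ∈ ({z | z = x₂} : Set G.V) := by
      refine closure hconn _ x₂ rfl ?_
      intro v hv α hα
      rw [Set.mem_setOf_eq] at hv
      rw [hv] at hα
      exact hxall α hα
    have h1 := hallx₂ u₁
    have h2 := hallx₂ u₂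
    rw [Set.mem_setOf_eq] at h1 h2
    exact absurd (h1.trans h2.symm) hneu
  · push_neg at hxall
    obtain ⟨α', hiniα', hterα'⟩ := hxall
    set w := G.ter α' with hw
    have hwB : w ∈ Bigv G n := harcx₂ α' hiniα'
    have hwne : x₂ ≠ w := fun h => hterα' h.symm
    -- Bigv is exactly the pair {x₂, w}
    have hBigPair : Bigv G n = {x₂, w} := by
      refine (Finset.eq_of_subset_of_card_le ?_ ?_).symm
      · intro z hz
        rcases Finset.mem_insert.1 hz with rfl | hz
        · exact hx₂B
        · rw [Finset.mem_singleton] at hz; subst hz; exact hwB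
      · rw [hBig, Finset.card_pair hneu, Finset.card_pair hwne]
    -- w also has unit multiplicities and big-landing arcs
    have hwkey : (∀ a : L n, mlt p w a = 1) ∧
        (∀ α : G.E, G.ini α = w → G.ter α ∈ Bigv G n) := by
      by_cases hc' : p.toE α' = rbar c₂
      · -- α' is the backtrack; w = x₁
        have hα'eq : α' = G.bar α₂ := by
          refine mlt_one_unique p (hmltx₂ (rbar c₂)) ⟨hiniα', hc'⟩ ⟨ini_bar α₂, ?_⟩
          rw [p.map_bar, hlab₂]
        have hwx₁ : w = x₁ := by rw [hw, hα'eq, ter_bar, hiniα₂]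
        rw [hwx₁]
        exact ⟨mlt1 hred₁ hlast₁ hQ₁, arcBig hred₁ hlast₁ hQ₁ hiniα₁B⟩
      · obtain ⟨α'', hQ'', hini'', hlab'', hred'', hlast''⟩ :=
          sstate_step p hred₂ hlast₂ hQ₂ hc' (hmltx₂ _)
        have hmem : α' ∈ QF p ((γ₀ ++ [c₁] ++ [c₂]) ++ [p.toE α']) := by
          rw [QF_append_singleton p (by simp) hQ₂ _]
          exact mem_filter.2 ⟨mem_univ _, hiniα', rfl⟩
        rw [hQ'', Finset.mem_singleton] at hmem
        subst hmem
        exact ⟨mlt1 hred'' hlast'' hQ'', arcBig hred'' hlast'' hQ'' (hini'' ▸ hx₂B)⟩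
    -- closure to the pair
    have hV : ∀ v : G.V, v = x₂ ∨ v = w := by
      have := closure hconn ({z | z = x₂ ∨ z = w} : Set G.V) x₂ (Or.inl rfl) ?_
      · intro v; exact this v
      · intro v hv α hα
        rcases hv with rfl | rfl
        · have := harcx₂ α hα
          rw [hBigPair] at this
          rcases Finset.mem_insert.1 this with h | h
          · exact Or.inl h
          · exact Or.inr (Finset.mem_singleton.1 h)
        · have := hwkey.2 α hα
          rw [hBigPair] at this
          rcases Finset.mem_insert.1 this with h | h
          · exact Or.inl h
          · exact Or.inr (Finset.mem_singleton.1 h)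
    exact coveringOfTwoFull p x₂ w hwne hV
      (fun v a => by rcases hV v with rfl | rfl; exacts [hmltx₂ a, hwkey.1 a])


----------------------------------------------------------------
-- mm = 2 : rigidity of minimal words
----------------------------------------------------------------

lemma eq2_lemma (hps : p.PathSurjective) (hn : 2 ≤ n) (hconn : G.Connected)
    (hcore : ∀ v : G.V, 2 ≤ G.degree v) (hb : G.betti ≤ 2 * (n : ℤ) - 1)
    (hm : mm p = 2) {γ : List (L n)} {ℓ : L n}
    (hred : Red γ) (hlast : γ.getLast? = some ℓ) (hcard : (QF p γ).card = 2) :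
    ((QF p γ).image G.ter).card = 2 ∧
    (∀ v : G.V, v ∉ (QF p γ).image G.ter → degF G v = 2) ∧
    (∀ b : L n, b ≠ rbar ℓ → (QF p (γ ++ [b])).card = 2) ∧
    (∀ v ∈ (QF p γ).image G.ter, mlt p v (rbar ℓ) = 1) := by
  have hne : γ ≠ [] := by rintro rfl; simp at hlast
  have hX : Xexc G ≤ 4 * n - 4 := budget hn hconn hcore hb
  have hdegs : ∀ v : G.V, 2 ≤ degF G v := fun v => by
    rw [degF_eq_degree]; exact hcore v
  set T := (QF p γ).image G.ter with hT
  have hchain := main_chain p hps hn hred hlast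
  rw [hm, hcard] at hchain
  rw [← hT] at hchain
  have hTid : ∑ v ∈ T, degF G v = 2 * T.card + ∑ v ∈ T, (degF G v - 2) := by
    calc ∑ v ∈ T, degF G v = ∑ v ∈ T, (2 + (degF G v - 2)) :=
          Finset.sum_congr rfl fun v _ => by have := hdegs v; omega
      _ = 2 * T.card + ∑ v ∈ T, (degF G v - 2) := by
          rw [Finset.sum_add_distrib, Finset.sum_const, smul_eq_mul, mul_comm]
  have hTX : ∑ v ∈ T, (degF G v - 2) ≤ Xexc G :=
    Finset.sum_le_sum_of_subset (Finset.subset_univ _)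
  have hTle : T.card ≤ 2 := by rw [hT, ← hcard]; exact Finset.card_image_le
  -- equalities
  have hTcard : T.card = 2 := by omega
  have hTXeq : ∑ v ∈ T, (degF G v - 2) = Xexc G := by omega
  have hSum4n : ∑ v ∈ T, degF G v = 4 * n := by omega
  have he3 : ∀ b : L n, b ≠ rbar ℓ → (QF p (γ ++ [b])).card = 2 := by
    intro b hb
    have hsumlegal : ∑ c ∈ legal ℓ, (QF p (γ ++ [c])).card + 2 ≤ 4 * n := by
      have := KCL p hred hlast
      rw [hcard] at this
      rw [← hSum4n]
      exact this
    have hmemb : b ∈ legal ℓ := mem_filter.2 ⟨mem_univ _, hb⟩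
    have hsplit : ∑ c ∈ (legal ℓ).erase b, (QF p (γ ++ [c])).card
        + (QF p (γ ++ [b])).card = ∑ c ∈ legal ℓ, (QF p (γ ++ [c])).card :=
      Finset.sum_erase_add _ _ hmemb
    have hlow : 2 * ((legal ℓ).erase b).card
        ≤ ∑ c ∈ (legal ℓ).erase b, (QF p (γ ++ [c])).card := by
      calc 2 * ((legal ℓ).erase b).card = ∑ _c ∈ (legal ℓ).erase b, 2 := by
            rw [Finset.sum_const, smul_eq_mul, mul_comm]
        _ ≤ _ := by
            refine Finset.sum_le_sum fun c hc => ?_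
            have hc' := (mem_filter.1 (Finset.mem_of_mem_erase hc)).2
            have := mm_le p (red_append hred hlast hc') (by simp)
            omega
    have hbcard : 2 ≤ (QF p (γ ++ [b])).card := by
      have := mm_le p (red_append hred hlast hb) (by simp)
      omega
    have hec : ((legal ℓ).erase b).card = 2 * n - 2 := by
      rw [Finset.card_erase_of_mem hmemb, card_legal]
      omega
    omega
  refine ⟨hTcard, ?_, he3, ?_⟩
  · -- small outside T
    intro v hv
    have h1 : ∑ x ∈ insert v T, (degF G x - 2) ≤ Xexc G :=
      Finset.sum_le_sum_of_subset (Finset.subset_univ _)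
    rw [Finset.sum_insert hv, hTXeq] at h1
    have := hdegs v
    omega
  · -- unit backward multiplicity on T
    intro v hv
    -- lower bound
    have hvlow : 1 ≤ mlt p v (rbar ℓ) := by
      rw [hT, Finset.mem_image] at hv
      obtain ⟨δ, hδ, rfl⟩ := hv
      refine Finset.card_pos.2 ⟨G.bar δ, mem_filter.2 ⟨mem_univ _, ini_bar δ, ?_⟩⟩
      rw [p.map_bar, QF_label p hδ ℓ hlast]
    -- upper bound via exact accounting
    set U : Finset G.E := univ.filter (fun ε => G.ini ε ∈ T) with hU
    have hUcard : U.card = 4 * n := by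
      rw [← hSum4n, hU]
      rw [Finset.card_eq_sum_card_fiberwise (f := fun ε => G.ini ε) (t := T)
        (s := univ.filter (fun ε => G.ini ε ∈ T)) (fun x hx => (mem_filter.1 hx).2)]
      refine Finset.sum_congr rfl fun w hw => ?_
      rw [degF]
      congr 1
      ext ε
      simp only [mem_filter, mem_univ, true_and]
      exact ⟨fun h => h.2, fun h => ⟨h ▸ hw, h⟩⟩
    set A : Finset G.E := (legal ℓ).biUnion (fun b => QF p (γ ++ [b])) with hA
    have hAcard : A.card = 4 * n - 2 := by
      rw [hA, Finset.card_biUnion]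
      · have hall : ∀ b ∈ legal ℓ, (QF p (γ ++ [b])).card = 2 :=
          fun b hb => he3 b (mem_filter.1 hb).2
        rw [Finset.sum_congr rfl hall, Finset.sum_const, card_legal, smul_eq_mul]
        omega
      · intro b hb c hc hbc
        refine Finset.disjoint_left.2 fun ε hεb hεc => ?_
        have h1 := (mem_QF_append p hne hεb).1
        have h2 := (mem_QF_append p hne hεc).1
        exact hbc (h1 ▸ h2 ▸ rfl)
    set W : Finset G.E := univ.filter (fun ε => G.ini ε ∈ T ∧ p.toE ε = rbar ℓ) with hW
    have hWU : W ⊆ U := fun ε hε => mem_filter.2 ⟨mem_univ _, (mem_filter.1 hε).2.1⟩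
    have hAU : A ⊆ U := by
      intro ε hε
      rw [hA, Finset.mem_biUnion] at hε
      obtain ⟨b, _, hεb⟩ := hε
      obtain ⟨-, δ, hδ, hterini⟩ := mem_QF_append p hne hεb
      exact mem_filter.2 ⟨mem_univ _, hT ▸ Finset.mem_image.2 ⟨δ, hδ, hterini⟩⟩
    have hAW : Disjoint A W := by
      refine Finset.disjoint_left.2 fun ε hεA hεW => ?_
      rw [hA, Finset.mem_biUnion] at hεA
      obtain ⟨b, hb, hεb⟩ := hεA
      have h1 := (mem_QF_append p hne hεb).1
      have h2 := (mem_filter.1 hεW).2.2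
      exact (mem_filter.1 hb).2 (h1 ▸ h2 ▸ rfl)
    have hWcard : W.card ≤ 2 := by
      have h1 : A.card + W.card = (A ∪ W).card := (Finset.card_union_of_disjoint hAW).symm
      have h2 : (A ∪ W).card ≤ U.card := Finset.card_le_card (Finset.union_subset hAU hWU)
      omega
    -- W fibers over T are the multiplicity sets
    have hWsum : ∑ w ∈ T, mlt p w (rbar ℓ) = W.card := by
      rw [hW, Finset.card_eq_sum_card_fiberwise (f := fun ε => G.ini ε) (t := T)
        (fun x hx => (mem_filter.1 hx).2.1)]
      refine Finset.sum_congr rfl fun w hw => ?_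
      rw [mlt]
      congr 1
      ext ε
      simp only [mem_filter, mem_univ, true_and]
      constructor
      · rintro ⟨h1, h2⟩; exact ⟨⟨h1 ▸ hw, h2⟩, h1⟩
      · rintro ⟨⟨_, h2⟩, h3⟩; exact ⟨h3, h2⟩
    -- conclude
    have hsplitv : mlt p v (rbar ℓ) + ∑ w ∈ T.erase v, mlt p w (rbar ℓ)
        = ∑ w ∈ T, mlt p w (rbar ℓ) := by
      rw [add_comm]
      exact Finset.sum_erase_add _ _ hv
    have hother : ∀ w ∈ T.erase v, 1 ≤ mlt p w (rbar ℓ) := by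
      intro w hw
      have hw' := Finset.mem_of_mem_erase hw
      rw [hT, Finset.mem_image] at hw'
      obtain ⟨δ, hδ, rfl⟩ := hw'
      refine Finset.card_pos.2 ⟨G.bar δ, mem_filter.2 ⟨mem_univ _, ini_bar δ, ?_⟩⟩
      rw [p.map_bar, QF_label p hδ ℓ hlast]
    have hotherlow : (T.erase v).card ≤ ∑ w ∈ T.erase v, mlt p w (rbar ℓ) := by
      calc (T.erase v).card = ∑ _w ∈ T.erase v, 1 := by
            rw [Finset.sum_const, smul_eq_mul, mul_one]
        _ ≤ _ := Finset.sum_le_sum hother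
    have hecard : (T.erase v).card = 1 := by
      rw [Finset.card_erase_of_mem hv, hTcard]
    omega


----------------------------------------------------------------
-- mm = 2 : main case
----------------------------------------------------------------

lemma case_mm_two (hps : p.PathSurjective) (hn : 2 ≤ n) (hconn : G.Connected)
    (hcore : ∀ v : G.V, 2 ≤ G.degree v) (hb : G.betti ≤ 2 * (n : ℤ) - 1)
    (hm : mm p = 2) :
    p.IsCovering ∧ ∀ v : (Rose n).V, Nat.card {u : G.V // p.toV u = v} = 2 := by
  obtain ⟨γs, hreds, hnes, hcards⟩ := mm_mem p hn
  rw [hm] at hcards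
  obtain ⟨ℓs, hlasts⟩ := Option.isSome_iff_exists.1 (List.getLast?_isSome.2 hnes)
  have hdegs : ∀ v : G.V, 2 ≤ degF G v := fun v => by
    rw [degF_eq_degree]; exact hcore v
  -- coverage: minimal words with arbitrary prescribed last letter
  have hcover : ∀ c : L n, ∃ γ : List (L n),
      Red γ ∧ γ.getLast? = some c ∧ (QF p γ).card = 2 := by
    intro c
    obtain ⟨b, hb1, hb2⟩ : ∃ b : L n, b ≠ rbar ℓs ∧ b ≠ rbar c := by
      have hpos : 0 < ((univ.erase (rbar ℓs)).erase (rbar c)).card := by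
        have h1 := Finset.pred_card_le_card_erase
          (s := univ.erase (rbar ℓs)) (a := rbar c)
        have h2 : (univ.erase (rbar (n := n) ℓs)).card = 2 * n - 1 := by
          rw [Finset.card_erase_of_mem (mem_univ _), Finset.card_univ, card_L]
        omega
      obtain ⟨b, hb⟩ := Finset.card_pos.1 hpos
      have h1 := Finset.ne_of_mem_erase hb
      have h2 := Finset.ne_of_mem_erase (Finset.mem_of_mem_erase hb)
      exact ⟨b, h2, h1⟩
    have hcard1 : (QF p (γs ++ [b])).card = 2 :=
      (eq2_lemma p hps hn hconn hcore hb hm hreds hlasts hcards).2.2.1 b hb1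
    have hred1 : Red (γs ++ [b]) := red_append hreds hlasts hb1
    have hcb : c ≠ rbar b := ne_rbar_symm hb2
    have hcard2 : (QF p ((γs ++ [b]) ++ [c])).card = 2 :=
      (eq2_lemma p hps hn hconn hcore hb hm hred1 (getLast?_app _ _) hcard1).2.2.1 c hcb
    exact ⟨(γs ++ [b]) ++ [c], red_append hred1 (getLast?_app _ _) hcb,
      getLast?_app _ _, hcard2⟩
  -- the junction set
  set J : Finset G.V := univ.filter (fun v => 3 ≤ degF G v) with hJdef
  have hJT : ∀ {γ : List (L n)} {ℓ : L n}, Red γ → γ.getLast? = some ℓ →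
      (QF p γ).card = 2 → J ⊆ (QF p γ).image G.ter := by
    intro γ ℓ h1 h2 h3 v hv
    by_contra hvT
    have := (eq2_lemma p hps hn hconn hcore hb hm h1 h2 h3).2.1 v hvT
    have h3v := (mem_filter.1 hv).2
    omega
  have hJle : J.card ≤ 2 := by
    have h1 := Finset.card_le_card (hJT hreds hlasts hcards)
    have h2 := (eq2_lemma p hps hn hconn hcore hb hm hreds hlasts hcards).1
    omega
  have hJne : 1 ≤ J.card := by
    by_contra hJe
    push_neg at hJe
    have hJ0 : J = ∅ := Finset.card_eq_zero.1 (by omega)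
    have hall2 : ∀ v : G.V, degF G v ≤ 2 := by
      intro v
      by_contra hv
      push_neg at hv
      have : v ∈ J := mem_filter.2 ⟨mem_univ _, by omega⟩
      rw [hJ0] at this
      exact absurd this (Finset.notMem_empty v)
    have hchain := main_chain p hps hn hreds hlasts
    rw [hm, hcards] at hchain
    have hTle : ((QF p γs).image G.ter).card ≤ 2 := by
      rw [← hcards]; exact Finset.card_image_le
    have hsumle : ∑ v ∈ (QF p γs).image G.ter, degF G v
        ≤ 2 * ((QF p γs).image G.ter).card := by
      calc ∑ v ∈ (QF p γs).image G.ter, degF G v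
          ≤ ∑ _v ∈ (QF p γs).image G.ter, 2 := Finset.sum_le_sum fun v _ => hall2 v
        _ = _ := by rw [Finset.sum_const, smul_eq_mul, mul_comm]
    omega
  interval_cases hJcard : J.card
  · -- |J| = 1 : contradiction
    exfalso
    obtain ⟨u, hJu⟩ := Finset.card_eq_one.1 hJcard
    have hmlt_u : ∀ a : L n, mlt p u a = 1 := by
      intro a
      obtain ⟨γc, h1, h2, h3⟩ := hcover (rbar a)
      have e4 := (eq2_lemma p hps hn hconn hcore hb hm h1 h2 h3).2.2.2
      have huT : u ∈ (QF p γc).image G.ter :=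
        hJT h1 h2 h3 (hJu ▸ Finset.mem_singleton_self u)
      have := e4 u huT
      rwa [rbar_rbar] at this
    have hdegu : degF G u = 2 * n := by
      rw [← sum_mlt p u]
      rw [Finset.sum_congr rfl (fun a _ => hmlt_u a), Finset.sum_const, Finset.card_univ,
        card_L, smul_eq_mul, mul_one]
    -- T(γs) = {u, w} with w of degree 2
    have huT : u ∈ (QF p γs).image G.ter :=
      hJT hreds hlasts hcards (hJu ▸ Finset.mem_singleton_self u)
    have hTcard : ((QF p γs).image G.ter).card = 2 :=
      (eq2_lemma p hps hn hconn hcore hb hm hreds hlasts hcards).1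
    obtain ⟨w, hw⟩ := Finset.card_eq_one.1
      (show (((QF p γs).image G.ter).erase u).card = 1 by
        rw [Finset.card_erase_of_mem huT, hTcard])
    have hwmem : w ∈ ((QF p γs).image G.ter).erase u := hw ▸ Finset.mem_singleton_self w
    have hwne : w ≠ u := Finset.ne_of_mem_erase hwmem
    have hwT : w ∈ (QF p γs).image G.ter := Finset.mem_of_mem_erase hwmem
    have hwdeg : degF G w = 2 := by
      have hwJ : w ∉ J := by
        rw [hJu]
        simpa using hwne
      have : ¬ 3 ≤ degF G w := fun h => hwJ (mem_filter.2 ⟨mem_univ _, h⟩)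
      have := hdegs w
      omega
    have hTpair : (QF p γs).image G.ter = {u, w} := by
      have hsub : {u, w} ⊆ (QF p γs).image G.ter := by
        intro z hz
        rcases Finset.mem_insert.1 hz with rfl | hz
        · exact huT
        · rw [Finset.mem_singleton] at hz; subst hz; exact hwT
      refine (Finset.eq_of_subset_of_card_le hsub ?_).symm
      rw [hTcard, Finset.card_pair (fun h => hwne h.symm)]
    have hchain := main_chain p hps hn hreds hlasts
    rw [hm, hcards, hTpair, Finset.sum_pair (fun h => hwne h.symm)] at hchain
    omega
  · -- |J| = 2 : the covering
    obtain ⟨u₁, u₂, hneu, hJ⟩ := Finset.card_eq_two.1 hJcard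
    have hu₁J : u₁ ∈ J := by rw [hJ]; exact Finset.mem_insert_self _ _
    have hu₂J : u₂ ∈ J := by
      rw [hJ]; exact Finset.mem_insert_of_mem (Finset.mem_singleton_self _)
    have hTJ : ∀ {γ : List (L n)} {ℓ : L n}, Red γ → γ.getLast? = some ℓ →
        (QF p γ).card = 2 → (QF p γ).image G.ter = J := by
      intro γ ℓ h1 h2 h3
      refine (Finset.eq_of_subset_of_card_le (hJT h1 h2 h3) ?_).symm
      rw [(eq2_lemma p hps hn hconn hcore hb hm h1 h2 h3).1, hJcard]
    have hmltJ : ∀ v ∈ J, ∀ a : L n, mlt p v a = 1 := by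
      intro v hv a
      obtain ⟨γc, h1, h2, h3⟩ := hcover (rbar a)
      have e4 := (eq2_lemma p hps hn hconn hcore hb hm h1 h2 h3).2.2.2
      have hvT : v ∈ (QF p γc).image G.ter := by rw [hTJ h1 h2 h3]; exact hv
      have := e4 v hvT
      rwa [rbar_rbar] at this
    have harc : ∀ α : G.E, G.ini α ∈ J → G.ter α ∈ J := by
      intro α hα
      obtain ⟨γc, h1, h2, h3⟩ := hcover (p.toE α)
      have hne : γc ≠ [] := by rintro rfl; simp at h2
      have hcc : (p.toE α) ≠ rbar (p.toE α) := fun h => (Rose n).bar_ne (p.toE α) h.symm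
      have hred' : Red (γc ++ [p.toE α]) := red_append h1 h2 hcc
      have hcard' : (QF p (γc ++ [p.toE α])).card = 2 :=
        (eq2_lemma p hps hn hconn hcore hb hm h1 h2 h3).2.2.1 _ hcc
      have hmem : α ∈ QF p (γc ++ [p.toE α]) := by
        rw [QF_append p γc hne _]
        refine mem_filter.2 ⟨mem_univ _, rfl, ?_⟩
        have : G.ini α ∈ (QF p γc).image G.ter := by rw [hTJ h1 h2 h3]; exact hα
        obtain ⟨δ, hδ, hter⟩ := Finset.mem_image.1 this
        exact ⟨δ, hδ, hter⟩
      have : G.ter α ∈ (QF p (γc ++ [p.toE α])).image G.ter :=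
        Finset.mem_image_of_mem _ hmem
      rwa [hTJ hred' (getLast?_app _ _) hcard'] at this
    have hV : ∀ v : G.V, v = u₁ ∨ v = u₂ := by
      have hcl := closure hconn ({z | z = u₁ ∨ z = u₂} : Set G.V) u₁ (Or.inl rfl) ?_
      · exact fun v => hcl v
      · intro v hv α hα
        have hvJ : v ∈ J := by
          rcases hv with rfl | rfl
          exacts [hu₁J, hu₂J]
        have := harc α (hα ▸ hvJ)
        rw [hJ] at this
        rcases Finset.mem_insert.1 this with h | h
        · exact Or.inl h
        · exact Or.inr (Finset.mem_singleton.1 h)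
    exact coveringOfTwoFull p u₁ u₂ hneu hV
      (fun v a => by rcases hV v with rfl | rfl; exacts [hmltJ _ hu₁J a, hmltJ _ hu₂J a])


----------------------------------------------------------------
-- grand assembly
----------------------------------------------------------------

theorem main (hn : 2 ≤ n) (hconn : G.Connected) (hcore : ∀ v : G.V, 2 ≤ G.degree v)
    (hps : p.PathSurjective)
    (hnolift : ¬ ∃ f : MGraphHom (Rose n) G,
      (∀ x, p.toV (f.toV x) = x) ∧ (∀ e, p.toE (f.toE e) = e))
    (hb : G.betti ≤ 2 * (n : ℤ) - 1) :
    p.IsCovering ∧ ∀ v : (Rose n).V, Nat.card {u : G.V // p.toV u = v} = 2 := by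
  have hm12 : mm p = 1 ∨ mm p = 2 := by
    have h1 := mm_pos p hps hn
    have h2 := mm_le_two p hps hn hconn hcore hb
    omega
  rcases hm12 with hm | hm
  · have hX : Xexc G ≤ 4 * n - 4 := budget hn hconn hcore hb
    have hBle := Bigv_card_le_two (G := G) hn hX
    have hBge : 1 ≤ (Bigv G n).card := by
      obtain ⟨γ₀, hred₀, hne₀, hcard₀⟩ := mm_mem p hn
      rw [hm] at hcard₀
      obtain ⟨ε₀, hQ₀⟩ := Finset.card_eq_one.1 hcard₀
      obtain ⟨ℓ₀, hlast₀⟩ := Option.isSome_iff_exists.1 (List.getLast?_isSome.2 hne₀)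
      exact Finset.card_pos.2 ⟨G.ter ε₀,
        mem_filter.2 ⟨mem_univ _, end_big p hps hn hred₀ hlast₀ hQ₀⟩⟩
    interval_cases hBc : (Bigv G n).card
    · obtain ⟨u, hu⟩ := Finset.card_eq_one.1 hBc
      exact (case_mm_one_bigone p hps hn hconn hcore hb hnolift hm u hu).elim
    · obtain ⟨u₁, u₂, hneu, hB⟩ := Finset.card_eq_two.1 hBc
      exact case_mm_one_bigtwo p hps hn hconn hcore hb hm u₁ u₂ hneu hB
  · exact case_mm_two p hps hn hconn hcore hb hm

end TwoSheeted

end TwoSheetedDev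

/-- a path-surjective morphism from a finite connected core graph
of Betti number at most `2n-1` to the rose `R_n` (with `n ≥ 2`), such that
`R_n` does not lift, is a 2-sheeted covering map. -/
theorem path_surjective_is_two_sheeted_cover (n : ℕ) (hn : 2 ≤ n)
    (G : MGraph) [Finite G.V] [Finite G.E]
    (hconn : G.Connected) (hcore : ∀ v : G.V, 2 ≤ G.degree v)
    (p : MGraphHom G (Rose n)) (hps : p.PathSurjective)
    (hnolift : ¬ ∃ f : MGraphHom (Rose n) G,
      (∀ x, p.toV (f.toV x) = x) ∧ (∀ e, p.toE (f.toE e) = e))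
    (hb : G.betti ≤ 2 * (n : ℤ) - 1) :
    p.IsCovering ∧ ∀ v : (Rose n).V, Nat.card {u : G.V // p.toV u = v} = 2 := by
  classical
  exact TwoSheeted.main p hn hconn hcore hps hnolift hb
end

section
/- Let n ≥ 2 and let p : Γ → R_n be a path-surjective morphism from a finite graph Γ. For each petal e of R_n let Γ_e be the subgraph of Γ consisting of edges mapping to e^{±1}. Then: (1) b(Γ_e) ≥ 1 for every petal e; and (2) if additionally b(Γ) ≤ 2n − 1, then there exists a petal e with b(Γ_e) = 1. -/
/-- The subgraph `Γ_S` of `Γ` spanned by the edges mapping into the set `S` of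
petals of the rose (together with all vertices of `Γ`; isolated vertices do not
affect the Betti number). -/
def petalSub {n : ℕ} (G : MGraph) (p : MGraphHom G (Rose n)) (S : Set (Fin n)) : MGraph where
  V := G.V
  E := {e : G.E // (p.toE e).1 ∈ S}
  bar e := ⟨G.bar e.1, by rw [p.map_bar]; exact e.2⟩
  bar_bar e := Subtype.ext (G.bar_bar e.1)
  bar_ne e h := G.bar_ne e.1 (congrArg Subtype.val h)
  ini e := G.ini e.1


namespace PetalProof
variable {G : MGraph}

/-- Bar-closed edge sets. -/
def BarClosed (G : MGraph) (A : Set G.E) : Prop := ∀ e ∈ A, G.bar e ∈ A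

def adjOn (G : MGraph) (A : Set G.E) (u v : G.V) : Prop :=
  ∃ e ∈ A, G.ini e = u ∧ G.ter e = v

def conn (G : MGraph) (A : Set G.E) : G.V → G.V → Prop := Relation.EqvGen (adjOn G A)

def connSetoid (G : MGraph) (A : Set G.E) : Setoid G.V :=
  ⟨conn G A, Relation.EqvGen.is_equivalence _⟩

noncomputable def cc (G : MGraph) (A : Set G.E) : ℕ :=
  Nat.card (Quotient (connSetoid G A))

noncomputable def bettiOn (G : MGraph) (A : Set G.E) : ℤ :=
  ((A.ncard / 2 : ℕ) : ℤ) - (Nat.card G.V : ℤ) + (cc G A : ℤ)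

theorem conn_refl (A : Set G.E) (x : G.V) : conn G A x x := Relation.EqvGen.refl x
theorem conn_symm {A : Set G.E} {x y} (h : conn G A x y) : conn G A y x :=
  Relation.EqvGen.symm _ _ h
theorem conn_trans {A : Set G.E} {x y z} (h : conn G A x y) (h' : conn G A y z) :
    conn G A x z := Relation.EqvGen.trans _ _ _ h h'

theorem conn_mono {A B : Set G.E} (h : A ⊆ B) {x y} (hc : conn G A x y) : conn G B x y := by
  refine Relation.EqvGen.mono ?_ _ _ hc
  rintro u v ⟨e, he, h1, h2⟩
  exact ⟨e, h he, h1, h2⟩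

theorem conn_of_mem {A : Set G.E} {e : G.E} (he : e ∈ A) :
    conn G A (G.ini e) (G.ter e) := Relation.EqvGen.rel _ _ ⟨e, he, rfl, rfl⟩

theorem cc_mono {A B : Set G.E} [Finite G.V] (h : A ⊆ B) : cc G B ≤ cc G A := by
  haveI : Finite (Quotient (connSetoid G A)) := Quotient.finite _
  refine Nat.card_le_card_of_surjective
    (fun q => Quotient.liftOn q (fun x => (Quotient.mk (connSetoid G B) x))
      (fun a b hab => Quotient.sound (conn_mono h hab))) ?_
  intro q
  obtain ⟨x, rfl⟩ := Quotient.exists_rep q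
  exact ⟨Quotient.mk _ x, rfl⟩

theorem conn_empty {x y : G.V} (h : conn G ∅ x y) : x = y := by
  induction h with
  | rel u v huv => obtain ⟨e, he, -⟩ := huv; exact absurd he (Set.notMem_empty e)
  | refl => rfl
  | symm _ _ _ ih => exact ih.symm
  | trans _ _ _ _ _ ih1 ih2 => exact ih1.trans ih2

theorem cc_empty [Finite G.V] : cc G (∅ : Set G.E) = Nat.card G.V := by
  refine Nat.card_congr (Equiv.ofBijective (Quotient.mk (connSetoid G ∅)) ⟨?_, ?_⟩).symm
  · intro a b hab
    exact conn_empty (Quotient.exact hab)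
  · exact Quotient.exists_rep

end PetalProof

namespace PetalProof
variable {G : MGraph}

section Pair
variable (A : Set G.E) (e : G.E)

/-- The edge pair of `e`. -/
def pr (G : MGraph) (e : G.E) : Set G.E := {e, G.bar e}

theorem conn_pair_iff {A : Set G.E} {e : G.E} {x y : G.V} :
    conn G (A ∪ pr G e) x y ↔ conn G A x y ∨
      (conn G A x (G.ini e) ∧ conn G A (G.ter e) y) ∨
      (conn G A x (G.ter e) ∧ conn G A (G.ini e) y) := by
  constructor
  · intro h
    induction h with
    | rel u v huv =>
      obtain ⟨f, hf, h1, h2⟩ := huv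
      rcases hf with hf | hf | hf
      · exact Or.inl (Relation.EqvGen.rel _ _ ⟨f, hf, h1, h2⟩)
      · subst hf; subst h1; subst h2
        exact Or.inr (Or.inl ⟨conn_refl _ _, conn_refl _ _⟩)
      · rcases hf with rfl
        subst h1; subst h2
        refine Or.inr (Or.inr ⟨?_, ?_⟩)
        · show conn G A (G.ini (G.bar e)) (G.ter e); exact conn_refl _ _
        · show conn G A (G.ini e) (G.ter (G.bar e))
          rw [MGraph.ter, G.bar_bar]; exact conn_refl _ _
    | refl u => exact Or.inl (conn_refl _ _)
    | symm u v _ ih =>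
      rcases ih with h | ⟨h1, h2⟩ | ⟨h1, h2⟩
      · exact Or.inl (conn_symm h)
      · exact Or.inr (Or.inr ⟨conn_symm h2, conn_symm h1⟩)
      · exact Or.inr (Or.inl ⟨conn_symm h2, conn_symm h1⟩)
    | trans u v w _ _ ih1 ih2 =>
      rcases ih1 with h | ⟨h1, h2⟩ | ⟨h1, h2⟩ <;>
        rcases ih2 with h' | ⟨h1', h2'⟩ | ⟨h1', h2'⟩
      · exact Or.inl (conn_trans h h')
      · exact Or.inr (Or.inl ⟨conn_trans h h1', h2'⟩)
      · exact Or.inr (Or.inr ⟨conn_trans h h1', h2'⟩)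
      · exact Or.inr (Or.inl ⟨h1, conn_trans h2 h'⟩)
      · exact Or.inr (Or.inl ⟨h1, h2'⟩)
      · exact Or.inl (conn_trans h1 h2')
      · exact Or.inr (Or.inr ⟨h1, conn_trans h2 h'⟩)
      · exact Or.inl (conn_trans h1 h2')
      · exact Or.inr (Or.inr ⟨h1, h2'⟩)
  · have hsub : A ⊆ A ∪ pr G e := Set.subset_union_left
    have hedge : conn G (A ∪ pr G e) (G.ini e) (G.ter e) :=
      conn_of_mem (Set.mem_union_right _ (Or.inl rfl))
    rintro (h | ⟨h1, h2⟩ | ⟨h1, h2⟩)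
    · exact conn_mono hsub h
    · exact conn_trans (conn_mono hsub h1) (conn_trans hedge (conn_mono hsub h2))
    · exact conn_trans (conn_mono hsub h1)
        (conn_trans (conn_symm hedge) (conn_mono hsub h2))

theorem cc_pair_conn [Finite G.V] {A : Set G.E} {e : G.E}
    (h : conn G A (G.ini e) (G.ter e)) : cc G (A ∪ pr G e) = cc G A := by
  have hrel : conn G (A ∪ pr G e) = conn G A := by
    funext x y
    apply propext
    rw [conn_pair_iff]
    constructor
    · rintro (h' | ⟨h1, h2⟩ | ⟨h1, h2⟩)
      · exact h'
      · exact conn_trans h1 (conn_trans h h2)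
      · exact conn_trans h1 (conn_trans (conn_symm h) h2)
    · exact Or.inl
  have hs : connSetoid G (A ∪ pr G e) = connSetoid G A :=
    Setoid.ext fun x y => iff_of_eq (congrFun (congrFun hrel x) y)
  unfold cc
  rw [hs]

end Pair
end PetalProof

namespace PetalProof
variable {G : MGraph}

theorem cc_pair_not_conn [Finite G.V] {A : Set G.E} {e : G.E}
    (hnc : ¬ conn G A (G.ini e) (G.ter e)) :
    cc G A = cc G (A ∪ pr G e) + 1 := by
  classical
  set u := G.ini e with hu
  set v := G.ter e with hv
  set sA := connSetoid G A with hsA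
  set sA' := connSetoid G (A ∪ pr G e) with hsA'
  have key : ∀ x y, conn G (A ∪ pr G e) x y ↔ conn G A x y ∨
      (conn G A x u ∧ conn G A v y) ∨ (conn G A x v ∧ conn G A u y) :=
    fun x y => conn_pair_iff
  -- the collapsing map
  let f : G.V → Quotient sA := fun x =>
    if conn G A x v then Quotient.mk sA u else Quotient.mk sA x
  have hf_ne : ∀ x, f x ≠ Quotient.mk sA v := by
    intro x h
    by_cases hxv : conn G A x v
    · simp only [f, if_pos hxv] at h
      exact hnc (Quotient.exact h)
    · simp only [f, if_neg hxv] at h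
      exact hxv (Quotient.exact h)
  have hf_wd : ∀ x y, conn G (A ∪ pr G e) x y → f x = f y := by
    intro x y hxy
    show (if conn G A x v then Quotient.mk sA u else Quotient.mk sA x)
      = (if conn G A y v then Quotient.mk sA u else Quotient.mk sA y)
    rcases (key x y).1 hxy with h | ⟨h1, h2⟩ | ⟨h1, h2⟩
    · by_cases hyv : conn G A y v
      · rw [if_pos (conn_trans h hyv), if_pos hyv]
      · rw [if_neg (fun hxv => hyv (conn_trans (conn_symm h) hxv)), if_neg hyv]
        exact Quotient.sound h
    · have hxv : ¬ conn G A x v := fun hxv =>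
        hnc (conn_trans (conn_symm h1) hxv)
      rw [if_neg hxv, if_pos (conn_symm h2)]
      exact Quotient.sound h1
    · have hyv : ¬ conn G A y v := fun hyv =>
        hnc (conn_trans h2 hyv)
      rw [if_pos h1, if_neg hyv]
      exact Quotient.sound h2
  -- forward map
  let F : Quotient sA' → {z : Quotient sA // z ≠ Quotient.mk sA v} :=
    Quotient.lift (fun x => (⟨f x, hf_ne x⟩ : {z : Quotient sA // z ≠ Quotient.mk sA v}))
      (fun x y hxy => Subtype.ext (hf_wd x y hxy))
  -- canonical map
  let c : Quotient sA → Quotient sA' :=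
    Quotient.lift (Quotient.mk sA')
      (fun x y hxy => Quotient.sound (conn_mono Set.subset_union_left hxy))
  let Ginv : {z : Quotient sA // z ≠ Quotient.mk sA v} → Quotient sA' := fun z => c z.1
  have hedge' : conn G (A ∪ pr G e) u v :=
    conn_of_mem (Set.mem_union_right _ (Or.inl rfl))
  have hFG : Function.LeftInverse Ginv F := by
    rintro q
    induction q using Quotient.inductionOn with
    | h x =>
      show c (f x) = Quotient.mk sA' x
      by_cases hxv : conn G A x v
      · simp only [f, if_pos hxv]
        show Quotient.mk sA' u = Quotient.mk sA' x
        exact Quotient.sound (conn_trans hedge'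
          (conn_mono Set.subset_union_left (conn_symm hxv)))
      · simp only [f, if_neg hxv]; rfl
  have hGF : Function.RightInverse Ginv F := by
    rintro ⟨z, hz⟩
    induction z using Quotient.inductionOn with
    | h x =>
      have hxv : ¬ conn G A x v := fun h => hz (Quotient.sound h)
      show F (Quotient.mk sA' x) = _
      simp only [F, Quotient.lift_mk]
      exact Subtype.ext (by simp only [f, if_neg hxv])
  have hequiv : Quotient sA' ≃ {z : Quotient sA // z ≠ Quotient.mk sA v} :=
    ⟨F, Ginv, hFG, hGF⟩
  haveI : Finite (Quotient sA) := Quotient.finite _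
  haveI := Fintype.ofFinite (Quotient sA)
  have h1 : Nat.card (Quotient sA') = Fintype.card (Quotient sA) - 1 := by
    rw [Nat.card_congr hequiv, Nat.card_eq_fintype_card]
    have : Fintype.card {z : Quotient sA // z ≠ Quotient.mk sA v}
        = Fintype.card {z : Quotient sA // ¬ z = Quotient.mk sA v} := rfl
    rw [this, Fintype.card_subtype_compl, Fintype.card_subtype_eq]
  have h2 : 1 ≤ Fintype.card (Quotient sA) :=
    Fintype.card_pos_iff.2 ⟨Quotient.mk sA v⟩
  have h3 : cc G A = Fintype.card (Quotient sA) := Nat.card_eq_fintype_card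
  have h4 : cc G (A ∪ pr G e) = Nat.card (Quotient sA') := rfl
  rw [h3, h4, h1]
  omega

end PetalProof

namespace PetalProof
variable {G : MGraph}

theorem pr_subset {A : Set G.E} (hA : BarClosed G A) {e : G.E} (he : e ∈ A) :
    pr G e ⊆ A := by
  rintro f (rfl | rfl)
  · exact he
  · exact hA e he

theorem barClosed_diff_pr {A : Set G.E} (hA : BarClosed G A) (e : G.E) :
    BarClosed G (A \ pr G e) := by
  rintro f ⟨hf, hfp⟩
  refine ⟨hA f hf, ?_⟩
  simp only [pr, Set.mem_insert_iff, Set.mem_singleton_iff] at hfp ⊢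
  push_neg at hfp ⊢
  refine ⟨fun h => hfp.2 (by rw [← h, G.bar_bar]), fun h => hfp.1 ?_⟩
  have := congrArg G.bar h
  rwa [G.bar_bar, G.bar_bar] at this

theorem diff_pr_union {A : Set G.E} (hA : BarClosed G A) {e : G.E} (he : e ∈ A) :
    (A \ pr G e) ∪ pr G e = A :=
  Set.diff_union_of_subset (pr_subset hA he)

theorem ncard_pr (e : G.E) : (pr G e).ncard = 2 :=
  Set.ncard_pair (fun h => G.bar_ne e h.symm)

theorem ncard_diff_pr [Finite G.E] {A : Set G.E} (hA : BarClosed G A) {e : G.E} (he : e ∈ A) :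
    (A \ pr G e).ncard + 2 = A.ncard := by
  rw [Set.ncard_diff (pr_subset hA he) (Set.toFinite _), ncard_pr]
  have h2 : 2 ≤ A.ncard := by
    rw [← ncard_pr (G := G) e]
    exact Set.ncard_le_ncard (pr_subset hA he) (Set.toFinite A)
  omega

theorem even_ncard [Finite G.E] (A : Set G.E) (hA : BarClosed G A) : Even A.ncard := by
  suffices H : ∀ n (A : Set G.E), BarClosed G A → A.ncard = n → Even A.ncard from
    H A.ncard A hA rfl
  intro n
  induction n using Nat.strong_induction_on with
  | _ n ih =>
  intro A hA hcard
  rcases Set.eq_empty_or_nonempty A with rfl | ⟨e, he⟩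
  · simp
  · have hd := ncard_diff_pr hA he
    obtain ⟨k, hk⟩ := ih (A \ pr G e).ncard (by omega) _ (barClosed_diff_pr hA e) rfl
    exact ⟨k + 1, by omega⟩

theorem cc_nonneg_ineq [Finite G.V] [Finite G.E] (A : Set G.E) (hA : BarClosed G A) :
    Nat.card G.V ≤ cc G A + A.ncard / 2 := by
  suffices H : ∀ n (A : Set G.E), BarClosed G A → A.ncard = n →
      Nat.card G.V ≤ cc G A + A.ncard / 2 from H A.ncard A hA rfl
  intro n
  induction n using Nat.strong_induction_on with
  | _ n ih =>
  intro A hA hcard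
  rcases Set.eq_empty_or_nonempty A with rfl | ⟨e, he⟩
  · rw [cc_empty]; omega
  · have hd := ncard_diff_pr hA he
    have hA' := barClosed_diff_pr hA e
    have IH := ih (A \ pr G e).ncard (by omega) _ hA' rfl
    have hun := diff_pr_union hA he
    by_cases hc : conn G (A \ pr G e) (G.ini e) (G.ter e)
    · have h1 := cc_pair_conn hc
      rw [hun] at h1
      have h2 : cc G A ≤ cc G (A \ pr G e) := by omega
      omega
    · have h1 := cc_pair_not_conn hc
      rw [hun] at h1
      omega

theorem cc_subadd [Finite G.V] [Finite G.E] (A : Set G.E) (hA : BarClosed G A)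
    (B : Set G.E) (hB : BarClosed G B) :
    cc G B + cc G A ≤ Nat.card G.V + cc G (A ∪ B) := by
  suffices H : ∀ n (A : Set G.E), BarClosed G A → A.ncard = n →
      cc G B + cc G A ≤ Nat.card G.V + cc G (A ∪ B) from H A.ncard A hA rfl
  intro n
  induction n using Nat.strong_induction_on with
  | _ n ih =>
  intro A hA hcard
  rcases Set.eq_empty_or_nonempty A with rfl | ⟨e, he⟩
  · rw [cc_empty, Set.empty_union]; omega
  · have hd := ncard_diff_pr hA he
    set A' := A \ pr G e with hA'def
    have hA' := barClosed_diff_pr hA e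
    have IH := ih A'.ncard (by omega) A' hA' rfl
    have hun : A' ∪ pr G e = A := diff_pr_union hA he
    have hunB : (A' ∪ B) ∪ pr G e = A ∪ B := by
      rw [Set.union_right_comm, hun]
    by_cases hc : conn G (A' ∪ B) (G.ini e) (G.ter e)
    · have h1 := cc_pair_conn hc
      rw [hunB] at h1
      have h2 : cc G A ≤ cc G A' := by
        rw [← hun]; exact cc_mono Set.subset_union_left
      omega
    · have hcA : ¬ conn G A' (G.ini e) (G.ter e) :=
        fun h => hc (conn_mono Set.subset_union_left h)
      have h1 := cc_pair_not_conn hc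
      rw [hunB] at h1
      have h2 := cc_pair_not_conn hcA
      rw [hun] at h2
      omega

end PetalProof

namespace PetalProof
variable {G : MGraph}

theorem bettiOn_nonneg [Finite G.V] [Finite G.E] (A : Set G.E) (hA : BarClosed G A) :
    0 ≤ bettiOn G A := by
  have := cc_nonneg_ineq A hA
  unfold bettiOn
  push_cast
  omega

theorem betti_ge_one [Finite G.V] [Finite G.E] (A : Set G.E) (hA : BarClosed G A)
    (β : List G.E) (hred : G.IsReducedPath β) (hmem : ∀ f ∈ β, f ∈ A)
    (hlen : Nat.card G.V < β.length) : 1 ≤ bettiOn G A := by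
  classical
  set L := β.length with hL
  have hne : β ≠ [] := by
    intro h; rw [h] at hL; simp at hL; omega
  have hlast : L - 1 < L := by omega
  set x : ℕ → G.V := fun j =>
    if h : j < L then G.ini (β.get ⟨j, h⟩) else G.ter (β.get ⟨L - 1, hlast⟩) with hx
  have hx_lt : ∀ j (h : j < L), x j = G.ini (β.get ⟨j, h⟩) := fun j h => dif_pos h
  have hchain := List.isChain_iff_getElem.1 hred
  have hx_succ : ∀ j (h : j < L), x (j + 1) = G.ter (β.get ⟨j, h⟩) := by
    intro j h
    rcases Nat.lt_or_ge (j + 1) L with h' | h'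
    · rw [hx_lt (j + 1) h']
      exact ((hchain j (by omega)).1).symm
    · have h1 : x (j + 1) = G.ter (β.get ⟨L - 1, hlast⟩) := dif_neg (by omega)
      rw [h1]
      have hfin : (⟨L - 1, hlast⟩ : Fin L) = ⟨j, h⟩ := Fin.ext (show L - 1 = j by omega)
      rw [hfin]
  -- pigeonhole
  have hpig : ∃ a b : ℕ, a < b ∧ b ≤ L ∧ x a = x b := by
    by_contra hcon
    push_neg at hcon
    have hinj : Function.Injective (fun j : Fin (L + 1) => x j.val) := by
      intro a b hab
      by_contra hne'
      rcases Nat.lt_or_ge a.val b.val with hlt | hge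
      · exact hcon a.val b.val hlt (by omega) hab
      · have : b.val < a.val := by
          rcases Nat.lt_or_ge b.val a.val with h | h
          · exact h
          · exact absurd (Fin.ext (by omega)) hne'
        exact hcon b.val a.val this (by omega) hab.symm
    have hcard := Nat.card_le_card_of_injective _ hinj
    rw [Nat.card_eq_fintype_card, Fintype.card_fin] at hcard
    omega
  -- minimal gap
  set S : Set ℕ := {d | 0 < d ∧ ∃ a, a + d ≤ L ∧ x a = x (a + d)} with hS
  have hSne : S.Nonempty := by
    obtain ⟨a, b, h1, h2, h3⟩ := hpig
    refine ⟨b - a, show _ ∈ S from ⟨by omega, a, by omega, ?_⟩⟩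
    rw [show a + (b - a) = b by omega]; exact h3
  set m := sInf S with hm
  have hmS : m ∈ S := Nat.sInf_mem hSne
  have hmS' : 0 < m ∧ ∃ a, a + m ≤ L ∧ x a = x (a + m) := hmS
  obtain ⟨hmpos, a, hab, hxab⟩ := hmS'
  set b := a + m with hb
  have hmin : ∀ d, 0 < d → d < m → ∀ a', a' + d ≤ L → x a' ≠ x (a' + d) := by
    intro d hd hdm a' ha' heq
    exact absurd (Nat.sInf_le (show d ∈ S from ⟨hd, a', ha', heq⟩)) (by omega)
  have hb1L : b - 1 < L := by omega
  set g := β.get ⟨b - 1, hb1L⟩ with hg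
  have hgA : g ∈ A := hmem _ (List.get_mem β _)
  have hini_g : G.ini g = x (b - 1) := (hx_lt _ hb1L).symm
  have hter_g : G.ter g = x b := by
    have h1 : G.ter g = x ((b - 1) + 1) := (hx_succ _ hb1L).symm
    rwa [show (b - 1) + 1 = b by omega] at h1
  -- connectivity in A minus the pair of g
  have hstep : ∀ j, a ≤ j → j ≤ b - 1 → conn G (A \ pr G g) (x a) (x j) := by
    intro j
    induction j with
    | zero => intro h1 h2; have : a = 0 := by omega
              rw [this]; exact conn_refl _ _
    | succ j ihj =>
      intro h1 h2
      rcases Nat.lt_or_ge a (j + 1) with haj | haj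
      · -- a ≤ j, use edge β_j
        have haj' : a ≤ j := by omega
        have hjb : j < b - 1 := by omega
        have hjL : j < L := by omega
        set f := β.get ⟨j, hjL⟩ with hf
        have hfA : f ∈ A := hmem _ (List.get_mem β _)
        have hfg : f ≠ g := by
          intro hfg
          have : x j = x (b - 1) := by
            rw [hx_lt j hjL, ← hf, hfg, hini_g]
          exact hmin ((b-1) - j) (by omega) (by omega) j (by omega)
            (by rw [show j + ((b-1) - j) = b - 1 by omega]; exact this)
        have hfbg : f ≠ G.bar g := by
          intro hfbg
          have hterg : G.ini f = G.ter g := by rw [hfbg]; rfl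
          have hxja : x j = x b := by
            rw [hx_lt j hjL, ← hf, hterg, hter_g]
          rcases Nat.lt_or_ge a j with haj2 | haj2
          · -- a < j < b, gap b - j < m
            exact hmin (b - j) (by omega) (by omega) j (by omega)
              (by rw [show j + (b - j) = b by omega]; exact hxja)
          · -- j = a : f = β_a = bar g
            have hja : j = a := by omega
            -- then x (a+1) = ini g = x (b-1)
            have hterf : G.ter f = G.ini g := by
              rw [hfbg]
              show G.ini (G.bar (G.bar g)) = G.ini g
              rw [G.bar_bar]
            have hxa1 : x (j + 1) = x (b - 1) := by
              rw [hx_succ j hjL, ← hf, hterf, hini_g]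
            have hm2 : j + 1 = b - 1 := by
              by_contra hne2
              have : j + 1 < b - 1 := by omega
              exact hmin ((b-1) - (j+1)) (by omega) (by omega) (j+1) (by omega)
                (by rw [show (j+1) + ((b-1) - (j+1)) = b - 1 by omega]; exact hxa1) 
            -- m = 2, consecutive edges f, g with f = bar g : contradicts reducedness
            have hcons := (hchain j (by omega)).2
            -- hcons : β.get ⟨j+1, _⟩ ≠ G.bar (β.get ⟨j, _⟩)
            apply hcons
            have h5 : β.get ⟨j + 1, by omega⟩ = g := by
              rw [hg]
              exact congrArg β.get (Fin.ext (show j + 1 = b - 1 from hm2))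
            change β.get ⟨j + 1, by omega⟩ = G.bar (β.get ⟨j, hjL⟩)
            rw [h5, ← hf, hfbg, G.bar_bar]
        have hfA2 : f ∈ (A \ pr G g) := ⟨hfA, by rintro (h | h); exact hfg h; exact hfbg h⟩
        refine conn_trans (ihj haj' (by omega)) ?_
        have : adjOn G (A \ pr G g) (x j) (x (j + 1)) := by
          refine ⟨f, hfA2, ?_, ?_⟩
          · exact (hx_lt j hjL).symm
          · exact (hx_succ j hjL).symm
        exact Relation.EqvGen.rel _ _ this
      · -- a = j + 1
        have : a = j + 1 := by omega
        rw [this]; exact conn_refl _ _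
  have hconn : conn G (A \ pr G g) (G.ini g) (G.ter g) := by
    rw [hini_g, hter_g, ← hxab]
    exact conn_symm (hstep (b - 1) (by omega) le_rfl)
  -- conclude
  have hccA : cc G A = cc G (A \ pr G g) := by
    have h1 := cc_pair_conn hconn
    rw [diff_pr_union hA hgA] at h1
    exact h1
  have hd := ncard_diff_pr hA hgA
  have hnn := cc_nonneg_ineq (A \ pr G g) (barClosed_diff_pr hA g)
  have h2 : A.ncard / 2 = (A \ pr G g).ncard / 2 + 1 := by omega
  unfold bettiOn
  rw [hccA, h2]
  push_cast
  omega

end PetalProof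

namespace PetalProof
variable {G : MGraph}

theorem bettiOn_empty [Finite G.V] : bettiOn G (∅ : Set G.E) = 0 := by
  unfold bettiOn
  rw [cc_empty, Set.ncard_empty]
  simp

theorem bettiOn_superadd [Finite G.V] [Finite G.E] {A B : Set G.E}
    (hA : BarClosed G A) (hB : BarClosed G B) (hdisj : Disjoint A B) :
    bettiOn G A + bettiOn G B ≤ bettiOn G (A ∪ B) := by
  have hcc := cc_subadd A hA B hB
  have hcard : (A ∪ B).ncard = A.ncard + B.ncard :=
    Set.ncard_union_eq hdisj (Set.toFinite A) (Set.toFinite B)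
  have hevA := (Nat.even_iff).1 (even_ncard A hA)
  have hevB := (Nat.even_iff).1 (even_ncard B hB)
  unfold bettiOn
  push_cast
  omega

section Assembly
variable {n : ℕ} (p : MGraphHom G (Rose n))

/-- Edges mapping into the petal set `S`. -/
def ES (p : MGraphHom G (Rose n)) (S : Set (Fin n)) : Set G.E :=
  {e : G.E | (p.toE e).1 ∈ S}

theorem barClosed_ES (S : Set (Fin n)) : BarClosed G (ES p S) := by
  intro e he
  show ((p.toE (G.bar e)).1 ∈ S)
  rw [p.map_bar]
  exact he

theorem adj_petalSub (S : Set (Fin n)) :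
    (petalSub G p S).Adj = adjOn G (ES p S) := by
  funext u v
  apply propext
  constructor
  · rintro ⟨⟨e, he⟩, h1, h2⟩
    exact ⟨e, he, h1, h2⟩
  · rintro ⟨e, he, h1, h2⟩
    exact ⟨⟨e, he⟩, h1, h2⟩

theorem betti_petalSub [Finite G.V] [Finite G.E] (S : Set (Fin n)) :
    (petalSub G p S).betti = bettiOn G (ES p S) := by
  have h1 : Nat.card (petalSub G p S).E = (ES p S).ncard := by
    rw [← Nat.card_coe_set_eq]
    rfl
  have h2 : (petalSub G p S).ncomp = cc G (ES p S) := by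
    unfold MGraph.ncomp cc
    have hs : (petalSub G p S).compSetoid = connSetoid G (ES p S) := by
      apply Setoid.ext
      intro x y
      show Relation.EqvGen (petalSub G p S).Adj x y ↔ _
      rw [adj_petalSub]
      rfl
    rw [hs]
    rfl
  unfold MGraph.betti bettiOn
  rw [h1, h2]
  rfl

theorem betti_univ [Finite G.V] [Finite G.E] :
    G.betti = bettiOn G (Set.univ : Set G.E) := by
  have h1 : Nat.card G.E = (Set.univ : Set G.E).ncard := (Set.ncard_univ _).symm
  have h2 : G.ncomp = cc G (Set.univ : Set G.E) := by
    unfold MGraph.ncomp cc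
    have hs : G.compSetoid = connSetoid G Set.univ := by
      apply Setoid.ext
      intro x y
      show Relation.EqvGen G.Adj x y ↔ Relation.EqvGen (adjOn G Set.univ) x y
      have : G.Adj = adjOn G Set.univ := by
        funext u v
        apply propext
        constructor
        · rintro ⟨e, h1, h2⟩; exact ⟨e, trivial, h1, h2⟩
        · rintro ⟨e, -, h1, h2⟩; exact ⟨e, h1, h2⟩
      rw [this]
    rw [hs]
  unfold MGraph.betti bettiOn
  rw [h1, h2]

theorem sum_betti_le [Finite G.V] [Finite G.E] (s : Finset (Fin n)) :
    ∑ i ∈ s, bettiOn G (ES p {i}) ≤ bettiOn G (ES p (↑s : Set (Fin n))) := by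
  induction s using Finset.induction_on with
  | empty =>
    have : ES p ((↑(∅ : Finset (Fin n))) : Set (Fin n)) = (∅ : Set G.E) := by
      ext e; simp [ES]
    rw [this, bettiOn_empty, Finset.sum_empty]
  | @insert i s hi ih =>
    have hunion : ES p (↑(insert i s) : Set (Fin n)) = ES p {i} ∪ ES p ↑s := by
      ext e; simp [ES]
    have hdisj : Disjoint (ES p ({i} : Set (Fin n))) (ES p ↑s) := by
      rw [Set.disjoint_left]
      intro e he1 he2
      have h1 : (p.toE e).1 = i := he1
      exact hi (by rwa [← h1])
    rw [Finset.sum_insert hi, hunion]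
    calc bettiOn G (ES p {i}) + ∑ j ∈ s, bettiOn G (ES p {j})
        ≤ bettiOn G (ES p {i}) + bettiOn G (ES p ↑s) := by
          exact add_le_add_right ih _
      _ ≤ _ := bettiOn_superadd (barClosed_ES p _) (barClosed_ES p _) hdisj

end Assembly
end PetalProof

namespace PetalProof
variable {G : MGraph}

theorem claim1 [Finite G.V] [Finite G.E] {n : ℕ} (p : MGraphHom G (Rose n))
    (hps : p.PathSurjective) (i : Fin n) : 1 ≤ bettiOn G (ES p {i}) := by
  set N := Nat.card G.V with hN
  set γ : List (Rose n).E := List.replicate (N + 1) ((i, true)) with hγ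
  have hred : (Rose n).IsReducedPath γ := by
    apply List.isChain_replicate_of_rel
    refine ⟨rfl, ?_⟩
    intro h
    have := congrArg Prod.snd h
    simp [Rose] at this
  obtain ⟨β, hchain, hmap⟩ := hps γ hred
  have hlenβ : β.length = N + 1 := by
    have := congrArg List.length hmap
    rw [List.length_map, hγ] at this
    exact this.trans List.length_replicate
  have hmemβ : ∀ f ∈ β, p.toE f = (i, true) := by
    intro f hf
    have : p.toE f ∈ γ := hmap ▸ List.mem_map_of_mem hf
    exact List.eq_of_mem_replicate this
  have hredβ : G.IsReducedPath β := by
    rw [MGraph.IsReducedPath, List.Chain', List.isChain_iff_getElem]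
    intro j hj
    have hc := (List.isChain_iff_getElem.1 hchain) j hj
    refine ⟨hc, ?_⟩
    intro heq
    have h1 := hmemβ (β[j+1]) (List.getElem_mem hj)
    have h2 := hmemβ (β[j]) (List.getElem_mem (by omega))
    rw [heq] at h1
    rw [p.map_bar, h2] at h1
    have := congrArg Prod.snd h1
    simp [Rose] at this
  refine betti_ge_one (ES p {i}) (barClosed_ES p _) β hredβ ?_ (by omega)
  intro f hf
  show (p.toE f).1 ∈ ({i} : Set (Fin n))
  rw [hmemβ f hf]
  exact Set.mem_singleton _

end PetalProof

/- STATEMENT 8: for a path-surjective morphism `p : Γ → R_n` from a finite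
graph, every petal subgraph `Γ_e` has `b(Γ_e) ≥ 1`; and if moreover
`b(Γ) ≤ 2n-1` then some petal has `b(Γ_e) = 1`. -/
open PetalProof in
/-- for a path-surjective morphism `p : Γ → R_n` from a finite
graph, every petal subgraph `Γ_e` has `b(Γ_e) ≥ 1`; and if moreover
`b(Γ) ≤ 2n-1` then some petal has `b(Γ_e) = 1`. -/
theorem petal_betti (n : ℕ) (hn : 2 ≤ n) (G : MGraph) [Finite G.V] [Finite G.E]
    (p : MGraphHom G (Rose n)) (hps : p.PathSurjective) :
    (∀ i : Fin n, 1 ≤ (petalSub G p {i}).betti) ∧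
    (G.betti ≤ 2 * (n : ℤ) - 1 → ∃ i : Fin n, (petalSub G p {i}).betti = 1) := by
  constructor
  · intro i
    rw [betti_petalSub]
    exact claim1 p hps i
  · intro hb
    have hsum := sum_betti_le p (Finset.univ)
    have huniv : ES p (↑(Finset.univ : Finset (Fin n)) : Set (Fin n)) = Set.univ := by
      ext e; simp [ES]
    rw [huniv, ← betti_univ] at hsum
    by_contra hcon
    push_neg at hcon
    have hall : ∀ i : Fin n, 2 ≤ bettiOn G (ES p {i}) := by
      intro i
      have h1 := claim1 p hps i
      have h2 := hcon i
      rw [betti_petalSub] at h2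
      omega
    have hge : (2 * n : ℤ) ≤ ∑ i : Fin n, bettiOn G (ES p {i}) := by
      calc (2 * n : ℤ) = ∑ _i : Fin n, (2 : ℤ) := by
            rw [Finset.sum_const, Finset.card_univ, Fintype.card_fin]
            push_cast; ring
        _ ≤ _ := Finset.sum_le_sum (fun i _ => hall i)
    omega
end

section
/- Let Γ be a finite graph, p : Γ → R_n a path-surjective morphism, and for S ⊆ {e_1,…,e_n} let Γ_S be the subgraph of edges mapping into S ∪ S^{-1}. If b(Γ) ≤ 2n − 1, then there exists a permutation of the petals e_1,…,e_n such that, after reindexing, b(Γ_{S_k}) ≤ 2k − 1 for all k ∈ {1,…,n}, where S_k = {e_1,…,e_k}. -/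
namespace MGraph

variable (G : MGraph)

def adjOn (A : Set G.E) (u v : G.V) : Prop := ∃ e ∈ A, G.ini e = u ∧ G.ter e = v

def connOn (A : Set G.E) : G.V → G.V → Prop := Relation.EqvGen (G.adjOn A)

def setoidOn (A : Set G.E) : Setoid G.V := ⟨G.connOn A, Relation.EqvGen.is_equivalence _⟩

noncomputable def compOn (A : Set G.E) : ℕ := Nat.card (Quotient (G.setoidOn A))

noncomputable def bbOn (A : Set G.E) : ℤ :=
  ((Nat.card A / 2 : ℕ) : ℤ) - (Nat.card G.V : ℤ) + (G.compOn A : ℤ)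

variable {G}

lemma connOn_mono {A B : Set G.E} (h : A ⊆ B) {u v : G.V} (hc : G.connOn A u v) :
    G.connOn B u v :=
  Relation.EqvGen.mono (r := G.adjOn A) (p := G.adjOn B) (fun a b ⟨e, he, h1, h2⟩ => ⟨e, h he, h1, h2⟩) _ _ hc

lemma connOn_refl (A : Set G.E) (u : G.V) : G.connOn A u u := Relation.EqvGen.refl u

lemma connOn_symm {A : Set G.E} {u v : G.V} (h : G.connOn A u v) : G.connOn A v u :=
  Relation.EqvGen.symm _ _ h

lemma connOn_trans {A : Set G.E} {u v w : G.V} (h : G.connOn A u v) (h' : G.connOn A v w) :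
    G.connOn A u w := Relation.EqvGen.trans _ _ _ h h'

lemma compOn_congr {A B : Set G.E} (h : ∀ u v, G.connOn A u v ↔ G.connOn B u v) :
    G.compOn A = G.compOn B := by
  have : G.setoidOn A = G.setoidOn B := Setoid.ext h
  rw [compOn, compOn, this]

lemma subset_pair (A : Set G.E) (x : G.E) : A ⊆ insert x (insert (G.bar x) A) :=
  fun e he => Set.mem_insert_of_mem _ (Set.mem_insert_of_mem _ he)

lemma connOn_pair_iff {A : Set G.E} {x : G.E} {u v : G.V} :
    G.connOn (insert x (insert (G.bar x) A)) u v ↔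
      G.connOn A u v ∨ (G.connOn A u (G.ini x) ∧ G.connOn A (G.ter x) v)
        ∨ (G.connOn A u (G.ter x) ∧ G.connOn A (G.ini x) v) := by
  constructor
  · intro hc
    induction hc with
    | rel a b hab =>
      obtain ⟨e, he, h1, h2⟩ := hab
      rcases he with rfl | he
      · subst h1; subst h2
        exact Or.inr (Or.inl ⟨connOn_refl A _, connOn_refl A _⟩)
      · rcases he with rfl | he
        · subst h1; subst h2
          refine Or.inr (Or.inr ⟨?_, ?_⟩)
          · show G.connOn A (G.ini (G.bar x)) (G.ter x)
            exact connOn_refl A _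
          · show G.connOn A (G.ini x) (G.ter (G.bar x))
            rw [ter, G.bar_bar]
            exact connOn_refl A _
        · exact Or.inl (Relation.EqvGen.rel _ _ ⟨e, he, h1, h2⟩)
    | refl a => exact Or.inl (connOn_refl A a)
    | symm a b _ ih =>
      rcases ih with h | ⟨h1, h2⟩ | ⟨h1, h2⟩
      · exact Or.inl (connOn_symm h)
      · exact Or.inr (Or.inr ⟨connOn_symm h2, connOn_symm h1⟩)
      · exact Or.inr (Or.inl ⟨connOn_symm h2, connOn_symm h1⟩)
    | trans a b c _ _ ih1 ih2 =>
      rcases ih1 with h | ⟨h1, h2⟩ | ⟨h1, h2⟩ <;>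
        rcases ih2 with h' | ⟨h1', h2'⟩ | ⟨h1', h2'⟩
      · exact Or.inl (connOn_trans h h')
      · exact Or.inr (Or.inl ⟨connOn_trans h h1', h2'⟩)
      · exact Or.inr (Or.inr ⟨connOn_trans h h1', h2'⟩)
      · exact Or.inr (Or.inl ⟨h1, connOn_trans h2 h'⟩)
      · exact Or.inl (connOn_trans (connOn_trans h1 (connOn_symm (connOn_trans h2 h1'))) h2')
      · exact Or.inl (connOn_trans h1 h2')
      · exact Or.inr (Or.inr ⟨h1, connOn_trans h2 h'⟩)
      · exact Or.inl (connOn_trans h1 h2')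
      · exact Or.inl (connOn_trans h1 (connOn_trans (connOn_symm (connOn_trans h2 h1')) h2'))
  · intro h
    have hedge : G.connOn (insert x (insert (G.bar x) A)) (G.ini x) (G.ter x) :=
      Relation.EqvGen.rel _ _ ⟨x, Set.mem_insert _ _, rfl, rfl⟩
    rcases h with h | ⟨h1, h2⟩ | ⟨h1, h2⟩
    · exact connOn_mono (subset_pair A x) h
    · exact connOn_trans (connOn_trans (connOn_mono (subset_pair A x) h1) hedge)
        (connOn_mono (subset_pair A x) h2)
    · exact connOn_trans (connOn_trans (connOn_mono (subset_pair A x) h1) (connOn_symm hedge))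
        (connOn_mono (subset_pair A x) h2)

lemma compOn_pair_of_conn {A : Set G.E} {x : G.E} (h : G.connOn A (G.ini x) (G.ter x)) :
    G.compOn (insert x (insert (G.bar x) A)) = G.compOn A := by
  refine compOn_congr fun u v => ⟨fun hc => ?_, fun hc => connOn_mono (subset_pair A x) hc⟩
  rcases connOn_pair_iff.mp hc with h' | ⟨h1, h2⟩ | ⟨h1, h2⟩
  · exact h'
  · exact connOn_trans (connOn_trans h1 h) h2
  · exact connOn_trans (connOn_trans h1 (connOn_symm h)) h2

lemma compOn_pair_of_not_conn [Finite G.V] {A : Set G.E} {x : G.E}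
    (h : ¬ G.connOn A (G.ini x) (G.ter x)) :
    G.compOn (insert x (insert (G.bar x) A)) + 1 = G.compOn A := by
  classical
  set B : Set G.E := insert x (insert (G.bar x) A) with hB
  let sA := G.setoidOn A
  let sB := G.setoidOn B
  have hmap : ∀ a b : G.V, sA a b → sB a b := fun a b hab =>
    connOn_mono (subset_pair A x) hab
  let f : Quotient sA → Quotient sB := Quotient.map id hmap
  have hfmk : ∀ a : G.V, f (Quotient.mk sA a) = Quotient.mk sB a := fun a => rfl
  let t := G.ter x
  let i := G.ini x
  have hit : Quotient.mk sA i ≠ Quotient.mk sA t := fun hEq => h (Quotient.exact hEq)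
  let e : {q : Quotient sA // q ≠ Quotient.mk sA t} ≃ Quotient sB := by
    refine Equiv.ofBijective (fun q => f q.1) ⟨?_, ?_⟩
    · rintro ⟨q1, h1⟩ ⟨q2, h2⟩ hf
      obtain ⟨a, rfl⟩ := Quotient.exists_rep q1
      obtain ⟨b, rfl⟩ := Quotient.exists_rep q2
      simp only [hfmk] at hf
      have hab : G.connOn B a b := Quotient.exact hf
      rcases connOn_pair_iff.mp hab with h' | ⟨ha, hb⟩ | ⟨ha, hb⟩
      · exact Subtype.ext (Quotient.sound h')
      · exact absurd (Quotient.sound (connOn_symm hb)) h2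
      · exact absurd (Quotient.sound ha) h1
    · intro q
      obtain ⟨a, rfl⟩ := Quotient.exists_rep q
      by_cases hc : G.connOn A a t
      · refine ⟨⟨Quotient.mk sA i, hit⟩, ?_⟩
        show f (Quotient.mk sA i) = Quotient.mk sB a
        rw [hfmk]
        refine Quotient.sound ?_
        have h1 : G.connOn B i t := Relation.EqvGen.rel _ _ ⟨x, Set.mem_insert _ _, rfl, rfl⟩
        exact connOn_trans h1 (connOn_symm (connOn_mono (subset_pair A x) hc))
      · exact ⟨⟨Quotient.mk sA a, fun hEq => hc (Quotient.exact hEq)⟩, rfl⟩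
  have h1 : Nat.card (Quotient sB) = Nat.card {q : Quotient sA // q ≠ Quotient.mk sA t} :=
    (Nat.card_congr e).symm
  have hfin : Finite (Quotient sA) := Quotient.finite _
  have hfint : Fintype (Quotient sA) := Fintype.ofFinite _
  have h2 : Nat.card {q : Quotient sA // q ≠ Quotient.mk sA t}
      = Nat.card (Quotient sA) - 1 := by
    rw [Nat.card_eq_fintype_card, Nat.card_eq_fintype_card]
    have := Fintype.card_subtype_compl (fun q : Quotient sA => q = Quotient.mk sA t)
    simp only [Fintype.card_subtype_eq] at this
    convert this using 2
  have hne : Nonempty (Quotient sA) := ⟨Quotient.mk sA t⟩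
  have h3 : 1 ≤ Nat.card (Quotient sA) := Nat.card_pos
  show G.compOn B + 1 = G.compOn A
  rw [compOn, compOn]
  show Nat.card (Quotient sB) + 1 = Nat.card (Quotient sA)
  omega

lemma compOn_empty [Finite G.V] : G.compOn (∅ : Set G.E) = Nat.card G.V := by
  have hiff : ∀ a b : G.V, G.connOn ∅ a b ↔ a = b := by
    intro a b
    constructor
    · intro h
      induction h with
      | rel a b hab => exact absurd hab.choose_spec.1 (Set.notMem_empty _)
      | refl a => rfl
      | symm a b _ ih => exact ih.symm
      | trans a b c _ _ ih1 ih2 => exact ih1.trans ih2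
    · rintro rfl; exact connOn_refl _ _
  refine Nat.card_congr (Equiv.ofBijective
    (Quotient.lift id (fun a b hab => (hiff a b).mp hab)) ⟨?_, ?_⟩)
  · intro q1 q2
    obtain ⟨a, rfl⟩ := Quotient.exists_rep q1
    obtain ⟨b, rfl⟩ := Quotient.exists_rep q2
    intro hEq
    exact Quotient.sound ((hiff a b).mpr hEq)
  · exact fun a => ⟨Quotient.mk _ a, rfl⟩

lemma bbOn_empty [Finite G.V] : G.bbOn (∅ : Set G.E) = 0 := by
  rw [bbOn, compOn_empty]
  have : Nat.card (∅ : Set G.E) = 0 := by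
    rw [Nat.card_coe_set_eq, Set.ncard_empty]
  rw [this]
  norm_num

lemma ncard_pair [Finite G.E] {A : Set G.E} {x : G.E} (hx : x ∉ A) (hbx : G.bar x ∉ A) :
    Nat.card (insert x (insert (G.bar x) A) : Set G.E) = Nat.card A + 2 := by
  rw [Nat.card_coe_set_eq, Nat.card_coe_set_eq]
  have hxb : x ∉ insert (G.bar x) A := by
    intro hmem
    rcases hmem with hEq | hmem
    · exact G.bar_ne x hEq.symm
    · exact hx hmem
  rw [Set.ncard_insert_of_notMem hxb, Set.ncard_insert_of_notMem hbx]

lemma bbOn_pair_of_conn [Finite G.V] [Finite G.E] {A : Set G.E} {x : G.E}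
    (hx : x ∉ A) (hbx : G.bar x ∉ A) (h : G.connOn A (G.ini x) (G.ter x)) :
    G.bbOn (insert x (insert (G.bar x) A)) = G.bbOn A + 1 := by
  rw [bbOn, bbOn, ncard_pair hx hbx, compOn_pair_of_conn h]
  have : (Nat.card ↥A + 2) / 2 = Nat.card ↥A / 2 + 1 := by omega
  rw [this]
  push_cast
  ring

lemma bbOn_pair_of_not_conn [Finite G.V] [Finite G.E] {A : Set G.E} {x : G.E}
    (hx : x ∉ A) (hbx : G.bar x ∉ A) (h : ¬ G.connOn A (G.ini x) (G.ter x)) :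
    G.bbOn (insert x (insert (G.bar x) A)) = G.bbOn A := by
  have hcomp := compOn_pair_of_not_conn (G := G) (A := A) (x := x) h
  rw [bbOn, bbOn, ncard_pair hx hbx]
  have h2 : (Nat.card ↥A + 2) / 2 = Nat.card ↥A / 2 + 1 := by omega
  rw [h2]
  have h3 : (G.compOn (insert x (insert (G.bar x) A)) : ℤ) = (G.compOn A : ℤ) - 1 := by
    omega
  rw [h3]
  push_cast
  ring

lemma bbOn_pair_le [Finite G.V] [Finite G.E] {A : Set G.E} {x : G.E}
    (hx : x ∉ A) (hbx : G.bar x ∉ A) :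
    G.bbOn A ≤ G.bbOn (insert x (insert (G.bar x) A)) := by
  by_cases h : G.connOn A (G.ini x) (G.ter x)
  · rw [bbOn_pair_of_conn hx hbx h]; omega
  · rw [bbOn_pair_of_not_conn hx hbx h]

lemma bbOn_base {A B : Set G.E} (hBA : B ⊆ A) :
    G.bbOn A + G.bbOn B ≤ G.bbOn (A ∪ B) + G.bbOn (A ∩ B) := by
  rw [Set.union_eq_self_of_subset_right hBA, Set.inter_eq_self_of_subset_right hBA]

lemma bbOn_supermodular_aux [Finite G.V] [Finite G.E] :
    ∀ (k : ℕ) (A B : Set G.E), (∀ e ∈ A, G.bar e ∈ A) → (∀ e ∈ B, G.bar e ∈ B) →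
      (B \ A).ncard ≤ k → G.bbOn A + G.bbOn B ≤ G.bbOn (A ∪ B) + G.bbOn (A ∩ B) := by
  intro k
  induction k with
  | zero =>
    intro A B _ _ hcard
    have hBA : B \ A = ∅ := ((Set.ncard_eq_zero (Set.toFinite _)).mp (Nat.le_zero.mp hcard))
    exact bbOn_base (Set.diff_eq_empty.mp hBA)
  | succ k ih =>
    intro A B hsA hsB hcard
    by_cases hE : B \ A = ∅
    · exact bbOn_base (Set.diff_eq_empty.mp hE)
    obtain ⟨x, hx⟩ := Set.nonempty_iff_ne_empty.mpr hE
    have hxB : x ∈ B := hx.1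
    have hxA : x ∉ A := hx.2
    have hbxB : G.bar x ∈ B := hsB x hxB
    have hbxA : G.bar x ∉ A := fun hmem => hxA (by
      have := hsA _ hmem
      rwa [G.bar_bar] at this)
    have hbxne : G.bar x ≠ x := G.bar_ne x
    set B' : Set G.E := B \ {x, G.bar x} with hB'
    have hxB' : x ∉ B' := fun hmem => hmem.2 (by simp)
    have hbxB' : G.bar x ∉ B' := fun hmem => hmem.2 (by simp)
    have hsB' : ∀ e ∈ B', G.bar e ∈ B' := by
      rintro e ⟨heB, heP⟩
      simp only [Set.mem_insert_iff, Set.mem_singleton_iff] at heP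
      push_neg at heP
      refine ⟨hsB e heB, ?_⟩
      simp only [Set.mem_insert_iff, Set.mem_singleton_iff]
      push_neg
      constructor
      · intro hEq
        exact heP.2 (by rw [← hEq, G.bar_bar])
      · intro hEq
        have := congrArg G.bar hEq
        rw [G.bar_bar, G.bar_bar] at this
        exact heP.1 this
    have hBeq : B = insert x (insert (G.bar x) B') := by
      ext e
      simp only [Set.mem_insert_iff, hB', Set.mem_diff, Set.mem_insert_iff,
        Set.mem_singleton_iff]
      constructor
      · intro he
        by_cases h1 : e = x
        · exact Or.inl h1
        by_cases h2 : e = G.bar x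
        · exact Or.inr (Or.inl h2)
        · exact Or.inr (Or.inr ⟨he, by simp [h1, h2]⟩)
      · rintro (rfl | rfl | ⟨he, _⟩) <;> assumption
    have hABeq : A ∪ B = insert x (insert (G.bar x) (A ∪ B')) := by
      rw [hBeq]
      ext e
      simp only [Set.mem_union, Set.mem_insert_iff]
      tauto
    have hxAB' : x ∉ A ∪ B' := by rintro (h | h) <;> [exact hxA h; exact hxB' h]
    have hbxAB' : G.bar x ∉ A ∪ B' := by rintro (h | h) <;> [exact hbxA h; exact hbxB' h]
    have hinter : A ∩ B' = A ∩ B := by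
      ext e
      simp only [Set.mem_inter_iff, hB', Set.mem_diff, Set.mem_insert_iff,
        Set.mem_singleton_iff]
      constructor
      · rintro ⟨heA, heB, _⟩; exact ⟨heA, heB⟩
      · rintro ⟨heA, heB⟩
        refine ⟨heA, heB, ?_⟩
        push_neg
        exact ⟨fun hEq => hxA (hEq ▸ heA), fun hEq => hbxA (hEq ▸ heA)⟩
    have hcard' : (B' \ A).ncard ≤ k := by
      have hsub : B' \ A ⊆ (B \ A) \ {x} := by
        rintro e ⟨⟨heB, heP⟩, heA⟩
        refine ⟨⟨heB, heA⟩, fun hEq => heP ?_⟩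
        simp only [Set.mem_singleton_iff] at hEq
        simp [hEq]
      have h1 : (B' \ A).ncard ≤ ((B \ A) \ {x}).ncard :=
        Set.ncard_le_ncard hsub (Set.toFinite _)
      have h2 : ((B \ A) \ {x}).ncard = (B \ A).ncard - 1 :=
        Set.ncard_diff_singleton_of_mem hx
      have h3 : 0 < (B \ A).ncard := (Set.ncard_pos (Set.toFinite _)).mpr ⟨x, hx⟩
      omega
    have IH := ih A B' hsA hsB' hcard'
    rw [hinter] at IH
    -- increments
    by_cases hconn : G.connOn B' (G.ini x) (G.ter x)
    · have i1 : G.bbOn B = G.bbOn B' + 1 := by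
        rw [hBeq]; exact bbOn_pair_of_conn hxB' hbxB' hconn
      have i2 : G.bbOn (A ∪ B) = G.bbOn (A ∪ B') + 1 := by
        rw [hABeq]
        exact bbOn_pair_of_conn hxAB' hbxAB'
          (connOn_mono Set.subset_union_right hconn)
      linarith
    · have i1 : G.bbOn B = G.bbOn B' := by
        rw [hBeq]; exact bbOn_pair_of_not_conn hxB' hbxB' hconn
      have i2 : G.bbOn (A ∪ B') ≤ G.bbOn (A ∪ B) := by
        rw [hABeq]; exact bbOn_pair_le hxAB' hbxAB'
      linarith

lemma bbOn_supermodular [Finite G.V] [Finite G.E] (A B : Set G.E)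
    (hsA : ∀ e ∈ A, G.bar e ∈ A) (hsB : ∀ e ∈ B, G.bar e ∈ B) :
    G.bbOn A + G.bbOn B ≤ G.bbOn (A ∪ B) + G.bbOn (A ∩ B) :=
  bbOn_supermodular_aux (B \ A).ncard A B hsA hsB le_rfl

lemma betti_eq_bbOn_univ (G : MGraph) : G.betti = G.bbOn (Set.univ : Set G.E) := by
  have hE : Nat.card (Set.univ : Set G.E) = Nat.card G.E :=
    Nat.card_congr (Equiv.Set.univ _)
  have hsetoid : G.compSetoid = G.setoidOn (Set.univ : Set G.E) := by
    refine Setoid.ext fun a b => ⟨fun h => ?_, fun h => ?_⟩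
    · exact Relation.EqvGen.mono (r := G.Adj) (p := G.adjOn Set.univ)
        (fun a b ⟨e, h1, h2⟩ => ⟨e, Set.mem_univ e, h1, h2⟩) _ _ h
    · exact Relation.EqvGen.mono (r := G.adjOn Set.univ) (p := G.Adj) (fun a b ⟨e, _, h1, h2⟩ => ⟨e, h1, h2⟩) _ _ h
  have hcomp : G.ncomp = G.compOn (Set.univ : Set G.E) := by
    rw [ncomp, compOn, hsetoid]
  rw [betti, bbOn, hE, hcomp]

end MGraph


namespace MGraph

variable {n : ℕ} (G : MGraph) (p : MGraphHom G (Rose n))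

def preE (S : Set (Fin n)) : Set G.E := {e | (p.toE e).1 ∈ S}

lemma preE_sym (S : Set (Fin n)) : ∀ e ∈ G.preE p S, G.bar e ∈ G.preE p S := by
  intro e he
  show ((p.toE (G.bar e)).1 ∈ S)
  rw [p.map_bar]
  exact he

lemma preE_union (S T : Set (Fin n)) : G.preE p (S ∪ T) = G.preE p S ∪ G.preE p T := rfl

lemma preE_inter (S T : Set (Fin n)) : G.preE p (S ∩ T) = G.preE p S ∩ G.preE p T := rfl

lemma preE_empty : G.preE p (∅ : Set (Fin n)) = ∅ := rfl

lemma preE_univ : G.preE p (Set.univ : Set (Fin n)) = Set.univ := rfl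

lemma petalSub_betti [Finite G.V] [Finite G.E] (S : Set (Fin n)) :
    (petalSub G p S).betti = G.bbOn (G.preE p S) := by
  have hE : Nat.card (petalSub G p S).E = Nat.card (G.preE p S) :=
    Nat.card_congr (Equiv.subtypeEquivRight fun e => Iff.rfl)
  have hsetoid : (petalSub G p S).compSetoid = G.setoidOn (G.preE p S) := by
    refine Setoid.ext fun a b => ⟨fun h => ?_, fun h => ?_⟩
    · exact Relation.EqvGen.mono (r := (petalSub G p S).Adj) (p := G.adjOn (G.preE p S))
        (fun a b ⟨e, h1, h2⟩ => ⟨e.1, e.2, h1, h2⟩) _ _ h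
    · refine Relation.EqvGen.mono (r := G.adjOn (G.preE p S)) (p := (petalSub G p S).Adj) (fun a b he => ?_) _ _ h
      obtain ⟨e, hmem, h1, h2⟩ := he
      exact ⟨⟨e, hmem⟩, h1, h2⟩
  have hcomp : (petalSub G p S).ncomp = G.compOn (G.preE p S) := by
    rw [ncomp, compOn, hsetoid]
    rfl
  rw [betti, bbOn, hE, hcomp]
  rfl

noncomputable def FF (s : Finset (Fin n)) : ℤ := G.bbOn (G.preE p ↑s)

variable [Finite G.V] [Finite G.E]

lemma FF_empty : G.FF p (∅ : Finset (Fin n)) = 0 := by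
  rw [FF, Finset.coe_empty, preE_empty, bbOn_empty]

lemma FF_supermod (s t : Finset (Fin n)) :
    G.FF p s + G.FF p t ≤ G.FF p (s ∪ t) + G.FF p (s ∩ t) := by
  rw [FF, FF, FF, FF, Finset.coe_union, Finset.coe_inter, preE_union, preE_inter]
  exact bbOn_supermodular _ _ (G.preE_sym p _) (G.preE_sym p _)

lemma FF_sum_incr (s : Finset (Fin n)) (T : Finset (Fin n)) (hdis : ∀ x ∈ T, x ∉ s) :
    ∑ x ∈ T, (G.FF p (insert x s) - G.FF p s) ≤ G.FF p (s ∪ T) - G.FF p s := by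
  classical
  induction T using Finset.induction_on with
  | empty => simp
  | @insert x T hxT ih =>
    have hdis' : ∀ y ∈ T, y ∉ s := fun y hy => hdis y (Finset.mem_insert_of_mem hy)
    have hxs : x ∉ s := hdis x (Finset.mem_insert_self x T)
    have key : G.FF p (insert x s) + G.FF p (s ∪ T) ≤ G.FF p (s ∪ insert x T) + G.FF p s := by
      have h1 := G.FF_supermod p (insert x s) (s ∪ T)
      have h2 : insert x s ∪ (s ∪ T) = s ∪ insert x T := by
        ext y
        simp only [Finset.mem_union, Finset.mem_insert]
        tauto
      have h3 : insert x s ∩ (s ∪ T) = s := by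
        ext y
        simp only [Finset.mem_inter, Finset.mem_insert, Finset.mem_union]
        constructor
        · rintro ⟨rfl | hy, hy2⟩
          · rcases hy2 with h | h
            · exact h
            · exact absurd h hxT
          · exact hy
        · intro hy
          exact ⟨Or.inr hy, Or.inl hy⟩
      rw [h2, h3] at h1
      exact h1
    rw [Finset.sum_insert hxT]
    have := ih hdis'
    linarith

lemma FF_select (s : Finset (Fin n)) (hlt : s.card < n)
    (hFs : G.FF p s ≤ 2 * (s.card : ℤ))
    (huniv : G.FF p (Finset.univ : Finset (Fin n)) ≤ 2 * (n : ℤ) - 1) :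
    ∃ x ∉ s, G.FF p (insert x s) ≤ 2 * (s.card : ℤ) + 1 := by
  classical
  by_contra hcon
  push_neg at hcon
  have hstep : ∀ x ∈ sᶜ, 2 * (s.card : ℤ) + 2 - G.FF p s
      ≤ G.FF p (insert x s) - G.FF p s := by
    intro x hx
    have := hcon x (Finset.mem_compl.mp hx)
    linarith
  have hsum : (sᶜ.card : ℤ) * (2 * (s.card : ℤ) + 2 - G.FF p s)
      ≤ ∑ x ∈ sᶜ, (G.FF p (insert x s) - G.FF p s) := by
    have := Finset.sum_le_sum hstep
    rwa [Finset.sum_const, nsmul_eq_mul] at this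
  have hincr := G.FF_sum_incr p s sᶜ (fun x hx => Finset.mem_compl.mp hx)
  rw [Finset.union_compl] at hincr
  have hcardc : (sᶜ.card : ℤ) = (n : ℤ) - s.card := by
    have := Finset.card_compl s
    simp only [Fintype.card_fin] at this
    have hle : s.card ≤ n := by
      have := Finset.card_le_univ s
      simpa using this
    omega
  set c : ℤ := (s.card : ℤ)
  set r : ℤ := (sᶜ.card : ℤ)
  set fs : ℤ := G.FF p s
  have hr1 : 1 ≤ r := by
    have : s.card < n := hlt
    omega
  have hd : (2:ℤ) ≤ 2 * c + 2 - fs := by omega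
  have hmain : r * (2 * c + 2 - fs) ≤ 2 * (c + r) - 1 - fs := by
    have := le_trans hsum hincr
    omega
  nlinarith [mul_nonneg (by linarith : (0:ℤ) ≤ r - 1) (by linarith : (0:ℤ) ≤ 2*c + 2 - fs - 2)]

lemma FF_chain (huniv : G.FF p (Finset.univ : Finset (Fin n)) ≤ 2 * (n : ℤ) - 1) :
    ∀ m : ℕ, m ≤ n → ∃ l : List (Fin n), l.Nodup ∧ l.length = m ∧
      ∀ k : ℕ, k < m → G.FF p (l.take (k+1)).toFinset ≤ 2 * ((k : ℤ) + 1) - 1 := by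
  classical
  intro m
  induction m with
  | zero => exact fun _ => ⟨[], List.nodup_nil, rfl, fun k hk => absurd hk (Nat.not_lt_zero k)⟩
  | succ m ih =>
    intro hmn
    obtain ⟨l, hnd, hlen, hinv⟩ := ih (Nat.le_of_succ_le hmn)
    set s : Finset (Fin n) := l.toFinset with hs
    have hcard : s.card = m := by rw [hs, List.toFinset_card_of_nodup hnd, hlen]
    have hFs : G.FF p s ≤ 2 * (s.card : ℤ) := by
      rw [hcard]
      rcases Nat.eq_zero_or_pos m with hm0 | hmpos
      · have hl : l = [] := List.length_eq_zero_iff.mp (by omega)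
        rw [hs, hl]
        simp only [List.toFinset_nil]
        rw [G.FF_empty p]
        positivity
      · have h1 := hinv (m - 1) (by omega)
        rw [show m - 1 + 1 = m by omega] at h1
        rw [show l.take m = l by rw [← hlen]; exact List.take_length] at h1
        rw [← hs] at h1
        omega
    have hlt : s.card < n := by omega
    obtain ⟨x, hxs, hsel⟩ := G.FF_select p s hlt hFs huniv
    have hxl : x ∉ l := fun hmem => hxs (List.mem_toFinset.mpr hmem)
    refine ⟨l ++ [x], ?_, ?_, ?_⟩
    · simp [List.nodup_append, hnd, hxl]
      exact fun a ha h => hxl (h ▸ ha)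
    · simp [hlen]
    · intro k hk
      by_cases hkm : k < m
      · rw [List.take_append_of_le_length (by omega)]
        exact hinv k hkm
      · have hkm' : k = m := by omega
        subst hkm'
        rw [List.take_of_length_le (by simp [hlen])]
        have htf : (l ++ [x]).toFinset = insert x s := by
          rw [List.toFinset_append]
          simp only [List.toFinset_cons, List.toFinset_nil, insert_empty_eq]
          rw [Finset.union_comm, ← Finset.insert_eq]
        rw [htf]
        rw [hcard] at hsel
        omega

end MGraph


/-- after a suitable permutation of the petals, the subgraphs
`Γ_{S_k}` over the first `k` petals satisfy `b(Γ_{S_k}) ≤ 2k - 1` for all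
`k = 1,…,n`. -/
theorem petal_betti_filtration (n : ℕ) (hn : 2 ≤ n) (G : MGraph)
    [Finite G.V] [Finite G.E]
    (p : MGraphHom G (Rose n)) (hps : p.PathSurjective)
    (hb : G.betti ≤ 2 * (n : ℤ) - 1) :
    ∃ σ : Equiv.Perm (Fin n), ∀ k : Fin n,
      (petalSub G p {i : Fin n | ∃ j : Fin n, j ≤ k ∧ σ j = i}).betti
        ≤ 2 * ((k : ℤ) + 1) - 1 := by
  classical
  have huniv : G.FF p (Finset.univ : Finset (Fin n)) ≤ 2 * (n : ℤ) - 1 := by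
    rw [MGraph.FF, Finset.coe_univ, MGraph.preE_univ, ← MGraph.betti_eq_bbOn_univ]
    exact hb
  obtain ⟨l, hnd, hlen, hinv⟩ := G.FF_chain p huniv n le_rfl
  have hinj : Function.Injective (fun k : Fin n => l.get (Fin.cast hlen.symm k)) := by
    intro a b hab
    have h1 := List.nodup_iff_injective_get.mp hnd hab
    have h2 := congrArg Fin.val h1
    exact Fin.ext h2
  let σ : Equiv.Perm (Fin n) :=
    Equiv.ofBijective _ (Finite.injective_iff_bijective.mp hinj)
  refine ⟨σ, fun k => ?_⟩
  have hσ : ∀ j : Fin n, σ j = l.get (Fin.cast hlen.symm j) := fun j => rfl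
  have hset : {i : Fin n | ∃ j : Fin n, j ≤ k ∧ σ j = i}
      = {i : Fin n | i ∈ l.take ((k : ℕ) + 1)} := by
    ext i
    simp only [Set.mem_setOf_eq]
    constructor
    · rintro ⟨j, hjk, hji⟩
      have hjlen : (j : ℕ) < (l.take ((k : ℕ) + 1)).length := by
        rw [List.length_take, hlen]
        exact Nat.lt_min.mpr ⟨Nat.lt_succ_of_le hjk, j.isLt⟩
      have hmem := List.getElem_mem hjlen
      rw [List.getElem_take] at hmem
      have : l[(j : ℕ)] = i := by
        rw [← hji, hσ]
        rfl
      rwa [this] at hmem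
    · intro hi
      obtain ⟨j, hj, hEq⟩ := List.mem_iff_getElem.mp hi
      rw [List.length_take, hlen] at hj
      have hjk : j < (k : ℕ) + 1 := lt_of_lt_of_le hj (min_le_left _ _)
      have hjn : j < n := lt_of_lt_of_le hj (min_le_right _ _)
      refine ⟨⟨j, hjn⟩, ?_, ?_⟩
      · exact Nat.lt_succ_iff.mp hjk
      · rw [hσ]
        rw [List.getElem_take] at hEq
        exact hEq
  rw [hset, MGraph.petalSub_betti]
  have hbd := hinv (k : ℕ) k.isLt
  rw [MGraph.FF, List.coe_toFinset] at hbd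
  convert hbd using 2
end

section
/- Let Δ be a finite connected core graph with first Betti number m ≥ 2. Then Δ is the union of at most 3m − 3 maximal arcs. If instead (Δ, v_0) is a finite connected core pair with first Betti number m ≥ 2, then Δ is the union of at most 3m − 1 maximal arcs. -/
/-- A witness that the edge set `A` is an arc: a nonempty simple edge-path
(possibly closed) whose interior vertices have degree 2 in the ambient graph,
whose (unoriented) edges form `A`. -/
def IsArcWitness (G : MGraph) (A : Set G.E) (γ : List G.E) : Prop :=
  γ ≠ [] ∧ G.IsChain γ ∧ (γ.map G.ini).Nodup ∧ (γ.map G.ter).Nodup ∧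
    List.Chain' (fun e _ => G.degree (G.ter e) = 2) γ ∧
    A = {e | e ∈ γ ∨ G.bar e ∈ γ}

/-- A maximal arc: an arc whose two endpoints have degree `≠ 2`. -/
def IsMaximalArc (G : MGraph) (A : Set G.E) : Prop :=
  ∃ (γ : List G.E) (h : γ ≠ []), IsArcWitness G A γ ∧
    G.degree (G.ini (γ.head h)) ≠ 2 ∧ G.degree (G.ter (γ.getLast h)) ≠ 2

namespace MGraph

variable (G : MGraph)

attribute [local instance 10] Classical.propDecidable

@[simp] lemma ini_bar' (e : G.E) : G.ini (G.bar e) = G.ter e := rfl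

@[simp] lemma ter_bar' (e : G.E) : G.ter (G.bar e) = G.ini e := by
  unfold ter; rw [G.bar_bar]

lemma bar_inj {a b : G.E} (h : G.bar a = G.bar b) : a = b := by
  have := congrArg G.bar h; rwa [G.bar_bar, G.bar_bar] at this

section walks

variable [Fintype G.E]

lemma degree_eq_card (v : G.V) :
    G.degree v = (Finset.univ.filter fun e : G.E => G.ini e = v).card := by
  rw [degree, Nat.card_eq_fintype_card, Fintype.card_subtype]

lemma star_pair {v : G.V} (h2 : G.degree v = 2) {a b : G.E}
    (ha : G.ini a = v) (hb : G.ini b = v) (hab : a ≠ b) :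
    ∀ z, G.ini z = v → z = a ∨ z = b := by
  classical
  intro z hz
  rw [G.degree_eq_card] at h2
  obtain ⟨x, y, hxy, hs⟩ := Finset.card_eq_two.1 h2
  have hmem : ∀ w : G.E, G.ini w = v → w = x ∨ w = y := by
    intro w hw
    have hw' : w ∈ Finset.univ.filter fun e : G.E => G.ini e = v := by simp [hw]
    rw [hs] at hw'
    simpa using hw'
  rcases hmem a ha with rfl | rfl <;> rcases hmem b hb with rfl | rfl <;>
    rcases hmem z hz with h2' | h2' <;> tauto

lemma star_exists {v : G.V} (h2 : G.degree v = 2) {a : G.E} (ha : G.ini a = v) :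
    ∃ z, G.ini z = v ∧ z ≠ a := by
  classical
  rw [G.degree_eq_card] at h2
  obtain ⟨x, y, hxy, hs⟩ := Finset.card_eq_two.1 h2
  have hx : G.ini x = v := by
    have hx' : x ∈ Finset.univ.filter fun e : G.E => G.ini e = v := by rw [hs]; simp
    simpa using hx'
  have hy : G.ini y = v := by
    have hy' : y ∈ Finset.univ.filter fun e : G.E => G.ini e = v := by rw [hs]; simp
    simpa using hy'
  by_cases hax : a = x
  · exact ⟨y, hy, fun h => hxy ((h.trans hax).symm)⟩
  · exact ⟨x, hx, fun h => hax h.symm⟩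

open Classical in
noncomputable def next (e : G.E) : G.E :=
  if h : ∃ z, G.ini z = G.ter e ∧ z ≠ G.bar e then h.choose else e

lemma next_spec {e : G.E} (h2 : G.degree (G.ter e) = 2) :
    G.ini (G.next e) = G.ter e ∧ G.next e ≠ G.bar e := by
  have h : ∃ z, G.ini z = G.ter e ∧ z ≠ G.bar e :=
    G.star_exists h2 (G.ini_bar' e)
  rw [next, dif_pos h]
  exact h.choose_spec

lemma next_ini {e : G.E} (h2 : G.degree (G.ter e) = 2) :
    G.ini (G.next e) = G.ter e := (G.next_spec h2).1

lemma next_ne_bar {e : G.E} (h2 : G.degree (G.ter e) = 2) :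
    G.next e ≠ G.bar e := (G.next_spec h2).2

lemma next_eq_or {e z : G.E} (h2 : G.degree (G.ter e) = 2) (hz : G.ini z = G.ter e) :
    z = G.next e ∨ z = G.bar e :=
  G.star_pair h2 (G.next_ini h2) (G.ini_bar' e) (G.next_ne_bar h2) z hz

lemma back_det {a b : G.E} (ha : G.degree (G.ter a) = 2) (hb : G.degree (G.ter b) = 2)
    (h : G.next a = G.next b) : a = b := by
  have hter : G.ter a = G.ter b := by rw [← G.next_ini ha, h, G.next_ini hb]
  have hbb : G.ini (G.bar b) = G.ter a := by rw [G.ini_bar', hter]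
  rcases G.next_eq_or ha hbb with h1 | h1
  · exact absurd (h1.trans h).symm (G.next_ne_bar hb)
  · exact G.bar_inj h1.symm

lemma next_bar_next {w : G.E} (h2 : G.degree (G.ter w) = 2) :
    G.next (G.bar (G.next w)) = G.bar w := by
  have hterx : G.ter (G.bar (G.next w)) = G.ter w := by rw [G.ter_bar', G.next_ini h2]
  have h2x : G.degree (G.ter (G.bar (G.next w))) = 2 := by rw [hterx]; exact h2
  have hini : G.ini (G.next (G.bar (G.next w))) = G.ter w := by rw [G.next_ini h2x, hterx]
  rcases G.next_eq_or h2 hini with h1 | h1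
  · exfalso
    apply G.next_ne_bar h2x
    rw [h1, G.bar_bar]
  · exact h1

noncomputable def walkAux : ℕ → G.E → List G.E
  | 0, e => [e]
  | n+1, e => if G.degree (G.ter e) = 2 then e :: walkAux n (G.next e) else [e]

private lemma get_eq_of_eq {α : Type*} {l1 l2 : List α} (h : l1 = l2) {i : ℕ} (h1 : i < l1.length) :
    l1.get ⟨i, h1⟩ = l2.get ⟨i, h ▸ h1⟩ := by subst h; rfl

lemma walkAux_cons (n : ℕ) (e : G.E) : ∃ t, G.walkAux n e = e :: t := by
  cases n with
  | zero => exact ⟨[], rfl⟩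
  | succ n =>
    by_cases h : G.degree (G.ter e) = 2
    · exact ⟨_, by rw [walkAux, if_pos h]⟩
    · exact ⟨[], by rw [walkAux, if_neg h]⟩

lemma walkAux_ne_nil (n : ℕ) (e : G.E) : G.walkAux n e ≠ [] := by
  obtain ⟨t, ht⟩ := G.walkAux_cons n e; simp [ht]

lemma walkAux_head (n : ℕ) (e : G.E) (h : G.walkAux n e ≠ []) :
    (G.walkAux n e).head h = e := by
  obtain ⟨t, ht⟩ := G.walkAux_cons n e
  simp only [ht, List.head_cons]

lemma walkAux_mem (n : ℕ) (e : G.E) : e ∈ G.walkAux n e := by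
  obtain ⟨t, ht⟩ := G.walkAux_cons n e; simp [ht]

lemma walkAux_length (n : ℕ) (e : G.E) : (G.walkAux n e).length ≤ n + 1 := by
  induction n generalizing e with
  | zero => simp [walkAux]
  | succ n IH =>
    by_cases h : G.degree (G.ter e) = 2
    · rw [walkAux, if_pos h]
      simpa using Nat.succ_le_succ (IH (G.next e))
    · rw [walkAux, if_neg h]; simp

lemma walkAux_get (n : ℕ) (e : G.E) (i : ℕ) (h : i < (G.walkAux n e).length) :
    (G.walkAux n e).get ⟨i, h⟩ = G.next^[i] e := by
  induction n generalizing e i with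
  | zero =>
    have hi : i = 0 := by simpa [walkAux] using h
    subst hi; simp [walkAux]
  | succ n IH =>
    by_cases hdeg : G.degree (G.ter e) = 2
    · have hl : G.walkAux (n+1) e = e :: G.walkAux n (G.next e) := by
        rw [walkAux, if_pos hdeg]
      have h' : i < (e :: G.walkAux n (G.next e)).length := by rw [← hl]; exact h
      rw [get_eq_of_eq hl]
      cases i with
      | zero => simp
      | succ i =>
        have h'' : i < (G.walkAux n (G.next e)).length := by simpa using h'
        have := IH (G.next e) i h''
        simp only [List.get_cons_succ]
        rw [this, Function.iterate_succ_apply]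
    · have hl : G.walkAux (n+1) e = [e] := by rw [walkAux, if_neg hdeg]
      have h' : i < ([e] : List G.E).length := by rw [← hl]; exact h
      have hi : i = 0 := by simpa using h'
      subst hi
      rw [get_eq_of_eq hl]; simp

lemma walkAux_chain' (n : ℕ) (e : G.E) :
    List.Chain' (fun a b => G.degree (G.ter a) = 2 ∧ G.next a = b) (G.walkAux n e) := by
  induction n generalizing e with
  | zero => simp [walkAux, List.Chain']
  | succ n IH =>
    by_cases h : G.degree (G.ter e) = 2
    · rw [walkAux, if_pos h]
      refine List.isChain_cons.2 ⟨?_, IH (G.next e)⟩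
      intro b hb
      obtain ⟨t, ht⟩ := G.walkAux_cons n (G.next e)
      rw [ht] at hb
      simp only [List.head?_cons, Option.mem_def, Option.some.injEq] at hb
      exact ⟨h, hb⟩
    · rw [walkAux, if_neg h]; simp [List.Chain']

private lemma getLast_eq_of_eq {α : Type*} {l1 l2 : List α} (h : l1 = l2) (h1 : l1 ≠ []) :
    l1.getLast h1 = l2.getLast (h ▸ h1) := by subst h; rfl

lemma walkAux_getLast (n : ℕ) (e : G.E)
    (hstop : ∃ j, j ≤ n ∧ G.degree (G.ter (G.next^[j] e)) ≠ 2) :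
    G.degree (G.ter ((G.walkAux n e).getLast (G.walkAux_ne_nil n e))) ≠ 2 := by
  induction n generalizing e with
  | zero =>
    obtain ⟨j, hj, hne⟩ := hstop
    have hj0 : j = 0 := by omega
    subst hj0
    have hl : G.walkAux 0 e = [e] := rfl
    rw [getLast_eq_of_eq hl]
    simpa using hne
  | succ n IH =>
    by_cases h : G.degree (G.ter e) = 2
    · have hl : G.walkAux (n+1) e = e :: G.walkAux n (G.next e) := by
        rw [walkAux, if_pos h]
      rw [getLast_eq_of_eq hl, List.getLast_cons (G.walkAux_ne_nil n (G.next e))]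
      apply IH
      obtain ⟨j, hj, hne⟩ := hstop
      have hj0 : j ≠ 0 := by
        intro h0; subst h0; simp at hne; exact hne h
      have hiter : G.next^[j-1] (G.next e) = G.next^[j] e := by
        rw [← Function.iterate_succ_apply]
        congr 1
        omega
      exact ⟨j - 1, by omega, by rw [hiter]; exact hne⟩
    · have hl : G.walkAux (n+1) e = [e] := by rw [walkAux, if_neg h]
      rw [getLast_eq_of_eq hl]
      simpa using h

lemma ini_iter_succ (e : G.E) (k : ℕ) (h2 : G.degree (G.ter (G.next^[k] e)) = 2) :
    G.ini (G.next^[k+1] e) = G.ter (G.next^[k] e) := by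
  rw [Function.iterate_succ_apply']
  exact G.next_ini h2

lemma iter_ne (e : G.E) (K : ℕ) (H : ∀ i, i < K → G.degree (G.ter (G.next^[i] e)) = 2)
    (hS : G.degree (G.ini e) ≠ 2) :
    ∀ i j, i < j → j ≤ K → G.next^[i] e ≠ G.next^[j] e := by
  intro i
  induction i with
  | zero =>
    intro j hij hjK heq
    obtain ⟨j', rfl⟩ : ∃ j', j = j' + 1 := ⟨j - 1, by omega⟩
    have h2j : G.degree (G.ter (G.next^[j'] e)) = 2 := H j' (by omega)
    apply hS
    have h0 := congrArg G.ini heq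
    rw [Function.iterate_zero_apply, G.ini_iter_succ e j' h2j] at h0
    rw [h0]; exact h2j
  | succ i IH =>
    intro j hij hjK heq
    obtain ⟨j', rfl⟩ : ∃ j', j = j' + 1 := ⟨j - 1, by omega⟩
    have h2i : G.degree (G.ter (G.next^[i] e)) = 2 := H i (by omega)
    have h2j : G.degree (G.ter (G.next^[j'] e)) = 2 := H j' (by omega)
    rw [Function.iterate_succ_apply', Function.iterate_succ_apply'] at heq
    exact IH j' (by omega) (by omega) (G.back_det h2i h2j heq)

lemma no_rev (e : G.E) (K : ℕ) (H : ∀ i, i < K → G.degree (G.ter (G.next^[i] e)) = 2) :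
    ∀ a b, a ≤ b → b ≤ K → G.next^[b] e ≠ G.bar (G.next^[a] e) := by
  have key : ∀ d a b, b - a = d → a ≤ b → b ≤ K →
      G.next^[b] e ≠ G.bar (G.next^[a] e) := by
    intro d
    induction d using Nat.strong_induction_on with
    | _ d IH =>
      intro a b hd hab hbK heq
      rcases Nat.lt_or_ge d 2 with hd2 | hd2
      · rcases Nat.lt_or_ge d 1 with hd1 | hd1
        · have hba : b = a := by omega
          rw [hba] at heq
          exact G.bar_ne _ heq.symm
        · have hba : b = a + 1 := by omega
          rw [hba, Function.iterate_succ_apply'] at heq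
          exact G.next_ne_bar (H a (by omega)) heq
      · have h2a : G.degree (G.ter (G.next^[a] e)) = 2 := H a (by omega)
        obtain ⟨b', rfl⟩ : ∃ b', b = b' + 1 := ⟨b - 1, by omega⟩
        rw [Function.iterate_succ_apply'] at heq
        have e2 : G.next (G.bar (G.next^[a+1] e)) = G.bar (G.next^[a] e) := by
          rw [Function.iterate_succ_apply']
          exact G.next_bar_next h2a
        have hdeg1 : G.degree (G.ter (G.next^[b'] e)) = 2 := H b' (by omega)
        have hdeg2 : G.degree (G.ter (G.bar (G.next^[a+1] e))) = 2 := by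
          rw [G.ter_bar', Function.iterate_succ_apply', G.next_ini h2a]
          exact h2a
        exact IH (d-2) (by omega) (a+1) b' (by omega) (by omega) (by omega)
          (G.back_det hdeg1 hdeg2 (heq.trans e2.symm))
  intro a b hab hbK
  exact key (b - a) a b rfl hab hbK

lemma vert_ne (e : G.E) (K : ℕ) (H : ∀ i, i < K → G.degree (G.ter (G.next^[i] e)) = 2)
    (hS : G.degree (G.ini e) ≠ 2) :
    ∀ i j, i < j → j ≤ K → G.ini (G.next^[i] e) ≠ G.ini (G.next^[j] e) := by
  intro i j hij hjK heq
  obtain ⟨j', rfl⟩ : ∃ j', j = j' + 1 := ⟨j - 1, by omega⟩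
  have h2j : G.degree (G.ter (G.next^[j'] e)) = 2 := H j' (by omega)
  have hvj : G.ini (G.next^[j'+1] e) = G.ter (G.next^[j'] e) := G.ini_iter_succ e j' h2j
  rcases Nat.eq_zero_or_pos i with rfl | hi
  · apply hS
    rw [Function.iterate_zero_apply] at heq
    rw [heq, hvj]; exact h2j
  · have hdegv : G.degree (G.ini (G.next^[j'+1] e)) = 2 := by rw [hvj]; exact h2j
    have hb : G.ini (G.bar (G.next^[j'] e)) = G.ini (G.next^[j'+1] e) := by
      rw [G.ini_bar', hvj]
    have hane : G.next^[j'+1] e ≠ G.bar (G.next^[j'] e) := by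
      rw [Function.iterate_succ_apply']
      exact G.next_ne_bar h2j
    rcases G.star_pair hdegv rfl hb hane (G.next^[i] e) heq with h1 | h1
    · exact G.iter_ne e K H hS i (j'+1) hij hjK h1
    · have h2 : G.next^[j'] e = G.bar (G.next^[i] e) := by rw [h1, G.bar_bar]
      exact G.no_rev e K H i j' (by omega) (by omega) h2

lemma exists_stop (e : G.E) (hS : G.degree (G.ini e) ≠ 2) :
    ∃ j, j ≤ Fintype.card G.E ∧ G.degree (G.ter (G.next^[j] e)) ≠ 2 := by
  by_contra hcon
  push_neg at hcon
  have H : ∀ i, i < Fintype.card G.E + 1 → G.degree (G.ter (G.next^[i] e)) = 2 :=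
    fun i hi => hcon i (by omega)
  have hinj : Function.Injective
      (fun i : Fin (Fintype.card G.E + 2) => G.next^[(i : ℕ)] e) := by
    intro i j hij
    rcases lt_trichotomy (i : ℕ) (j : ℕ) with h | h | h
    · exact absurd hij (G.iter_ne e _ H hS i j h (Nat.lt_succ_iff.mp j.isLt))
    · exact Fin.ext h
    · exact absurd hij.symm (G.iter_ne e _ H hS j i h (Nat.lt_succ_iff.mp i.isLt))
  have hcard := Fintype.card_le_of_injective _ hinj
  simp only [Fintype.card_fin] at hcard
  omega

noncomputable def walk (e : G.E) : List G.E := G.walkAux (Fintype.card G.E) e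

lemma walk_ne_nil (e : G.E) : G.walk e ≠ [] := G.walkAux_ne_nil _ _

lemma walk_head (e : G.E) (h : G.walk e ≠ []) : (G.walk e).head h = e :=
  G.walkAux_head _ _ _

lemma walk_mem (e : G.E) : e ∈ G.walk e := G.walkAux_mem _ _

lemma walk_chain' (e : G.E) :
    List.Chain' (fun a b => G.degree (G.ter a) = 2 ∧ G.next a = b) (G.walk e) :=
  G.walkAux_chain' _ _

lemma walk_get (e : G.E) (i : ℕ) (h : i < (G.walk e).length) :
    (G.walk e).get ⟨i, h⟩ = G.next^[i] e := G.walkAux_get _ _ _ _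

lemma walk_H (e : G.E) : ∀ i, i + 1 < (G.walk e).length →
    G.degree (G.ter (G.next^[i] e)) = 2 := by
  intro i hi
  have hc := List.isChain_iff_getElem.1 (G.walk_chain' e) i (by omega)
  rw [show (G.walk e)[i] = G.next^[i] e from G.walk_get e i (by omega)] at hc
  exact hc.1

lemma walk_getLast_deg (e : G.E) (hS : G.degree (G.ini e) ≠ 2) :
    G.degree (G.ter ((G.walk e).getLast (G.walk_ne_nil e))) ≠ 2 :=
  G.walkAux_getLast _ _ (G.exists_stop e hS)

lemma walk_getLast_eq (e : G.E) :
    (G.walk e).getLast (G.walk_ne_nil e) = G.next^[(G.walk e).length - 1] e := by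
  rw [List.getLast_eq_getElem]
  exact G.walk_get e _ _

lemma walk_nodup_ini (e : G.E) (hS : G.degree (G.ini e) ≠ 2) :
    ((G.walk e).map G.ini).Nodup := by
  rw [List.nodup_iff_injective_get]
  intro i j hij
  have hi : (i : ℕ) < (G.walk e).length := by
    have := i.isLt; simpa using this
  have hj : (j : ℕ) < (G.walk e).length := by
    have := j.isLt; simpa using this
  simp only [List.get_eq_getElem, List.getElem_map] at hij
  rw [show (G.walk e)[(i : ℕ)] = _ from G.walk_get e _ hi,
    show (G.walk e)[(j : ℕ)] = _ from G.walk_get e _ hj] at hij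
  have hK : ∀ t, t < (G.walk e).length - 1 → G.degree (G.ter (G.next^[t] e)) = 2 :=
    fun t ht => G.walk_H e t (by omega)
  rcases lt_trichotomy (i : ℕ) (j : ℕ) with h | h | h
  · exact absurd hij (G.vert_ne e _ hK hS i j h (by omega))
  · exact Fin.ext h
  · exact absurd hij.symm (G.vert_ne e _ hK hS j i h (by omega))

lemma walk_nodup_ter (e : G.E) (hS : G.degree (G.ini e) ≠ 2) :
    ((G.walk e).map G.ter).Nodup := by
  have hK : ∀ t, t < (G.walk e).length - 1 → G.degree (G.ter (G.next^[t] e)) = 2 :=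
    fun t ht => G.walk_H e t (by omega)
  have hlast : G.degree (G.ter (G.next^[(G.walk e).length - 1] e)) ≠ 2 := by
    rw [← G.walk_getLast_eq e]
    exact G.walk_getLast_deg e hS
  have key : ∀ i j : ℕ, i < j → j < (G.walk e).length →
      G.ter (G.next^[i] e) ≠ G.ter (G.next^[j] e) := by
    intro i j hij hjL heq
    rcases Nat.lt_or_ge j ((G.walk e).length - 1) with hj | hj
    · have hi2 : G.degree (G.ter (G.next^[i] e)) = 2 := hK i (by omega)
      have hj2 : G.degree (G.ter (G.next^[j] e)) = 2 := hK j (by omega)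
      have e1 : G.ini (G.next^[i+1] e) = G.ter (G.next^[i] e) := G.ini_iter_succ e i hi2
      have e2 : G.ini (G.next^[j+1] e) = G.ter (G.next^[j] e) := G.ini_iter_succ e j hj2
      exact G.vert_ne e _ hK hS (i+1) (j+1) (by omega) (by omega)
        (by rw [e1, e2]; exact heq)
    · have hj' : j = (G.walk e).length - 1 := by omega
      have hi2 : G.degree (G.ter (G.next^[i] e)) = 2 := hK i (by omega)
      rw [heq, hj'] at hi2
      exact hlast hi2
  rw [List.nodup_iff_injective_get]
  intro i j hij
  have hi : (i : ℕ) < (G.walk e).length := by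
    have := i.isLt; simpa using this
  have hj : (j : ℕ) < (G.walk e).length := by
    have := j.isLt; simpa using this
  simp only [List.get_eq_getElem, List.getElem_map] at hij
  rw [show (G.walk e)[(i : ℕ)] = _ from G.walk_get e _ hi,
    show (G.walk e)[(j : ℕ)] = _ from G.walk_get e _ hj] at hij
  rcases lt_trichotomy (i : ℕ) (j : ℕ) with h | h | h
  · exact absurd hij (key i j h hj)
  · exact Fin.ext h
  · exact absurd hij.symm (key j i h hi)

lemma walk_isArcWitness (e : G.E) (hS : G.degree (G.ini e) ≠ 2) :
    IsArcWitness G {z | z ∈ G.walk e ∨ G.bar z ∈ G.walk e} (G.walk e) := by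
  refine ⟨G.walk_ne_nil e, ?_, G.walk_nodup_ini e hS, G.walk_nodup_ter e hS, ?_, rfl⟩
  · exact (G.walk_chain' e).imp (fun {a b} h => by rw [← h.2, G.next_ini h.1])
  · exact (G.walk_chain' e).imp (fun {a b} h => h.1)

lemma walk_isMaximalArc (e : G.E) (hS : G.degree (G.ini e) ≠ 2) :
    IsMaximalArc G {z | z ∈ G.walk e ∨ G.bar z ∈ G.walk e} := by
  refine ⟨G.walk e, G.walk_ne_nil e, G.walk_isArcWitness e hS, ?_, ?_⟩
  · rw [G.walk_head]; exact hS
  · exact G.walk_getLast_deg e hS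

lemma walkAux_unique : ∀ (n : ℕ) (l : List G.E) (hl : l ≠ [])
    (_ : List.Chain' (fun a b => G.degree (G.ter a) = 2 ∧ G.next a = b) l)
    (_ : G.degree (G.ter (l.getLast hl)) ≠ 2)
    (_ : l.length ≤ n + 1),
    G.walkAux n (l.head hl) = l := by
  intro n
  induction n with
  | zero =>
    intro l hl hc hlast hlen
    match l, hl with
    | [a], _ => rfl
    | a :: b :: t, _ => simp at hlen
  | succ n IH =>
    intro l hl hc hlast hlen
    match l, hl with
    | [a], _ =>
      have ha : G.degree (G.ter a) ≠ 2 := by simpa using hlast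
      simp only [List.head_cons]
      rw [walkAux, if_neg ha]
    | a :: b :: t, _ =>
      obtain ⟨⟨hdeg2, hnext⟩, hctail⟩ := List.isChain_cons_cons.1 hc
      simp only [List.head_cons]
      rw [walkAux, if_pos hdeg2, hnext]
      have hlast' : G.degree (G.ter ((b :: t).getLast (by simp))) ≠ 2 := by
        rw [List.getLast_cons (l := b :: t) (by simp)] at hlast
        exact hlast
      have htail := IH (b :: t) (by simp) hctail hlast' (by simpa using hlen)
      rw [List.head_cons] at htail
      rw [htail]

noncomputable def wrev (e : G.E) : G.E := G.bar ((G.walk e).getLast (G.walk_ne_nil e))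

lemma wrev_deg (e : G.E) (hS : G.degree (G.ini e) ≠ 2) :
    G.degree (G.ini (G.wrev e)) ≠ 2 := by
  rw [wrev, G.ini_bar']
  exact G.walk_getLast_deg e hS

lemma wrev_ne (e : G.E) (hS : G.degree (G.ini e) ≠ 2) : G.wrev e ≠ e := by
  rw [wrev, G.walk_getLast_eq e]
  intro h
  have h' : G.next^[(G.walk e).length - 1] e = G.bar e := by
    rw [← G.bar_bar (G.next^[(G.walk e).length - 1] e), h]
  have hK : ∀ t, t < (G.walk e).length - 1 → G.degree (G.ter (G.next^[t] e)) = 2 :=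
    fun t ht => G.walk_H e t (by omega)
  exact G.no_rev e ((G.walk e).length - 1) hK 0 ((G.walk e).length - 1)
    (by omega) le_rfl (by simpa using h')

lemma walk_wrev (e : G.E) (hS : G.degree (G.ini e) ≠ 2) :
    G.walk (G.wrev e) = ((G.walk e).map G.bar).reverse := by
  have hmapne : (G.walk e).map G.bar ≠ [] := by
    simp [G.walk_ne_nil e]
  have hl : ((G.walk e).map G.bar).reverse ≠ [] := by
    simp [G.walk_ne_nil e]
  have hhead : (((G.walk e).map G.bar).reverse).head hl = G.wrev e := by
    rw [List.head_reverse, List.getLast_map]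
    rfl
  have hchain : List.Chain' (fun a b => G.degree (G.ter a) = 2 ∧ G.next a = b)
      (((G.walk e).map G.bar).reverse) := by
    unfold List.Chain'
    rw [List.isChain_reverse, List.isChain_map]
    refine (G.walk_chain' e).imp (fun {a b} h => ?_)
    have h1 : G.degree (G.ter (G.bar b)) = 2 := by
      rw [G.ter_bar', ← h.2, G.next_ini h.1]
      exact h.1
    refine ⟨h1, ?_⟩
    rw [← h.2]
    exact G.next_bar_next h.1
  have hlast : G.degree (G.ter ((((G.walk e).map G.bar).reverse).getLast hl)) ≠ 2 := by
    rw [List.getLast_reverse, List.head_map, G.ter_bar', G.walk_head]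
    exact hS
  have hlen : (((G.walk e).map G.bar).reverse).length ≤ Fintype.card G.E + 1 := by
    simpa [walk] using G.walkAux_length (Fintype.card G.E) e
  have := G.walkAux_unique (Fintype.card G.E) (((G.walk e).map G.bar).reverse)
    hl hchain hlast hlen
  rw [hhead] at this
  exact this

lemma arcSet_wrev (e : G.E) (hS : G.degree (G.ini e) ≠ 2) :
    {z | z ∈ G.walk (G.wrev e) ∨ G.bar z ∈ G.walk (G.wrev e)} =
      {z | z ∈ G.walk e ∨ G.bar z ∈ G.walk e} := by
  have hmem : ∀ y : G.E, (y ∈ ((G.walk e).map G.bar).reverse) ↔ G.bar y ∈ G.walk e := by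
    intro y
    rw [List.mem_reverse, List.mem_map]
    constructor
    · rintro ⟨a, ha, rfl⟩
      rwa [G.bar_bar]
    · intro h
      exact ⟨G.bar y, h, G.bar_bar y⟩
  ext z
  simp only [Set.mem_setOf_eq, G.walk_wrev e hS, hmem, G.bar_bar]
  tauto

lemma covered_of_ini (z : G.E) (h : G.degree (G.ini z) ≠ 2) :
    ∃ x, G.degree (G.ini x) ≠ 2 ∧ (z ∈ G.walk x ∨ G.bar z ∈ G.walk x) :=
  ⟨z, h, Or.inl (G.walk_mem z)⟩

lemma covered_of_ter (z : G.E) (h : G.degree (G.ter z) ≠ 2) :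
    ∃ x, G.degree (G.ini x) ≠ 2 ∧ (z ∈ G.walk x ∨ G.bar z ∈ G.walk x) :=
  ⟨G.bar z, by rw [G.ini_bar']; exact h, Or.inr (G.walk_mem (G.bar z))⟩

private lemma chain'_mem_pred {α : Type*} {R : α → α → Prop} :
    ∀ {l : List α} (hl : l ≠ []), List.Chain' R l →
      ∀ a ∈ l, a ≠ l.head hl → ∃ b ∈ l, R b a := by
  intro l
  induction l with
  | nil => simp
  | cons x t IH =>
    intro hl hc a ha hne
    simp only [List.head_cons] at hne
    rcases List.mem_cons.1 ha with rfl | hat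
    · exact absurd rfl hne
    · cases t with
      | nil => simp at hat
      | cons y s =>
        obtain ⟨hr, hct⟩ := List.isChain_cons_cons.1 hc
        by_cases hay : a = y
        · subst hay
          exact ⟨x, by simp, hr⟩
        · obtain ⟨b, hb, hrb⟩ := IH (by simp) hct a hat (by simpa using hay)
          exact ⟨b, List.mem_cons_of_mem _ hb, hrb⟩

private lemma chain'_mem_succ {α : Type*} {R : α → α → Prop} :
    ∀ {l : List α} (hl : l ≠ []), List.Chain' R l →
      ∀ a ∈ l, a ≠ l.getLast hl → ∃ b ∈ l, R a b := by
  intro l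
  induction l with
  | nil => simp
  | cons x t IH =>
    intro hl hc a ha hne
    cases t with
    | nil =>
      simp only [List.mem_singleton] at ha
      subst ha
      simp at hne
    | cons y s =>
      obtain ⟨hr, hct⟩ := List.isChain_cons_cons.1 hc
      rcases List.mem_cons.1 ha with rfl | hat
      · exact ⟨y, by simp, hr⟩
      · have hne' : a ≠ (y :: s).getLast (by simp) := by
          rw [List.getLast_cons (l := y :: s) (by simp)] at hne
          exact hne
        obtain ⟨b, hb, hrb⟩ := IH (by simp) hct a hat hne'
        exact ⟨b, List.mem_cons_of_mem _ hb, hrb⟩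

lemma covered_next (z : G.E) (h2i : G.degree (G.ini z) = 2) (h2t : G.degree (G.ter z) = 2)
    (hcov : ∃ x, G.degree (G.ini x) ≠ 2 ∧
      (G.next z ∈ G.walk x ∨ G.bar (G.next z) ∈ G.walk x)) :
    ∃ x, G.degree (G.ini x) ≠ 2 ∧ (z ∈ G.walk x ∨ G.bar z ∈ G.walk x) := by
  obtain ⟨x, hx, hc | hc⟩ := hcov
  · have hh : G.next z ≠ (G.walk x).head (G.walk_ne_nil x) := by
      rw [G.walk_head]
      intro h
      apply hx
      rw [← h, G.next_ini h2t]
      exact h2t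
    obtain ⟨b, hbmem, hdb, hnb⟩ := chain'_mem_pred (G.walk_ne_nil x) (G.walk_chain' x)
      (G.next z) hc hh
    have hbz : b = z := G.back_det hdb h2t hnb
    exact ⟨x, hx, Or.inl (hbz ▸ hbmem)⟩
  · have hdw : G.degree (G.ter (G.bar (G.next z))) = 2 := by
      rw [G.ter_bar', G.next_ini h2t]
      exact h2t
    have hne : G.bar (G.next z) ≠ (G.walk x).getLast (G.walk_ne_nil x) := by
      intro h
      apply G.walk_getLast_deg x hx
      rw [← h]
      exact hdw
    obtain ⟨b, hbmem, hdb, hnb⟩ := chain'_mem_succ (G.walk_ne_nil x) (G.walk_chain' x)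
      (G.bar (G.next z)) hc hne
    have : b = G.bar z := by rw [← hnb, G.next_bar_next h2t]
    exact ⟨x, hx, Or.inr (this ▸ hbmem)⟩

end walks

lemma adj_symm {u v : G.V} (h : G.Adj u v) : G.Adj v u := by
  obtain ⟨e, he1, he2⟩ := h
  exact ⟨G.bar e, by rw [G.ini_bar', he2], by rw [G.ter_bar', he1]⟩

lemma closure_univ (hconn : G.Connected) (C : Set G.V) (hne : C.Nonempty)
    (hcl : ∀ u v, u ∈ C → G.Adj u v → v ∈ C) : ∀ v, v ∈ C := by
  obtain ⟨w, hw⟩ := hne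
  have key : ∀ a b, Relation.EqvGen G.Adj a b → (a ∈ C ↔ b ∈ C) := by
    intro a b h
    induction h with
    | rel a b hab => exact ⟨fun ha => hcl a b ha hab, fun hb => hcl b a hb (G.adj_symm hab)⟩
    | refl a => exact Iff.rfl
    | symm a b _ IH => exact IH.symm
    | trans a b c _ _ IH1 IH2 => exact IH1.trans IH2
  intro v
  exact (key w v (hconn.2 w v)).1 hw

lemma ncomp_eq_one (hconn : G.Connected) : G.ncomp = 1 := by
  rw [ncomp, Nat.card_eq_one_iff_unique]
  refine ⟨⟨fun a b => ?_⟩, ⟨Quotient.mk (G.compSetoid) hconn.1.some⟩⟩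
  exact Quotient.inductionOn₂ a b fun u v => Quotient.sound (hconn.2 u v)

section counting

variable [Fintype G.E] [Fintype G.V]

lemma even_card_edges : 2 ∣ Fintype.card G.E := by
  suffices h : ∀ s : Finset G.E, (∀ x ∈ s, G.bar x ∈ s) → 2 ∣ s.card by
    rw [← Finset.card_univ]
    exact h Finset.univ (fun x _ => Finset.mem_univ _)
  intro s
  induction s using Finset.strongInduction with
  | _ s IH =>
    intro hs
    rcases Finset.eq_empty_or_nonempty s with rfl | ⟨x, hx⟩
    · simp
    · have hbx : G.bar x ∈ s := hs x hx
      have hbne := G.bar_ne x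
      have hbxe : G.bar x ∈ s.erase x := Finset.mem_erase.2 ⟨hbne, hbx⟩
      have hsub : (s.erase x).erase (G.bar x) ⊆ s :=
        subset_trans (Finset.erase_subset _ _) (Finset.erase_subset _ _)
      have hxnot : x ∉ (s.erase x).erase (G.bar x) := by
        intro h
        exact absurd rfl (Finset.mem_erase.1 (Finset.mem_erase.1 h).2).1
      have hss : (s.erase x).erase (G.bar x) ⊂ s :=
        (Finset.ssubset_iff_of_subset hsub).2 ⟨x, hx, hxnot⟩
      have hcl : ∀ y ∈ (s.erase x).erase (G.bar x), G.bar y ∈ (s.erase x).erase (G.bar x) := by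
        intro y hy
        have hy1 : y ≠ G.bar x := (Finset.mem_erase.1 hy).1
        have hy2 : y ≠ x := (Finset.mem_erase.1 (Finset.mem_erase.1 hy).2).1
        have hy3 : y ∈ s := (Finset.mem_erase.1 (Finset.mem_erase.1 hy).2).2
        refine Finset.mem_erase.2 ⟨?_, Finset.mem_erase.2 ⟨?_, hs y hy3⟩⟩
        · intro h
          exact hy2 (by rw [← G.bar_bar y, h, G.bar_bar])
        · intro h
          exact hy1 (G.bar_inj (by rw [h, G.bar_bar]))
      have hdvd := IH _ hss hcl
      have hc1 : (s.erase x).card = s.card - 1 := Finset.card_erase_of_mem hx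
      have hc2 : ((s.erase x).erase (G.bar x)).card = (s.erase x).card - 1 :=
        Finset.card_erase_of_mem hbxe
      have hge : 2 ≤ s.card := Finset.one_lt_card.2 ⟨x, hx, G.bar x, hbx, (Ne.symm hbne)⟩
      omega

lemma sum_degree : ∑ v : G.V, G.degree v = Fintype.card G.E := by
  have h := Finset.card_eq_sum_card_fiberwise
    (s := (Finset.univ : Finset G.E)) (t := (Finset.univ : Finset G.V)) (f := G.ini)
    (fun x _ => Finset.mem_univ _)
  rw [Finset.card_univ] at h
  rw [h]
  refine Finset.sum_congr rfl fun v _ => ?_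
  rw [G.degree_eq_card]

lemma card_relation (hconn : G.Connected) {m : ℕ} (hb : G.betti = (m : ℤ)) :
    Fintype.card G.E + 2 = 2 * Fintype.card G.V + 2 * m := by
  have h1 : G.ncomp = 1 := G.ncomp_eq_one hconn
  obtain ⟨t, ht⟩ := G.even_card_edges
  rw [betti, h1] at hb
  rw [Nat.card_eq_fintype_card, Nat.card_eq_fintype_card, ht] at hb
  have h2 : 2 * t / 2 = t := by omega
  rw [h2] at hb
  have hz : (Fintype.card G.E : ℤ) + 2 = 2 * (Fintype.card G.V : ℤ) + 2 * m := by
    rw [ht]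
    push_cast
    push_cast at hb
    omega
  exact_mod_cast hz

lemma SF_card_bound (hconn : G.Connected) (hd1 : ∀ v, 1 ≤ G.degree v) {m k : ℕ}
    (hm : 2 ≤ m) (hb : G.betti = (m : ℤ))
    (hk : Nat.card {v : G.V // G.degree v = 1} ≤ k) :
    (Finset.univ.filter fun x : G.E => ¬ G.degree (G.ini x) = 2).card + 6 ≤ 6 * m + 4 * k := by
  have hrel := G.card_relation hconn hb
  have hsum := G.sum_degree
  have hSF : (Finset.univ.filter fun x : G.E => ¬ G.degree (G.ini x) = 2).card
      = ∑ v ∈ Finset.univ.filter (fun v : G.V => ¬ G.degree v = 2), G.degree v := by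
    rw [Finset.card_eq_sum_card_fiberwise
      (t := Finset.univ.filter (fun v : G.V => ¬ G.degree v = 2)) (f := G.ini) ?_]
    · refine Finset.sum_congr rfl fun v hv => ?_
      have hv2 : ¬ G.degree v = 2 := by
        simpa using (Finset.mem_filter.1 hv).2
      rw [G.degree_eq_card]
      congr 1
      ext x
      simp only [Finset.mem_filter, Finset.mem_univ, true_and]
      constructor
      · exact fun h => h.2
      · exact fun h => ⟨by rw [h]; exact hv2, h⟩
    · intro x hx
      simp only [Finset.mem_coe, Finset.mem_filter, Finset.mem_univ, true_and] at hx ⊢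
      exact hx
  have hBsplit : Finset.univ.filter (fun v : G.V => ¬ G.degree v = 2)
      = Finset.univ.filter (fun v : G.V => G.degree v = 1)
        ∪ Finset.univ.filter (fun v : G.V => 3 ≤ G.degree v) := by
    ext v
    simp only [Finset.mem_filter, Finset.mem_univ, true_and, Finset.mem_union]
    have := hd1 v
    omega
  have hdisj : Disjoint (Finset.univ.filter (fun v : G.V => G.degree v = 1))
      (Finset.univ.filter (fun v : G.V => 3 ≤ G.degree v)) := by
    rw [Finset.disjoint_left]
    intro v h1 h3
    simp only [Finset.mem_filter, Finset.mem_univ, true_and] at h1 h3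
    omega
  have hBcard : (Finset.univ.filter (fun v : G.V => ¬ G.degree v = 2)).card
      = (Finset.univ.filter (fun v : G.V => G.degree v = 1)).card
        + (Finset.univ.filter (fun v : G.V => 3 ≤ G.degree v)).card := by
    rw [hBsplit, Finset.card_union_of_disjoint hdisj]
  have hBsum : ∑ v ∈ Finset.univ.filter (fun v : G.V => ¬ G.degree v = 2), G.degree v
      = ∑ v ∈ Finset.univ.filter (fun v : G.V => G.degree v = 1), G.degree v
        + ∑ v ∈ Finset.univ.filter (fun v : G.V => 3 ≤ G.degree v), G.degree v := by
    rw [hBsplit, Finset.sum_union hdisj]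
  have hsum1 : ∑ v ∈ Finset.univ.filter (fun v : G.V => G.degree v = 1), G.degree v
      = (Finset.univ.filter (fun v : G.V => G.degree v = 1)).card := by
    rw [Finset.sum_congr rfl (fun v hv => by
      simpa using (Finset.mem_filter.1 hv).2)]
    simp
  have hsum3 : 3 * (Finset.univ.filter (fun v : G.V => 3 ≤ G.degree v)).card
      ≤ ∑ v ∈ Finset.univ.filter (fun v : G.V => 3 ≤ G.degree v), G.degree v := by
    have h3 : ∑ _v ∈ Finset.univ.filter (fun v : G.V => 3 ≤ G.degree v), 3
        ≤ ∑ v ∈ Finset.univ.filter (fun v : G.V => 3 ≤ G.degree v), G.degree v :=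
      Finset.sum_le_sum (fun v hv => by simpa using (Finset.mem_filter.1 hv).2)
    simpa [Finset.sum_const, mul_comm] using h3
  have hB1k : (Finset.univ.filter (fun v : G.V => G.degree v = 1)).card ≤ k := by
    have h1 : Nat.card {v : G.V // G.degree v = 1}
        = (Finset.univ.filter (fun v : G.V => G.degree v = 1)).card := by
      rw [Nat.card_eq_fintype_card, Fintype.card_subtype]
    omega
  have hglobal := Finset.sum_filter_add_sum_filter_not Finset.univ
    (fun v : G.V => G.degree v = 2) G.degree
  have hsumc : ∑ v ∈ Finset.univ.filter (fun v : G.V => G.degree v = 2), G.degree v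
      = 2 * (Finset.univ.filter (fun v : G.V => G.degree v = 2)).card := by
    rw [Finset.sum_congr rfl (fun v hv => by
      simpa using (Finset.mem_filter.1 hv).2)]
    simp [mul_comm]
  have hcards := Finset.card_filter_add_card_filter_not
    (s := (Finset.univ : Finset G.V)) (p := fun v : G.V => G.degree v = 2)
  rw [Finset.card_univ] at hcards
  omega

end counting

lemma master (hfV : Finite G.V) (hfE : Finite G.E)
    (hconn : G.Connected) (hd1 : ∀ v, 1 ≤ G.degree v) (k : ℕ)
    (hk : Nat.card {v : G.V // G.degree v = 1} ≤ k)
    (m : ℕ) (hm : 2 ≤ m) (hb : G.betti = (m : ℤ)) :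
    ∃ arcs : Set (Set G.E), arcs.Finite ∧ Nat.card arcs ≤ 3 * m - 3 + 2 * k ∧
      (∀ A ∈ arcs, IsMaximalArc G A) ∧ ⋃₀ arcs = (Set.univ : Set G.E) := by
  letI : Fintype G.E := Fintype.ofFinite _
  letI : Fintype G.V := Fintype.ofFinite _
  have hcover : ∀ z : G.E, ∃ x, G.degree (G.ini x) ≠ 2 ∧
      (z ∈ G.walk x ∨ G.bar z ∈ G.walk x) := by
    by_contra hcon
    obtain ⟨z0, hz0⟩ := not_forall.1 hcon
    have hdeg : ∀ z : G.E,
        (¬ ∃ x, G.degree (G.ini x) ≠ 2 ∧ (z ∈ G.walk x ∨ G.bar z ∈ G.walk x)) →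
        G.degree (G.ini z) = 2 ∧ G.degree (G.ter z) = 2 := by
      intro z hz
      constructor
      · by_contra h
        exact hz (G.covered_of_ini z h)
      · by_contra h
        exact hz (G.covered_of_ter z h)
    have hbar : ∀ z : G.E,
        (¬ ∃ x, G.degree (G.ini x) ≠ 2 ∧ (z ∈ G.walk x ∨ G.bar z ∈ G.walk x)) →
        (¬ ∃ x, G.degree (G.ini x) ≠ 2 ∧ (G.bar z ∈ G.walk x ∨ G.bar (G.bar z) ∈ G.walk x)) := by
      intro z hz hc
      obtain ⟨x, hx, hc'⟩ := hc
      refine hz ⟨x, hx, ?_⟩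
      rcases hc' with h | h
      · exact Or.inr h
      · rw [G.bar_bar] at h
        exact Or.inl h
    have hnext : ∀ z : G.E,
        (¬ ∃ x, G.degree (G.ini x) ≠ 2 ∧ (z ∈ G.walk x ∨ G.bar z ∈ G.walk x)) →
        (¬ ∃ x, G.degree (G.ini x) ≠ 2 ∧
          (G.next z ∈ G.walk x ∨ G.bar (G.next z) ∈ G.walk x)) := by
      intro z hz hc
      exact hz (G.covered_next z (hdeg z hz).1 (hdeg z hz).2 hc)
    have hCne : ({v : G.V | ∃ z, (¬ ∃ x, G.degree (G.ini x) ≠ 2 ∧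
        (z ∈ G.walk x ∨ G.bar z ∈ G.walk x)) ∧ G.ini z = v} : Set G.V).Nonempty :=
      ⟨G.ini z0, z0, hz0, rfl⟩
    have hCcl : ∀ u v, u ∈ {v : G.V | ∃ z, (¬ ∃ x, G.degree (G.ini x) ≠ 2 ∧
        (z ∈ G.walk x ∨ G.bar z ∈ G.walk x)) ∧ G.ini z = v} → G.Adj u v →
        v ∈ {v : G.V | ∃ z, (¬ ∃ x, G.degree (G.ini x) ≠ 2 ∧
        (z ∈ G.walk x ∨ G.bar z ∈ G.walk x)) ∧ G.ini z = v} := by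
      intro u v hu hadj
      obtain ⟨z, hzunc, rfl⟩ := hu
      obtain ⟨y, hy1, hy2⟩ := hadj
      have h2 : G.degree (G.ini z) = 2 := (hdeg z hzunc).1
      have hzbar2 : G.degree (G.ter (G.bar z)) = 2 := by
        rw [G.ter_bar']
        exact h2
      have hz2unc := hnext _ (hbar z hzunc)
      have hini2 : G.ini (G.next (G.bar z)) = G.ini z := by
        rw [G.next_ini hzbar2, G.ter_bar']
      have hne2 : z ≠ G.next (G.bar z) := by
        intro h
        have hnb := G.next_ne_bar hzbar2
        rw [G.bar_bar] at hnb
        exact hnb h.symm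
      rcases G.star_pair h2 rfl hini2 hne2 y hy1 with h | h
      · refine ⟨G.bar y, ?_, by rw [G.ini_bar', hy2]⟩
        rw [h]
        exact hbar z hzunc
      · refine ⟨G.bar y, ?_, by rw [G.ini_bar', hy2]⟩
        rw [h]
        exact hbar _ hz2unc
    have hall := G.closure_univ hconn _ hCne hCcl
    have hdall : ∀ v, G.degree v = 2 := by
      intro v
      obtain ⟨z, hzunc, hzv⟩ := hall v
      rw [← hzv]
      exact (hdeg z hzunc).1
    have hsum := G.sum_degree
    have hrel := G.card_relation hconn hb
    have hsum2 : ∑ v : G.V, G.degree v = 2 * Fintype.card G.V := by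
      rw [Finset.sum_congr rfl (fun v _ => hdall v), Finset.sum_const, Finset.card_univ,
        smul_eq_mul, mul_comm]
    omega
  refine ⟨(↑((Finset.univ.filter fun x : G.E => ¬ G.degree (G.ini x) = 2).image
      (fun x => {z | z ∈ G.walk x ∨ G.bar z ∈ G.walk x})) : Set (Set G.E)),
    Finset.finite_toSet _, ?_, ?_, ?_⟩
  · have hcardeq : Nat.card (↑((Finset.univ.filter fun x : G.E => ¬ G.degree (G.ini x) = 2).image
        (fun x => {z | z ∈ G.walk x ∨ G.bar z ∈ G.walk x})) : Set (Set G.E))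
        = ((Finset.univ.filter fun x : G.E => ¬ G.degree (G.ini x) = 2).image
        (fun x => {z | z ∈ G.walk x ∨ G.bar z ∈ G.walk x})).card := by
      rw [Nat.card_coe_set_eq, Set.ncard_coe_finset]
    have hfiber : ∀ b ∈ (Finset.univ.filter fun x : G.E => ¬ G.degree (G.ini x) = 2).image
        (fun x => {z | z ∈ G.walk x ∨ G.bar z ∈ G.walk x}),
        2 ≤ ((Finset.univ.filter fun x : G.E => ¬ G.degree (G.ini x) = 2).filter
          (fun a => {z | z ∈ G.walk a ∨ G.bar z ∈ G.walk a} = b)).card := by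
      intro b hbm
      obtain ⟨x, hxS, hxA⟩ := Finset.mem_image.1 hbm
      have hxdeg : G.degree (G.ini x) ≠ 2 := by
        simpa using (Finset.mem_filter.1 hxS).2
      have h1 : x ∈ (Finset.univ.filter fun x : G.E => ¬ G.degree (G.ini x) = 2).filter
          (fun a => {z | z ∈ G.walk a ∨ G.bar z ∈ G.walk a} = b) :=
        Finset.mem_filter.2 ⟨hxS, hxA⟩
      have h2 : G.wrev x ∈ (Finset.univ.filter fun x : G.E => ¬ G.degree (G.ini x) = 2).filter
          (fun a => {z | z ∈ G.walk a ∨ G.bar z ∈ G.walk a} = b) := by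
        refine Finset.mem_filter.2 ⟨?_, ?_⟩
        · simp only [Finset.mem_filter, Finset.mem_univ, true_and]
          exact G.wrev_deg x hxdeg
        · rw [G.arcSet_wrev x hxdeg]
          exact hxA
      exact Finset.one_lt_card.2 ⟨x, h1, G.wrev x, h2, (G.wrev_ne x hxdeg).symm⟩
    have hmaps : ∀ a ∈ (Finset.univ.filter fun x : G.E => ¬ G.degree (G.ini x) = 2),
        (fun x => {z | z ∈ G.walk x ∨ G.bar z ∈ G.walk x}) a ∈
        (Finset.univ.filter fun x : G.E => ¬ G.degree (G.ini x) = 2).image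
        (fun x => {z | z ∈ G.walk x ∨ G.bar z ∈ G.walk x}) :=
      fun a ha => Finset.mem_image_of_mem _ ha
    have hcount := Finset.mul_card_image_le_card_of_maps_to hmaps 2 hfiber
    have hSFb := G.SF_card_bound hconn hd1 hm hb hk
    rw [hcardeq]
    omega
  · intro A hA
    obtain ⟨x, hxS, rfl⟩ := Finset.mem_image.1 (Finset.mem_coe.1 hA)
    have hxdeg : G.degree (G.ini x) ≠ 2 := by
      simpa using (Finset.mem_filter.1 hxS).2
    exact G.walk_isMaximalArc x hxdeg
  · ext z
    simp only [Set.mem_sUnion, Set.mem_univ, iff_true]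
    obtain ⟨x, hx, hz⟩ := hcover z
    refine ⟨{w | w ∈ G.walk x ∨ G.bar w ∈ G.walk x}, ?_, hz⟩
    apply Finset.mem_coe.2
    apply Finset.mem_image_of_mem
    simp only [Finset.mem_filter, Finset.mem_univ, true_and]
    exact hx



end MGraph

/-- a finite connected core graph of Betti number `m ≥ 2` is the
union of at most `3m - 3` maximal arcs; a finite connected core pair
`(Δ, v₀)` of Betti number `m ≥ 2` is the union of at most `3m - 1` maximal
arcs. -/
theorem core_graph_union_of_maximal_arcs :
    (∀ (Δ : MGraph), Finite Δ.V → Finite Δ.E → Δ.Connected →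
      (∀ v : Δ.V, 2 ≤ Δ.degree v) → ∀ m : ℕ, 2 ≤ m → Δ.betti = (m : ℤ) →
      ∃ arcs : Set (Set Δ.E), arcs.Finite ∧ Nat.card arcs ≤ 3 * m - 3 ∧
        (∀ A ∈ arcs, IsMaximalArc Δ A) ∧ ⋃₀ arcs = (Set.univ : Set Δ.E)) ∧
    (∀ (Δ : MGraph) (v₀ : Δ.V), Finite Δ.V → Finite Δ.E → Δ.Connected →
      (∀ v : Δ.V, v ≠ v₀ → 2 ≤ Δ.degree v) → 1 ≤ Δ.degree v₀ →
      ∀ m : ℕ, 2 ≤ m → Δ.betti = (m : ℤ) →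
      ∃ arcs : Set (Set Δ.E), arcs.Finite ∧ Nat.card arcs ≤ 3 * m - 1 ∧
        (∀ A ∈ arcs, IsMaximalArc Δ A) ∧ ⋃₀ arcs = (Set.univ : Set Δ.E)) := by
  constructor
  · intro Δ h1 h2 h3 hdeg m hm hb
    have hk : Nat.card {v : Δ.V // Δ.degree v = 1} ≤ 0 := by
      have he : IsEmpty {v : Δ.V // Δ.degree v = 1} :=
        ⟨fun ⟨v, hv⟩ => by have := hdeg v; omega⟩
      exact le_of_eq Nat.card_of_isEmpty
    obtain ⟨arcs, hf, hc, hmax, hu⟩ := MGraph.master Δ h1 h2 h3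
      (fun v => le_trans one_le_two (hdeg v)) 0 hk m hm hb
    exact ⟨arcs, hf, le_trans hc (by omega), hmax, hu⟩
  · intro Δ v₀ h1 h2 h3 hdeg hdeg0 m hm hb
    have hss : Subsingleton {v : Δ.V // Δ.degree v = 1} := by
      constructor
      rintro ⟨a, ha⟩ ⟨b, hb'⟩
      have ha0 : a = v₀ := by
        by_contra h
        have := hdeg a h
        omega
      have hb0 : b = v₀ := by
        by_contra h
        have := hdeg b h
        omega
      exact Subtype.ext (ha0.trans hb0.symm)
    have hk : Nat.card {v : Δ.V // Δ.degree v = 1} ≤ 1 := by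
      rcases isEmpty_or_nonempty {v : Δ.V // Δ.degree v = 1} with he | hne
      · exact le_trans (le_of_eq Nat.card_of_isEmpty) zero_le_one
      · exact le_of_eq (Nat.card_eq_one_iff_unique.2 ⟨hss, hne⟩)
    have hd1 : ∀ v, 1 ≤ Δ.degree v := by
      intro v
      by_cases h : v = v₀
      · subst h; exact hdeg0
      · exact le_trans one_le_two (hdeg v h)
    obtain ⟨arcs, hf, hc, hmax, hu⟩ := MGraph.master Δ h1 h2 h3 hd1 1 hk m hm hb
    exact ⟨arcs, hf, le_trans hc (by omega), hmax, hu⟩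
end

section
/- Let w ∈ F(A) with c_1(w) = k and let w = w_1⋯w_k = w_1'⋯w_k' be two admissible decompositions of w (as reduced products of k U-words). Then for every i ∈ {1,…,k} the subwords w_i and w_i' of w overlap nontrivially. -/
/-- A letter of `F(A)` with `A = Fin n`: a generator together with a sign. -/
abbrev Letter (n : ℕ) := Fin n × Bool

/-- A word over `A^{±1}`. -/
abbrev Wrd (n : ℕ) := List (Letter n)

/-- The inverse of a word. -/
def wInv {n : ℕ} (w : Wrd n) : Wrd n := (w.reverse).map (fun x => (x.1, !x.2))

/-- A freely reduced word: no adjacent cancelling pair. -/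
def IsReducedW {n : ℕ} (w : Wrd n) : Prop :=
  List.Chain' (fun x y => y ≠ (x.1, !x.2)) w

/-- A `U`-word: a subword of a power of some relator `U_i^{±1}`. -/
def IsUword {n m : ℕ} (U : Fin m → Wrd n) (w : Wrd n) : Prop :=
  ∃ (i : Fin m) (k : ℕ),
    w <:+: (List.replicate k (U i)).flatten ∨ w <:+: (List.replicate k (wInv (U i))).flatten

/-- A decomposition of `w` as a reduced product of nonempty `U`-words, recorded
together with the positions of the factors. -/
def IsUDecomp {n m : ℕ} (U : Fin m → Wrd n) (w : Wrd n) (d : List (Wrd n)) : Prop :=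
  d.flatten = w ∧ ∀ u ∈ d, u ≠ [] ∧ IsUword U u

/-- `c₁(w)`: the minimal number of `U`-words needed to write `w` as a reduced
product of `U`-words. -/
noncomputable def c1 {n m : ℕ} (U : Fin m → Wrd n) (w : Wrd n) : ℕ :=
  sInf {k : ℕ | ∃ d : List (Wrd n), IsUDecomp U w d ∧ d.length = k}

/-- The starting position in `w` of the `i`-th factor of a decomposition. -/
def factorStart {n : ℕ} (d : List (Wrd n)) (i : ℕ) : ℕ :=
  ((d.take i).map List.length).sum


def dropD {n : ℕ} (j : ℕ) : List (Wrd n) → List (Wrd n)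
  | [] => []
  | u :: L => if u.length ≤ j then dropD (j - u.length) L else (u.drop j) :: L

lemma dropD_flatten {n : ℕ} (j : ℕ) (L : List (Wrd n)) :
    (dropD j L).flatten = L.flatten.drop j := by
  induction L generalizing j with
  | nil => simp [dropD]
  | cons u L ih =>
    by_cases h : u.length ≤ j
    · simp [dropD, h, ih, List.drop_append, List.drop_eq_nil_of_le h]
    · simp [dropD, h, List.drop_append,
        Nat.sub_eq_zero_of_le (le_of_not_ge h)]

lemma dropD_length {n : ℕ} (j : ℕ) (L : List (Wrd n)) :
    (dropD j L).length ≤ L.length := by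
  induction L generalizing j with
  | nil => simp [dropD]
  | cons u L ih =>
    by_cases h : u.length ≤ j
    · simp [dropD, h]; exact le_trans (ih _) (Nat.le_succ _)
    · simp [dropD, h]

lemma dropD_mem {n : ℕ} (j : ℕ) (L : List (Wrd n)) (hL : ∀ u ∈ L, u ≠ [])
    (v : Wrd n) (hv : v ∈ dropD j L) : v ≠ [] ∧ ∃ u ∈ L, v <:+ u := by
  induction L generalizing j with
  | nil => simp [dropD] at hv
  | cons u L ih =>
    by_cases h : u.length ≤ j
    · simp only [dropD, if_pos h] at hv
      obtain ⟨h1, u', hu', h2⟩ := ih _ (fun x hx => hL x (List.mem_cons_of_mem _ hx)) hv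
      exact ⟨h1, u', List.mem_cons_of_mem _ hu', h2⟩
    · simp only [dropD, if_neg h] at hv
      rcases List.mem_cons.mp hv with hv | hv
      · subst hv
        refine ⟨?_, u, List.mem_cons_self, List.drop_suffix _ _⟩
        simp only [ne_eq, List.drop_eq_nil_iff]
        omega
      · exact ⟨hL v (List.mem_cons_of_mem _ hv), v, List.mem_cons_of_mem _ hv,
          List.suffix_refl v⟩

lemma IsUword_of_suffix {n m : ℕ} (U : Fin m → Wrd n) {u v : Wrd n}
    (h : v <:+ u) (hu : IsUword U u) : IsUword U v := by
  obtain ⟨i, k, hu⟩ := hu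
  refine ⟨i, k, ?_⟩
  rcases hu with hu | hu
  · exact Or.inl (h.isInfix.trans hu)
  · exact Or.inr (h.isInfix.trans hu)

lemma factorStart_eq {n : ℕ} (d : List (Wrd n)) (i : ℕ) :
    factorStart d i = ((d.map List.length).take i).sum := by
  simp [factorStart, List.map_take]

lemma flatten_take {n : ℕ} (d : List (Wrd n)) (i : ℕ) :
    (d.take i).flatten = d.flatten.take (factorStart d i) := by
  rw [factorStart_eq, List.take_sum_flatten]

lemma flatten_drop {n : ℕ} (d : List (Wrd n)) (i : ℕ) :
    (d.drop i).flatten = d.flatten.drop (factorStart d i) := by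
  rw [factorStart_eq, List.drop_sum_flatten]

lemma factorStart_succ {n : ℕ} (d : List (Wrd n)) (i : ℕ) (h : i < d.length) :
    factorStart d (i + 1) = factorStart d i + (d[i]).length := by
  rw [factorStart_eq, factorStart_eq,
    List.sum_take_succ _ i (by simpa using h), List.getElem_map]

lemma key_disjoint {n m : ℕ} (U : Fin m → Wrd n) (w : Wrd n) (k : ℕ)
    (hk : c1 U w = k) (d d' : List (Wrd n))
    (hd : IsUDecomp U w d) (hdl : d.length = k)
    (hd' : IsUDecomp U w d') (hdl' : d'.length = k)
    (i : ℕ) (hik : i < k)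
    (hdisj : factorStart d i + (d[i]'(hdl ▸ hik)).length ≤ factorStart d' i) :
    False := by
  have hik' : i < d.length := hdl ▸ hik
  set S := factorStart d' i with hS
  set P := factorStart d (i + 1) with hP
  have hPS : P ≤ S := by
    rw [hP, factorStart_succ d i hik']; exact hdisj
  set d'' : List (Wrd n) := d'.take i ++ dropD (S - P) (d.drop (i + 1)) with hd''
  have hflat : d''.flatten = w := by
    rw [hd'', List.flatten_append, dropD_flatten, flatten_take, flatten_drop,
      hd.1, hd'.1, List.drop_drop, ← hS, ← hP, Nat.add_sub_cancel' hPS,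
      List.take_append_drop]
  have hmem : ∀ u ∈ d'', u ≠ [] ∧ IsUword U u := by
    intro u hu
    rcases List.mem_append.mp hu with hu | hu
    · exact hd'.2 u (List.mem_of_mem_take hu)
    · obtain ⟨h1, u', hu', h2⟩ := dropD_mem (S - P) (d.drop (i + 1))
        (fun x hx => (hd.2 x (List.mem_of_mem_drop hx)).1) u hu
      exact ⟨h1, IsUword_of_suffix U h2 (hd.2 u' (List.mem_of_mem_drop hu')).2⟩
  have hlen : d''.length ≤ k - 1 := by
    rw [hd'', List.length_append]
    have h1 : (d'.take i).length ≤ i := by simp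
    have h2 : (dropD (S - P) (d.drop (i + 1))).length ≤ k - (i + 1) := by
      refine le_trans (dropD_length _ _) ?_
      simp [hdl]
    omega
  have hmem' : d''.length ∈ {k : ℕ | ∃ d : List (Wrd n), IsUDecomp U w d ∧ d.length = k} :=
    ⟨d'', ⟨hflat, hmem⟩, rfl⟩
  have : c1 U w ≤ d''.length := Nat.sInf_le hmem'
  omega

/-- in any two admissible decompositions
`w = w₁⋯w_k = w₁'⋯w_k'` (with `k = c₁(w)`), for every `i` the factors `w_i`
and `w_i'` overlap nontrivially as subwords of `w` (their position intervals
intersect). -/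
theorem admissible_decompositions_overlap (n m : ℕ) (U : Fin m → Wrd n)
    (w : Wrd n) (hred : IsReducedW w) (k : ℕ) (hk : c1 U w = k)
    (d d' : List (Wrd n))
    (hd : IsUDecomp U w d) (hdl : d.length = k)
    (hd' : IsUDecomp U w d') (hdl' : d'.length = k)
    (i : Fin k) :
    factorStart d i < factorStart d' i + (d'.get (Fin.cast hdl'.symm i)).length ∧
    factorStart d' i < factorStart d i + (d.get (Fin.cast hdl.symm i)).length := by
  constructor
  · by_contra h
    push_neg at h
    exact key_disjoint U w k hk d' d hd' hdl' hd hdl i.val i.isLt h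
  · by_contra h
    push_neg at h
    exact key_disjoint U w k hk d d' hd hdl hd' hdl' i.val i.isLt h
end
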